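/- arXiv:2312.03564 — 4 statements merged into one kernel-verified Lean document; each statement's English description precedes it below -/
import Mathlib

section
/- For every n ≥ 1, the number of n×n magog matrices whose first-column 1 lies in the first or second row (i.e. with a_{11} = 1 or a_{21} = 1) equals the n-th Catalan number (1/(n+1))·C(2n,n). -/
/-- An `n × n` square sign matrix: a `{0, 1, -1}`-matrix whose rows and columns
all sum to 1, whose partial column sums lie in `{0, 1}`, and whose partial row
sums are nonnegative. -/
def IsSquareSign (n : ℕ) (A : Fin n → Fin n → ℤ) : Prop :=
  (∀ i j, A i j = -1 ∨ A i j = 0 ∨ A i j = 1) ∧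
  (∀ j, ∑ i, A i j = 1) ∧
  (∀ i, ∑ j, A i j = 1) ∧
  (∀ i j : Fin n, 0 ≤ ∑ i' ∈ Finset.Iic i, A i' j ∧ ∑ i' ∈ Finset.Iic i, A i' j ≤ 1) ∧
  (∀ i j : Fin n, 0 ≤ ∑ j' ∈ Finset.Iic j, A i j')

/-- An `n × n` magog matrix: a square sign matrix satisfying the
`(i,j)`-special inequalities (stated here with 0-based indices `i, j`,
corresponding to the paper's 1-based `i+1, j+1` with `1 ≤ i, j ≤ n-2`). -/
def IsMagog (n : ℕ) (A : Fin n → Fin n → ℤ) : Prop :=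
  IsSquareSign n A ∧
  ∀ (i j : ℕ) (hi : i + 2 < n) (hj : j + 2 < n),
    0 ≤ (∑ j' ∈ Finset.Iic (⟨j, by omega⟩ : Fin n), A ⟨i + 1, by omega⟩ j')
      + (∑ i' ∈ Finset.Iic (⟨i + 1, by omega⟩ : Fin n), A i' ⟨j + 1, by omega⟩)
      - (∑ i' ∈ Finset.Iic (⟨i, by omega⟩ : Fin n), A i' ⟨j, by omega⟩)


/-- Ballot-type functions: `f` is weakly increasing on `[0, n)`, `f i ≤ i` there,
and `f` vanishes from `n` on. There are `catalan n` of these. -/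
def BallotFun (n : ℕ) (f : ℕ → ℕ) : Prop :=
  (∀ i j, i ≤ j → j < n → f i ≤ f j) ∧ (∀ i, i < n → f i ≤ i) ∧ (∀ i, n ≤ i → f i = 0)

abbrev Ballot (n : ℕ) := {f : ℕ → ℕ // BallotFun n f}

instance ballotFinite (n : ℕ) : Finite (Ballot n) := by
  have : Function.Injective (fun f : Ballot n => fun i : Fin n =>
      (⟨f.1 i.1, lt_of_le_of_lt (f.2.2.1 i.1 i.2) i.2⟩ : Fin n)) := by
    intro f g h
    ext k
    rcases lt_or_ge k n with hk | hk
    · have := congrFun h ⟨k, hk⟩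
      simpa using congrArg Fin.val this
    · rw [f.2.2.2 k hk, g.2.2.2 k hk]
  exact Finite.of_injective _ this

instance : Unique (Ballot 0) where
  default := ⟨fun _ => 0, by refine ⟨fun i j _ _ => le_rfl, by omega, fun _ _ => rfl⟩⟩
  uniq f := by
    apply Subtype.ext; funext k; exact f.2.2.2 k (Nat.zero_le _)

section Decomp

variable (n : ℕ)

/-- Glue two ballot functions into one (inverse of first-return decomposition). -/
def ballotGlue (s : ℕ) (g h : ℕ → ℕ) : ℕ → ℕ := fun k =>
  if k = 0 then 0 else if k ≤ s then g (k-1) else if k ≤ n then s + 1 + h (k - s - 1) else 0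

lemma ballotGlue_bound {s : ℕ} (hs : s ≤ n) {g h : ℕ → ℕ}
    (hg : BallotFun s g) (hh : BallotFun (n - s) h) :
    ∀ k, k < n + 1 → ballotGlue n s g h k ≤ k := by
  intro k hk
  unfold ballotGlue
  split_ifs with h0 h1 h2
  · omega
  · have := hg.2.1 (k-1) (by omega); omega
  · have := hh.2.1 (k - s - 1) (by omega); omega
  · omega

lemma ballotGlue_mem {s : ℕ} (hs : s ≤ n) {g h : ℕ → ℕ}
    (hg : BallotFun s g) (hh : BallotFun (n - s) h) :
    BallotFun (n + 1) (ballotGlue n s g h) := by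
  refine ⟨?_, ballotGlue_bound n hs hg hh, ?_⟩
  · intro i j hij hj
    have hbi := ballotGlue_bound n hs hg hh i (by omega)
    rcases Nat.eq_zero_or_pos i with rfl | hi
    · unfold ballotGlue; rw [if_pos rfl]; omega
    rcases le_or_gt j s with hjs | hjs
    · unfold ballotGlue
      rw [if_neg (by omega), if_pos (by omega), if_neg (by omega), if_pos hjs]
      exact hg.1 (i-1) (j-1) (by omega) (by omega)
    rcases le_or_gt i s with his | his
    · unfold ballotGlue at hbi ⊢
      rw [if_neg (by omega), if_pos his] at hbi ⊢
      rw [if_neg (by omega), if_neg (by omega), if_pos (by omega)]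
      omega
    · unfold ballotGlue
      rw [if_neg (by omega), if_neg (by omega), if_pos (by omega),
        if_neg (by omega), if_neg (by omega), if_pos (by omega)]
      have := hh.1 (i - s - 1) (j - s - 1) (by omega) (by omega)
      omega
  · intro k hk; unfold ballotGlue; split_ifs <;> omega

variable {n} in
private lemma exS (f : ℕ → ℕ) : ∃ k, k = n ∨ (k < n ∧ f (k+1) = k+1) := ⟨n, Or.inl rfl⟩

/-- The first-return index of a ballot function. -/
def ballotS (f : ℕ → ℕ) : ℕ := Nat.find (exS (n := n) f)

lemma ballotS_le (f : ℕ → ℕ) : ballotS n f ≤ n := Nat.find_min' _ (Or.inl rfl)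

lemma ballotS_spec (f : ℕ → ℕ) :
    ballotS n f = n ∨ (ballotS n f < n ∧ f (ballotS n f + 1) = ballotS n f + 1) :=
  Nat.find_spec (exS f)

lemma ballotS_min (f : ℕ → ℕ) {k : ℕ} (hk : k < ballotS n f) : f (k+1) ≠ k+1 := by
  have h := Nat.find_min (exS (n := n) f) hk
  have := ballotS_le n f
  push_neg at h
  exact h.2 (by omega)

/-- Left part of the first-return decomposition. -/
def ballotG (f : ℕ → ℕ) : ℕ → ℕ := fun j => if j < ballotS n f then f (j+1) else 0

/-- Right part of the first-return decomposition. -/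
def ballotH (f : ℕ → ℕ) : ℕ → ℕ :=
  fun j => if j < n - ballotS n f then f (ballotS n f + 1 + j) - (ballotS n f + 1) else 0

lemma ballotG_mem {f : ℕ → ℕ} (hf : BallotFun (n+1) f) :
    BallotFun (ballotS n f) (ballotG n f) := by
  have hle := ballotS_le n f
  refine ⟨?_, ?_, ?_⟩
  · intro i j hij hj
    unfold ballotG
    rw [if_pos (by omega), if_pos hj]
    exact hf.1 (i+1) (j+1) (by omega) (by omega)
  · intro i hi
    unfold ballotG
    rw [if_pos hi]
    have h1 := hf.2.1 (i+1) (by omega)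
    have h2 := ballotS_min n f hi
    omega
  · intro i hi; unfold ballotG; rw [if_neg (by omega)]

lemma ballotH_mem {f : ℕ → ℕ} (hf : BallotFun (n+1) f) :
    BallotFun (n - ballotS n f) (ballotH n f) := by
  have hle := ballotS_le n f
  refine ⟨?_, ?_, ?_⟩
  · intro i j hij hj
    unfold ballotH
    rw [if_pos (by omega), if_pos hj]
    exact Nat.sub_le_sub_right (hf.1 _ _ (by omega) (by omega)) _
  · intro i hi
    unfold ballotH
    rw [if_pos hi]
    have h1 := hf.2.1 (ballotS n f + 1 + i) (by omega)
    omega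
  · intro i hi; unfold ballotH; rw [if_neg (by omega)]

lemma ballot_left_inv {f : ℕ → ℕ} (hf : BallotFun (n+1) f) :
    ballotGlue n (ballotS n f) (ballotG n f) (ballotH n f) = f := by
  have hle := ballotS_le n f
  funext k
  unfold ballotGlue
  split_ifs with h0 h1 h2
  · subst h0
    have := hf.2.1 0 (by omega); omega
  · unfold ballotG; rw [if_pos (by omega)]
    congr 1; omega
  · unfold ballotH
    rw [if_pos (by omega)]
    have hs : ballotS n f < n := by omega
    have hret : f (ballotS n f + 1) = ballotS n f + 1 := by
      rcases ballotS_spec n f with h | h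
      · omega
      · exact h.2
    have hmono : f (ballotS n f + 1) ≤ f k := hf.1 _ _ (by omega) (by omega)
    have : ballotS n f + 1 + (k - ballotS n f - 1) = k := by omega
    rw [this]
    omega
  · exact (hf.2.2 k (by omega)).symm

lemma ballot_right_inv {s : ℕ} (hs : s ≤ n) {g h : ℕ → ℕ}
    (hg : BallotFun s g) (hh : BallotFun (n - s) h) :
    ballotS n (ballotGlue n s g h) = s ∧ ballotG n (ballotGlue n s g h) = g ∧
      ballotH n (ballotGlue n s g h) = h := by
  have hS : ballotS n (ballotGlue n s g h) = s := by
    apply le_antisymm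
    · apply Nat.find_min'
      rcases Nat.eq_or_lt_of_le hs with rfl | hsn
      · exact Or.inl rfl
      · refine Or.inr ⟨hsn, ?_⟩
        unfold ballotGlue
        rw [if_neg (by omega), if_neg (by omega), if_pos (by omega)]
        have e : s + 1 - s - 1 = 0 := by omega
        rw [e]
        have := hh.2.1 0 (by omega)
        omega
    · rw [ballotS, Nat.le_find_iff]
      intro m hm
      push_neg
      refine ⟨by omega, fun _ => ?_⟩
      unfold ballotGlue
      rw [if_neg (by omega), if_pos (by omega)]
      have := hg.2.1 m hm
      simp only [Nat.add_sub_cancel]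
      omega
  refine ⟨hS, ?_, ?_⟩
  · funext j
    unfold ballotG
    rw [hS]
    split_ifs with hj
    · unfold ballotGlue
      rw [if_neg (by omega), if_pos (by omega)]
      simp
    · exact (hg.2.2 j (by omega)).symm
  · funext j
    unfold ballotH
    rw [hS]
    split_ifs with hj
    · unfold ballotGlue
      rw [if_neg (by omega), if_neg (by omega), if_pos (by omega)]
      have e : s + 1 + j - s - 1 = j := by omega
      rw [e]
      omega
    · exact (hh.2.2 j (by omega)).symm

/-- The gluing map as a map of subtypes. -/
def ballotGlueMap (x : Σ s : Fin (n + 1), Ballot s × Ballot (n - s)) : Ballot (n + 1) :=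
  ⟨ballotGlue n x.1.1 x.2.1.1 x.2.2.1,
    ballotGlue_mem n (Nat.lt_succ_iff.mp x.1.2) x.2.1.2 x.2.2.2⟩

lemma ballotGlueMap_bijective : Function.Bijective (ballotGlueMap n) := by
  constructor
  · rintro ⟨⟨s, hs⟩, ⟨g, hg⟩, ⟨h, hh⟩⟩ ⟨⟨s', hs'⟩, ⟨g', hg'⟩, ⟨h', hh'⟩⟩ heq
    have hv : ballotGlue n s g h = ballotGlue n s' g' h' := congrArg Subtype.val heq
    obtain ⟨r1, r2, r3⟩ := ballot_right_inv n (by omega) hg hh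
    obtain ⟨r1', r2', r3'⟩ := ballot_right_inv n (by omega) hg' hh'
    rw [hv] at r1 r2 r3
    have hss : s = s' := r1.symm.trans r1'
    subst hss
    have hgg : g = g' := by rw [← r2, r2']
    have hhh : h = h' := by rw [← r3, r3']
    subst hgg; subst hhh
    rfl
  · intro f
    refine ⟨⟨⟨ballotS n f.1, by have := ballotS_le n f.1; omega⟩,
      ⟨ballotG n f.1, ballotG_mem n f.2⟩, ⟨ballotH n f.1, ballotH_mem n f.2⟩⟩, ?_⟩
    exact Subtype.ext (ballot_left_inv n f.2)

end Decomp

theorem ballot_card : ∀ n, Nat.card (Ballot n) = catalan n := by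
  intro n
  induction n using Nat.strong_induction_on with
  | _ n ih =>
    match n with
    | 0 => simp [Nat.card_unique, catalan_zero]
    | (m+1) =>
      rw [← Nat.card_eq_of_bijective _ (ballotGlueMap_bijective m)]
      letI : ∀ k, Fintype (Ballot k) := fun k => Fintype.ofFinite _
      rw [Nat.card_eq_fintype_card, Fintype.card_sigma]
      rw [catalan_succ]
      congr 1
      funext s
      rw [Fintype.card_prod, ← Nat.card_eq_fintype_card, ← Nat.card_eq_fintype_card,
        ih s (by omega), ih (m - s) (by omega)]

/-! ### Sum conversion between `Fin` sums and `range` sums -/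

lemma sum_Iic_eq {n : ℕ} (f : Fin n → ℤ) (F : ℕ → ℤ)
    (hF : ∀ (k : ℕ) (h : k < n), F k = f ⟨k, h⟩) (i : Fin n) :
    ∑ x ∈ Finset.Iic i, f x = ∑ k ∈ Finset.range (i.1 + 1), F k := by
  have h1 : ∑ x ∈ Finset.Iic i, f x
      = ∑ x : Fin n, (fun k : ℕ => if k < i.1 + 1 then F k else 0) x.1 := by
    rw [← Finset.sum_filter_add_sum_filter_not Finset.univ (fun x : Fin n => x ≤ i)
      (fun x => (fun k : ℕ => if k < i.1 + 1 then F k else 0) x.1)]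
    have e1 : Finset.univ.filter (fun x : Fin n => x ≤ i) = Finset.Iic i := by
      ext x; simp [Finset.mem_Iic]
    rw [e1]
    have e2 : ∑ x ∈ Finset.univ.filter (fun x : Fin n => ¬x ≤ i),
        (fun k : ℕ => if k < i.1 + 1 then F k else 0) x.1 = 0 := by
      apply Finset.sum_eq_zero
      intro x hx
      simp only [Finset.mem_filter, Fin.le_def, not_le] at hx
      simp only [if_neg (by omega : ¬ x.1 < i.1 + 1)]
    rw [e2, add_zero]
    apply Finset.sum_congr rfl
    intro x hx
    rw [Finset.mem_Iic, Fin.le_def] at hx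
    simp only [if_pos (by omega : x.1 < i.1 + 1), hF x.1 x.2]
  rw [h1]
  rw [Fin.sum_univ_eq_sum_range (fun k => if k < i.1 + 1 then F k else 0) n]
  rw [← Finset.sum_subset (Finset.range_subset_range.mpr (by omega : i.1 + 1 ≤ n))]
  · apply Finset.sum_congr rfl
    intro k hk
    rw [Finset.mem_range] at hk
    rw [if_pos hk]
  · intro k _ hk
    rw [Finset.mem_range] at hk
    rw [if_neg hk]

lemma sum_univ_eq {n : ℕ} (f : Fin n → ℤ) (F : ℕ → ℤ)
    (hF : ∀ (k : ℕ) (h : k < n), F k = f ⟨k, h⟩) :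
    ∑ x : Fin n, f x = ∑ k ∈ Finset.range n, F k := by
  rw [← Fin.sum_univ_eq_sum_range F n]
  exact Finset.sum_congr rfl fun x _ => (hF x.1 x.2).symm

/-! ### The staircase matrices -/

/-- Row `k` of the partial-column-sum matrix determined by `cn` (`prow cn 0 = 0`). -/
def prow (cn : ℕ → ℕ) (k j : ℕ) : ℤ :=
  if 0 < k ∧ (j + 1 < k ∨ j = cn (k - 1)) then 1 else 0

lemma prow_zero (cn : ℕ → ℕ) (j : ℕ) : prow cn 0 j = 0 := by simp [prow]

lemma prow_succ (cn : ℕ → ℕ) (k j : ℕ) :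
    prow cn (k+1) j = if j < k ∨ j = cn k then 1 else 0 := by
  unfold prow
  rw [Nat.add_sub_cancel]
  exact if_congr (by omega) rfl rfl

/-- Partial row sums of `prow`. -/
def qrow (cn : ℕ → ℕ) (k j : ℕ) : ℤ := ∑ t ∈ Finset.range j, prow cn k t

lemma prow_mem (cn : ℕ → ℕ) (k j : ℕ) : prow cn k j = 0 ∨ prow cn k j = 1 := by
  unfold prow; split_ifs <;> simp

lemma qrow_zero (cn : ℕ → ℕ) (j : ℕ) : qrow cn 0 j = 0 := by
  apply Finset.sum_eq_zero; intros; simp [prow]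

lemma qrow_succ_eq (cn : ℕ → ℕ) {k : ℕ} (hk : k ≤ cn k) (j : ℕ) :
    qrow cn (k+1) j = (min j k : ℕ) + (if cn k < j then 1 else 0) := by
  induction j with
  | zero => simp [qrow]
  | succ j ih =>
    rw [qrow, Finset.sum_range_succ, ← qrow, ih, prow_succ]
    split_ifs <;> push_cast <;> omega

/-- The magog matrix associated to a staircase sequence. -/
def MagogMat (n : ℕ) (cn : ℕ → ℕ) : Fin n → Fin n → ℤ :=
  fun i j => prow cn (i.1 + 1) j.1 - prow cn i.1 j.1

/-- Goodness conditions on the staircase sequence. -/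
def GoodC (n : ℕ) (cn : ℕ → ℕ) : Prop :=
  (∀ k, k ≤ cn k) ∧ (∀ k, k < n → cn k < n) ∧ (∀ k, k + 1 < n → cn (k+1) ≤ cn k + 1)

section Forward

variable {n : ℕ} {cn : ℕ → ℕ} (hc : GoodC n cn)
include hc

lemma colsum_eq (j : Fin n) (k : ℕ) (hk : k < n) :
    ∑ t ∈ Finset.range (k+1), (fun t => prow cn (t+1) j.1 - prow cn t j.1) t
      = prow cn (k+1) j.1 :=
  (Finset.sum_range_sub (fun t => prow cn t j.1) (k+1)).trans (by rw [prow_zero, sub_zero])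

lemma pcol_eq (i j : Fin n) :
    ∑ i' ∈ Finset.Iic i, MagogMat n cn i' j = prow cn (i.1 + 1) j.1 := by
  rw [sum_Iic_eq (fun i' => MagogMat n cn i' j)
    (fun t => prow cn (t+1) j.1 - prow cn t j.1) (fun k h => rfl) i]
  exact (Finset.sum_range_sub (fun t => prow cn t j.1) (i.1+1)).trans
    (by rw [prow_zero, sub_zero])

lemma prowsum_eq (i j : Fin n) :
    ∑ j' ∈ Finset.Iic j, MagogMat n cn i j'
      = qrow cn (i.1 + 1) (j.1 + 1) - qrow cn i.1 (j.1 + 1) := by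
  rw [sum_Iic_eq (fun j' => MagogMat n cn i j')
    (fun t => prow cn (i.1+1) t - prow cn i.1 t) (fun k h => rfl) j]
  rw [Finset.sum_sub_distrib]
  rfl

omit hc in
lemma prow_top (h1 : ∀ k, k ≤ cn k) (h2 : ∀ k, k < n → cn k < n)
    (j : ℕ) (hj : j < n) : prow cn n j = 1 := by
  rcases n with _ | m
  · omega
  · rw [prow_succ]
    have := h1 m
    have := h2 m (by omega)
    split_ifs <;> omega

lemma magogMat_isMagog (hn : 0 < n) :
    IsMagog n (MagogMat n cn) ∧
      (MagogMat n cn ⟨0, hn⟩ ⟨0, hn⟩ = 1 ∨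
        ∃ h : 1 < n, MagogMat n cn ⟨1, h⟩ ⟨0, hn⟩ = 1) := by
  obtain ⟨hlow, hhi, hstep⟩ := hc
  have hc' : GoodC n cn := ⟨hlow, hhi, hstep⟩
  refine ⟨⟨⟨?_, ?_, ?_, ?_, ?_⟩, ?_⟩, ?_⟩
  · -- entries
    intro i j
    simp only [MagogMat]
    rcases prow_mem cn (i.1+1) j.1 with h | h <;>
      rcases prow_mem cn i.1 j.1 with h' | h' <;> omega
  · -- column sums
    intro j
    rw [sum_univ_eq (fun i => MagogMat n cn i j)
      (fun t => prow cn (t+1) j.1 - prow cn t j.1) (fun k h => rfl)]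
    rw [Finset.sum_range_sub (fun t => prow cn t j.1) n, prow_zero, sub_zero]
    exact prow_top hlow hhi j.1 j.2
  · -- row sums
    intro i
    rw [sum_univ_eq (fun j => MagogMat n cn i j)
      (fun t => prow cn (i.1+1) t - prow cn i.1 t) (fun k h => rfl)]
    rw [Finset.sum_sub_distrib]
    obtain ⟨k, hk⟩ := i
    show qrow cn (k+1) n - qrow cn k n = 1
    rcases k with _ | m
    · rw [qrow_zero, qrow_succ_eq cn (hlow 0)]
      have := hhi 0 (by omega)
      split_ifs <;> push_cast <;> omega
    · rw [qrow_succ_eq cn (hlow (m+1)), qrow_succ_eq cn (hlow m)]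
      have := hhi (m+1) (by omega)
      have := hhi m (by omega)
      split_ifs <;> push_cast <;> omega
  · -- partial column sums
    intro i j
    rw [pcol_eq hc']
    rcases prow_mem cn (i.1+1) j.1 with h | h <;> constructor <;> omega
  · -- partial row sums
    intro i j
    rw [prowsum_eq hc']
    obtain ⟨k, hk⟩ := i
    show (0:ℤ) ≤ qrow cn (k+1) (j.1+1) - qrow cn k (j.1+1)
    rcases k with _ | m
    · rw [qrow_zero, qrow_succ_eq cn (hlow 0)]
      split_ifs <;> push_cast <;> omega
    · rw [qrow_succ_eq cn (hlow (m+1)), qrow_succ_eq cn (hlow m)]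
      have := hlow m
      have := hlow (m+1)
      split_ifs <;> push_cast <;> omega
  · -- special inequalities
    intro i j hi hj
    rw [prowsum_eq hc' ⟨i+1, by omega⟩ ⟨j, by omega⟩,
      pcol_eq hc' ⟨i+1, by omega⟩ ⟨j+1, by omega⟩,
      pcol_eq hc' ⟨i, by omega⟩ ⟨j, by omega⟩]
    show (0:ℤ) ≤ qrow cn (i+2) (j+1) - qrow cn (i+1) (j+1) + prow cn (i+2) (j+1)
      - prow cn (i+1) j
    rw [qrow_succ_eq cn (hlow (i+1)), qrow_succ_eq cn (hlow i), prow_succ, prow_succ]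
    have := hlow i
    have := hlow (i+1)
    have := hstep i (by omega)
    split_ifs <;> push_cast <;> omega
  · -- first column restriction
    by_cases h0 : cn 0 = 0
    · left
      show prow cn 1 0 - prow cn 0 0 = 1
      rw [prow_succ, prow_zero, if_pos (Or.inr h0.symm)]
      ring
    · have h1 : 1 < n := by
        have := hhi 0 hn
        omega
      refine Or.inr ⟨h1, ?_⟩
      show prow cn 2 0 - prow cn 1 0 = 1
      rw [prow_succ, prow_succ]
      rw [if_pos (Or.inl (by omega)), if_neg (by omega)]
      ring

end Forward

/-! ### Backward direction: every restricted magog matrix is a staircase matrix -/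

/-- Extension of a matrix to `ℕ × ℕ` by zero. -/
def Aext (n : ℕ) (A : Fin n → Fin n → ℤ) (k j : ℕ) : ℤ :=
  if h : k < n ∧ j < n then A ⟨k, h.1⟩ ⟨j, h.2⟩ else 0

/-- Partial column sums (first `k` rows). -/
def PA (n : ℕ) (A : Fin n → Fin n → ℤ) (k j : ℕ) : ℤ :=
  ∑ t ∈ Finset.range k, Aext n A t j

/-- Partial row sums of partial column sums. -/
def QA (n : ℕ) (A : Fin n → Fin n → ℤ) (k j : ℕ) : ℤ :=
  ∑ t ∈ Finset.range j, PA n A k t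

lemma sum_all_one {m : ℕ} {f : ℕ → ℤ} (h1 : ∀ t, t < m → f t ≤ 1)
    (h2 : (m : ℤ) ≤ ∑ t ∈ Finset.range m, f t) : ∀ t, t < m → f t = 1 := by
  intro t ht
  have hmem : t ∈ Finset.range m := Finset.mem_range.mpr ht
  have hcard : ((Finset.range m).erase t).card = m - 1 := by
    rw [Finset.card_erase_of_mem hmem, Finset.card_range]
  have hsub : ∑ x ∈ (Finset.range m).erase t, f x ≤ ((m : ℤ) - 1) := by
    calc ∑ x ∈ (Finset.range m).erase t, f x
        ≤ ∑ _x ∈ (Finset.range m).erase t, (1 : ℤ) :=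
          Finset.sum_le_sum (fun x hx =>
            h1 x (Finset.mem_range.mp (Finset.mem_of_mem_erase hx)))
      _ = (((Finset.range m).erase t).card : ℤ) := by simp
      _ ≤ (m : ℤ) - 1 := by rw [hcard]; push_cast; omega
  have hadd := Finset.add_sum_erase (Finset.range m) f hmem
  have hft := h1 t ht
  omega

section Backward

variable {n : ℕ} {A : Fin n → Fin n → ℤ}

lemma PA_succ (k j : ℕ) : PA n A (k+1) j = PA n A k j + Aext n A k j :=
  Finset.sum_range_succ _ _

lemma QA_succ (k j : ℕ) : QA n A k (j+1) = QA n A k j + PA n A k j :=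
  Finset.sum_range_succ _ _

lemma rowdiff_eq (k j : ℕ) :
    ∑ t ∈ Finset.range j, Aext n A k t = QA n A (k+1) j - QA n A k j := by
  unfold QA
  rw [← Finset.sum_sub_distrib]
  exact Finset.sum_congr rfl fun t _ => by rw [PA_succ]; ring

variable (hsq : IsSquareSign n A)
include hsq

lemma PA_mem {k j : ℕ} (hk : k < n) (hj : j < n) :
    PA n A (k+1) j = 0 ∨ PA n A (k+1) j = 1 := by
  have h := hsq.2.2.2.1 ⟨k, hk⟩ ⟨j, hj⟩
  rw [sum_Iic_eq (fun i' => A i' ⟨j, hj⟩) (fun t => Aext n A t j)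
    (fun t ht => dif_pos ⟨ht, hj⟩) ⟨k, hk⟩] at h
  simp only [Fin.val_mk] at h
  have he : PA n A (k+1) j = ∑ t ∈ Finset.range (k+1), Aext n A t j := rfl
  omega

lemma PA_top {j : ℕ} (hj : j < n) : PA n A n j = 1 := by
  have h := hsq.2.1 ⟨j, hj⟩
  rw [sum_univ_eq (fun i => A i ⟨j, hj⟩) (fun t => Aext n A t j)
    (fun t ht => dif_pos ⟨ht, hj⟩)] at h
  exact h

lemma rowsum_one {k : ℕ} (hk : k < n) : ∑ j ∈ Finset.range n, Aext n A k j = 1 := by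
  have h := hsq.2.2.1 ⟨k, hk⟩
  rw [sum_univ_eq (fun j => A ⟨k, hk⟩ j) (fun t => Aext n A k t)
    (fun t ht => dif_pos ⟨hk, ht⟩)] at h
  exact h

lemma QA_mono {k j : ℕ} (hk : k < n) (hj : j < n) :
    0 ≤ QA n A (k+1) (j+1) - QA n A k (j+1) := by
  have h := hsq.2.2.2.2 ⟨k, hk⟩ ⟨j, hj⟩
  rw [sum_Iic_eq (fun j' => A ⟨k, hk⟩ j') (fun t => Aext n A k t)
    (fun t ht => dif_pos ⟨hk, ht⟩) ⟨j, hj⟩] at h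
  rw [rowdiff_eq] at h
  exact h

end Backward

section Backward2

variable {n : ℕ} {A : Fin n → Fin n → ℤ}

lemma magog_QA (hA : IsMagog n A) {i j : ℕ} (hi : i + 2 < n) (hj : j + 2 < n) :
    0 ≤ (QA n A (i+2) (j+1) - QA n A (i+1) (j+1)) + PA n A (i+2) (j+1) - PA n A (i+1) j := by
  have h := hA.2 i j hi hj
  have e1 : (∑ j' ∈ Finset.Iic (⟨j, by omega⟩ : Fin n), A ⟨i + 1, by omega⟩ j')
      = QA n A (i+2) (j+1) - QA n A (i+1) (j+1) := by
    rw [sum_Iic_eq (fun j' => A ⟨i+1, by omega⟩ j') (fun t => Aext n A (i+1) t)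
      (fun t ht => dif_pos ⟨by omega, ht⟩) ⟨j, by omega⟩]
    exact rowdiff_eq (i+1) (j+1)
  have e2 : (∑ i' ∈ Finset.Iic (⟨i + 1, by omega⟩ : Fin n), A i' ⟨j + 1, by omega⟩)
      = PA n A (i+2) (j+1) := by
    rw [sum_Iic_eq (fun i' => A i' ⟨j+1, by omega⟩) (fun t => Aext n A t (j+1))
      (fun t ht => dif_pos ⟨ht, by omega⟩) ⟨i+1, by omega⟩]
    rfl
  have e3 : (∑ i' ∈ Finset.Iic (⟨i, by omega⟩ : Fin n), A i' ⟨j, by omega⟩)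
      = PA n A (i+1) j := by
    rw [sum_Iic_eq (fun i' => A i' ⟨j, by omega⟩) (fun t => Aext n A t j)
      (fun t ht => dif_pos ⟨ht, by omega⟩) ⟨i, by omega⟩]
    rfl
  rw [← e1, ← e2, ← e3]
  exact h

end Backward2

section Backward3

variable {n : ℕ} {A : Fin n → Fin n → ℤ} (hn : 0 < n) (hA : IsMagog n A)
  (hfirst : A ⟨0, hn⟩ ⟨0, hn⟩ = 1 ∨ ∃ h : 1 < n, A ⟨1, h⟩ ⟨0, hn⟩ = 1)
include hn hA hfirst

/-- Every row `i` of the partial-sum matrix starts with `i` ones. -/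
lemma claim1 : ∀ i, i < n → ∀ j, j < i → PA n A (i+1) j = 1 := by
  have hsq := hA.1
  intro i
  induction i with
  | zero => omega
  | succ i IH =>
    intro hi1 j hj
    by_cases htop : i + 2 = n
    · exact htop ▸ PA_top hsq (by omega)
    · have hi2 : i + 2 < n := by omega
      rcases Nat.eq_zero_or_pos i with rfl | hipos
      · -- base: row 1, uses the first-column restriction
        have hj0 : j = 0 := by omega
        subst hj0
        have h20 : PA n A 2 0 = 0 ∨ PA n A 2 0 = 1 := PA_mem hsq (by omega) hn
        have h10 : PA n A 1 0 = 0 ∨ PA n A 1 0 = 1 := PA_mem hsq hn hn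
        have hP1 : PA n A 1 0 = Aext n A 0 0 := by
          rw [PA, Finset.sum_range_one]
        have hP2 : PA n A 2 0 = PA n A 1 0 + Aext n A 1 0 := PA_succ 1 0
        show PA n A 2 0 = 1
        rcases hfirst with h | ⟨h1n, h⟩
        · have e1 : Aext n A 0 0 = 1 := by
            show dite _ _ _ = 1
            rw [dif_pos ⟨hn, hn⟩]
            exact h
          by_contra hne
          have hm : 0 ≤ (QA n A 2 1 - QA n A 1 1) + PA n A 2 1 - PA n A 1 0 :=
            magog_QA hA (i := 0) (j := 0) (by omega) (by omega)
          have q21 : QA n A 2 1 = PA n A 2 0 := by rw [QA, Finset.sum_range_one]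
          have q11 : QA n A 1 1 = PA n A 1 0 := by rw [QA, Finset.sum_range_one]
          have hp21 : PA n A 2 1 = 0 ∨ PA n A 2 1 = 1 := PA_mem hsq (by omega) (by omega)
          omega
        · have e1 : Aext n A 1 0 = 1 := by
            show dite _ _ _ = 1
            rw [dif_pos ⟨h1n, hn⟩]
            exact h
          omega
      · -- step: row i+1 for i ≥ 1, uses magog at (i, i-1)
        obtain ⟨m, rfl⟩ : ∃ m, i = m + 1 := ⟨i - 1, by omega⟩
        have hIH : ∀ t, t < m + 1 → PA n A (m+2) t = 1 := IH (by omega)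
        have hQ : QA n A (m+2) (m+1) = (m+1 : ℕ) := by
          rw [QA, Finset.sum_congr rfl (fun t ht => hIH t (Finset.mem_range.mp ht))]
          simp
        have hm2 : 0 ≤ (QA n A (m+3) (m+1) - QA n A (m+2) (m+1)) + PA n A (m+3) (m+1)
            - PA n A (m+2) m := magog_QA hA (i := m+1) (j := m) (by omega) (by omega)
        have hQs : QA n A (m+3) (m+2) = QA n A (m+3) (m+1) + PA n A (m+3) (m+1) :=
          QA_succ _ _
        have hPm : PA n A (m+2) m = 1 := hIH m (by omega)
        have hbound : ∀ t, t < m + 2 → PA n A (m+3) t ≤ 1 := by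
          intro t ht
          have h : PA n A (m+3) t = 0 ∨ PA n A (m+3) t = 1 :=
            PA_mem hsq (by omega) (by omega)
          omega
        have hsum : ((m+2 : ℕ) : ℤ) ≤ ∑ t ∈ Finset.range (m+2), PA n A (m+3) t := by
          have : QA n A (m+3) (m+2) = ∑ t ∈ Finset.range (m+2), PA n A (m+3) t := rfl
          push_cast
          omega
        show PA n A (m+3) j = 1
        exact sum_all_one hbound hsum j (by omega)

/-- Existence and uniqueness of the extra 1 in each row. -/
lemma exu (i : ℕ) (hi : i < n) :
    ∃ j, i ≤ j ∧ j < n ∧ PA n A (i+1) j = 1 ∧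
      ∀ j', i ≤ j' → j' < n → PA n A (i+1) j' = 1 → j' = j := by
  have hsq := hA.1
  have htotal : ∑ j ∈ Finset.range n, PA n A (i+1) j = (i+1 : ℕ) := by
    unfold PA
    rw [Finset.sum_comm]
    rw [Finset.sum_congr rfl (fun t ht => rowsum_one hsq (Finset.mem_range.mp ht |>.trans_le (by omega)))]
    simp
  have hsplit : ∑ j ∈ Finset.range i, PA n A (i+1) j
      + ∑ j ∈ Finset.Ico i n, PA n A (i+1) j = ∑ j ∈ Finset.range n, PA n A (i+1) j := by
    rw [Finset.range_eq_Ico, Finset.range_eq_Ico]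
    exact Finset.sum_Ico_consecutive (fun j => PA n A (i+1) j) (Nat.zero_le i) hi.le
  have hhead : ∑ j ∈ Finset.range i, PA n A (i+1) j = (i : ℕ) := by
    rw [Finset.sum_congr rfl (fun t ht => claim1 hn hA hfirst i hi t (Finset.mem_range.mp ht))]
    simp
  have htail : ∑ j ∈ Finset.Ico i n, PA n A (i+1) j = 1 := by
    push_cast at htotal
    omega
  have hmem : ∀ j ∈ Finset.Ico i n, PA n A (i+1) j = 0 ∨ PA n A (i+1) j = 1 := by
    intro j hj
    rw [Finset.mem_Ico] at hj
    exact PA_mem hsq hi hj.2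
  have hex : ∃ j ∈ Finset.Ico i n, PA n A (i+1) j = 1 := by
    by_contra hne
    push_neg at hne
    have : ∑ j ∈ Finset.Ico i n, PA n A (i+1) j = 0 :=
      Finset.sum_eq_zero (fun j hj => (hmem j hj).resolve_right (hne j hj))
    omega
  obtain ⟨j, hjmem, hj1⟩ := hex
  rw [Finset.mem_Ico] at hjmem
  refine ⟨j, hjmem.1, hjmem.2, hj1, ?_⟩
  intro j' hj'1 hj'2 hj'3
  by_contra hne
  have hsub : ({j, j'} : Finset ℕ) ⊆ Finset.Ico i n := by
    intro x hx
    simp only [Finset.mem_insert, Finset.mem_singleton] at hx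
    rcases hx with rfl | rfl <;> rw [Finset.mem_Ico] <;> omega
  have hpair : ∑ x ∈ ({j, j'} : Finset ℕ), PA n A (i+1) x = 2 := by
    rw [Finset.sum_pair (by omega : j ≠ j')]
    omega
  have hle : ∑ x ∈ ({j, j'} : Finset ℕ), PA n A (i+1) x
      ≤ ∑ x ∈ Finset.Ico i n, PA n A (i+1) x := by
    apply Finset.sum_le_sum_of_subset_of_nonneg hsub
    intro x hx _
    rw [Finset.mem_Ico] at hx
    have := PA_mem (A := A) hsq hi hx.2 (j := x)
    omega
  omega

end Backward3

section Backward4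

variable {n : ℕ} {A : Fin n → Fin n → ℤ}

lemma magog_is_staircase (hn : 0 < n) (hA : IsMagog n A)
    (hfirst : A ⟨0, hn⟩ ⟨0, hn⟩ = 1 ∨ ∃ h : 1 < n, A ⟨1, h⟩ ⟨0, hn⟩ = 1) :
    ∃ cn : ℕ → ℕ, GoodC n cn ∧ A = MagogMat n cn := by
  classical
  have hsq := hA.1
  choose! cn hcn1 hcn2 hcn3 hcn4 using exu hn hA hfirst
  set c : ℕ → ℕ := fun i => if i < n then cn i else i with hc
  have hprop : ∀ i, i < n → i ≤ c i ∧ c i < n ∧ PA n A (i+1) (c i) = 1 ∧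
      (∀ j', i ≤ j' → j' < n → PA n A (i+1) j' = 1 → j' = c i) := by
    intro i hi
    rw [hc]
    simp only [if_pos hi]
    exact ⟨hcn1 i hi, hcn2 i hi, hcn3 i hi, hcn4 i hi⟩
  have hlow : ∀ k, k ≤ c k := by
    intro k
    by_cases h : k < n
    · exact (hprop k h).1
    · rw [hc]; simp [if_neg h]
  -- partial sums agree with the staircase profile
  have hPA : ∀ i, i < n → ∀ j, j < n → PA n A (i+1) j = prow c (i+1) j := by
    intro i hi j hj
    obtain ⟨hp1, hp2, hp3, hp4⟩ := hprop i hi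
    rw [prow_succ]
    rcases lt_or_ge j i with hji | hji
    · rw [if_pos (Or.inl hji)]
      exact claim1 hn hA hfirst i hi j hji
    · by_cases hje : j = c i
      · rw [if_pos (Or.inr hje), hje]
        exact hp3
      · rw [if_neg (by omega)]
        rcases PA_mem (A := A) hsq hi hj (j := j) with h | h
        · exact h
        · exact absurd (hp4 j hji hj h) hje
  -- the staircase step inequality
  have hstep : ∀ k, k + 1 < n → c (k+1) ≤ c k + 1 := by
    intro k hk1
    obtain ⟨hp1, hp2, hp3, hp4⟩ := hprop k (by omega)
    obtain ⟨hq1, hq2, hq3, hq4⟩ := hprop (k+1) hk1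
    by_cases hbig : n ≤ c k + 2
    · omega
    · have hck2 : c k + 2 < n := by omega
      have hk2 : k + 2 < n := by omega
      by_contra hcon
      have hm : 0 ≤ (QA n A (k+2) (c k+1) - QA n A (k+1) (c k+1)) + PA n A (k+2) (c k+1)
          - PA n A (k+1) (c k) := magog_QA hA (i := k) (j := c k) hk2 hck2
      have eq1 : QA n A (k+2) (c k + 1) = qrow c (k+2) (c k + 1) := by
        unfold QA qrow
        exact Finset.sum_congr rfl fun t ht =>
          hPA (k+1) hk1 t (by have := Finset.mem_range.mp ht; omega)
      have eq2 : QA n A (k+1) (c k + 1) = qrow c (k+1) (c k + 1) := by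
        unfold QA qrow
        exact Finset.sum_congr rfl fun t ht =>
          hPA k (by omega) t (by have := Finset.mem_range.mp ht; omega)
      have eq3 : PA n A (k+2) (c k + 1) = prow c (k+2) (c k + 1) :=
        hPA (k+1) hk1 (c k + 1) (by omega)
      have eq4 : PA n A (k+1) (c k) = prow c (k+1) (c k) := hPA k (by omega) (c k) (by omega)
      rw [eq1, eq2, eq3, eq4, qrow_succ_eq c (hlow (k+1)), qrow_succ_eq c (hlow k),
        prow_succ, prow_succ] at hm
      split_ifs at hm <;> push_cast at hm <;> omega
  refine ⟨c, ⟨hlow, fun k hk => (hprop k hk).2.1, hstep⟩, ?_⟩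
  funext i j
  obtain ⟨k, hk⟩ := i
  obtain ⟨j, hj⟩ := j
  have base : Aext n A k j = A ⟨k, hk⟩ ⟨j, hj⟩ := dif_pos ⟨hk, hj⟩
  have hdiff : Aext n A k j = PA n A (k+1) j - PA n A k j := by
    rw [PA_succ]; ring
  show A ⟨k, hk⟩ ⟨j, hj⟩ = prow c (k+1) j - prow c k j
  have h2 : PA n A k j = prow c k j := by
    rcases Nat.eq_zero_or_pos k with rfl | hkpos
    · rw [prow_zero]
      rfl
    · have hk' : k - 1 + 1 = k := by omega
      rw [← hk']
      exact hPA (k-1) (by omega) j hj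
  rw [← base, hdiff, hPA k hk j hj, h2]

end Backward4

/-! ### Assembly -/

/-- The family of staircase sequences, as a subtype of `Fin n → Fin n`. -/
def Cfam (n : ℕ) := {c : Fin n → Fin n //
  (∀ i : Fin n, (i : ℕ) ≤ (c i : ℕ)) ∧
    ∀ (k : ℕ) (h : k + 1 < n), (c ⟨k+1, h⟩ : ℕ) ≤ (c ⟨k, by omega⟩ : ℕ) + 1}

/-- Extend an element of `Fin n → Fin n` to `ℕ → ℕ`. -/
def cext {n : ℕ} (c : Fin n → Fin n) : ℕ → ℕ := fun k => if h : k < n then (c ⟨k, h⟩ : ℕ) else k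

lemma cext_good {n : ℕ} (c : Cfam n) : GoodC n (cext c.1) := by
  obtain ⟨c, h1, h2⟩ := c
  refine ⟨?_, ?_, ?_⟩
  · intro k
    unfold cext
    split_ifs with h
    · exact h1 ⟨k, h⟩
    · exact le_rfl
  · intro k hk
    unfold cext
    rw [dif_pos hk]
    exact (c ⟨k, hk⟩).2
  · intro k hk
    unfold cext
    rw [dif_pos (by omega : k < n), dif_pos (by omega : k + 1 < n)]
    exact h2 k hk

lemma prow_congr {n : ℕ} {cn cn' : ℕ → ℕ} (hcc : ∀ t, t < n → cn t = cn' t)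
    (k j : ℕ) (hk : k ≤ n) : prow cn k j = prow cn' k j := by
  rcases k with _ | m
  · rw [prow_zero, prow_zero]
  · rw [prow_succ, prow_succ, hcc m (by omega)]

/-- The map from staircase sequences to magog matrices. -/
def toMagog (n : ℕ) (hn : 0 < n) (c : Cfam n) :
    {A : Fin n → Fin n → ℤ //
        IsMagog n A ∧ (A ⟨0, hn⟩ ⟨0, hn⟩ = 1 ∨ ∃ h : 1 < n, A ⟨1, h⟩ ⟨0, hn⟩ = 1)} :=
  ⟨MagogMat n (cext c.1), magogMat_isMagog (cext_good c) hn⟩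

lemma toMagog_bijective (n : ℕ) (hn : 0 < n) : Function.Bijective (toMagog n hn) := by
  constructor
  · rintro ⟨c, hc1, hc2⟩ ⟨c', hc1', hc2'⟩ heq
    have hM : MagogMat n (cext c) = MagogMat n (cext c') := congrArg Subtype.val heq
    apply Subtype.ext
    funext i
    -- partial column sums agree
    have hprow : ∀ j : Fin n, prow (cext c) (i.1+1) j.1 = prow (cext c') (i.1+1) j.1 := by
      intro j
      have t1 : prow (cext c) (i.1+1) j.1
          = ∑ t ∈ Finset.range (i.1+1), (prow (cext c) (t+1) j.1 - prow (cext c) t j.1) := by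
        rw [Finset.sum_range_sub (fun t => prow (cext c) t j.1), prow_zero, sub_zero]
      have t2 : prow (cext c') (i.1+1) j.1
          = ∑ t ∈ Finset.range (i.1+1), (prow (cext c') (t+1) j.1 - prow (cext c') t j.1) := by
        rw [Finset.sum_range_sub (fun t => prow (cext c') t j.1), prow_zero, sub_zero]
      rw [t1, t2]
      apply Finset.sum_congr rfl
      intro t ht
      have htn : t < n := by have := Finset.mem_range.mp ht; omega
      have e1 : prow (cext c) (t+1) j.1 - prow (cext c) t j.1
          = MagogMat n (cext c) ⟨t, htn⟩ j := rfl
      have e2 : prow (cext c') (t+1) j.1 - prow (cext c') t j.1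
          = MagogMat n (cext c') ⟨t, htn⟩ j := rfl
      rw [e1, e2, hM]
    have h1 : prow (cext c) (i.1+1) (c i).1 = 1 := by
      rw [prow_succ, if_pos (Or.inr ?_)]
      unfold cext
      rw [dif_pos i.2, Fin.eta]
    have h2 := (hprow (c i)).symm.trans h1 |>.symm
    rw [prow_succ] at h2
    have hge := hc1 i
    have hlt : ¬ ((c i).1 < i.1) := by omega
    split_ifs at h2 with hsp
    · rcases hsp with hsp | hsp
      · omega
      · apply Fin.ext
        rw [hsp]
        unfold cext
        rw [dif_pos i.2, Fin.eta]
    · omega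
  · rintro ⟨A, hA, hfirst⟩
    obtain ⟨cn, hgood, hAeq⟩ := magog_is_staircase hn hA hfirst
    refine ⟨⟨fun i => ⟨cn i.1, hgood.2.1 i.1 i.2⟩, fun i => hgood.1 i.1,
      fun k hk => hgood.2.2 k hk⟩, ?_⟩
    apply Subtype.ext
    show MagogMat n (cext _) = A
    rw [hAeq]
    funext i j
    show prow _ (i.1+1) j.1 - prow _ i.1 j.1 = prow cn (i.1+1) j.1 - prow cn i.1 j.1
    have hcc : ∀ t, t < n → cext (fun i : Fin n => (⟨cn i.1, hgood.2.1 i.1 i.2⟩ : Fin n)) t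
        = cn t := by
      intro t ht
      unfold cext
      rw [dif_pos ht]
    rw [prow_congr hcc (i.1+1) j.1 (by omega), prow_congr hcc i.1 j.1 (by omega)]

/-- From staircase sequences to ballot functions. -/
def c2b (n : ℕ) (c : Fin n → Fin n) : ℕ → ℕ :=
  fun k => if h : k < n then (c ⟨n-1-k, by omega⟩ : ℕ) - (n-1-k) else 0

/-- From ballot functions to staircase sequences. -/
def b2c (n : ℕ) (f : Ballot n) : Fin n → Fin n :=
  fun i => ⟨f.1 (n-1-i.1) + i.1, by
    have := f.2.2.1 (n-1-i.1) (by have := i.2; omega)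
    have := i.2
    omega⟩

lemma c2b_mem (n : ℕ) (c : Cfam n) : BallotFun n (c2b n c.1) := by
  obtain ⟨c, h1, h2⟩ := c
  have hstep : ∀ k, k + 1 < n → c2b n c k ≤ c2b n c (k+1) := by
    intro k hk
    unfold c2b
    rw [dif_pos (by omega : k < n), dif_pos (by omega : k + 1 < n)]
    have hm : n-1-(k+1) + 1 = n-1-k := by omega
    have hs := h2 (n-1-(k+1)) (by omega)
    have ha := h1 ⟨n-1-(k+1), by omega⟩
    have hb := h1 ⟨n-1-(k+1)+1, by omega⟩
    have hc : (⟨n-1-(k+1)+1, by omega⟩ : Fin n) = ⟨n-1-k, by omega⟩ := Fin.ext hm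
    rw [hc] at hs hb
    simp only [Fin.val_mk] at ha hb ⊢
    omega
  refine ⟨?_, ?_, ?_⟩
  · intro i j hij hjn
    obtain ⟨d, rfl⟩ : ∃ d, j = i + d := ⟨j - i, by omega⟩
    clear hij
    induction d with
    | zero => exact le_rfl
    | succ d IH =>
      have h2' := IH (by omega)
      have h3 := hstep (i+d) (by omega)
      have : i + (d + 1) = (i + d) + 1 := by omega
      rw [this]
      exact h2'.trans h3
  · intro i hi
    unfold c2b
    rw [dif_pos hi]
    have := (c ⟨n-1-i, by omega⟩).2
    omega
  · intro i hi
    unfold c2b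
    rw [dif_neg (by omega)]

lemma b2c_mem (n : ℕ) (f : Ballot n) :
    (∀ i : Fin n, (i : ℕ) ≤ (b2c n f i : ℕ)) ∧
      ∀ (k : ℕ) (h : k + 1 < n), (b2c n f ⟨k+1, h⟩ : ℕ) ≤ (b2c n f ⟨k, by omega⟩ : ℕ) + 1 := by
  constructor
  · intro i
    show (i : ℕ) ≤ f.1 (n-1-i.1) + i.1
    omega
  · intro k hk
    show f.1 (n-1-(k+1)) + (k+1) ≤ f.1 (n-1-k) + k + 1
    have hmono := f.2.1 (n-1-(k+1)) (n-1-k) (by omega) (by omega)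
    omega

/-- Staircase sequences are in bijection with ballot functions. -/
def cfamEquivBallot (n : ℕ) : Cfam n ≃ Ballot n where
  toFun c := ⟨c2b n c.1, c2b_mem n c⟩
  invFun f := ⟨b2c n f, b2c_mem n f⟩
  left_inv c := by
    apply Subtype.ext
    funext i
    apply Fin.ext
    show c2b n c.1 (n-1-i.1) + i.1 = (c.1 i : ℕ)
    unfold c2b
    rw [dif_pos (by have := i.2; omega : n-1-i.1 < n)]
    have hi := i.2
    simp only [show n-1-(n-1-i.1) = i.1 from by omega, Fin.eta]
    have := c.2.1 i
    omega
  right_inv f := by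
    apply Subtype.ext
    funext k
    by_cases hk : k < n
    · show c2b n (b2c n f) k = f.1 k
      unfold c2b
      rw [dif_pos hk]
      show f.1 (n-1-(n-1-k)) + (n-1-k) - (n-1-k) = f.1 k
      simp only [show n-1-(n-1-k) = k from by omega]
      omega
    · show c2b n (b2c n f) k = f.1 k
      unfold c2b
      rw [dif_neg hk]
      exact (f.2.2.2 k (by omega)).symm


/-- The number of `n × n` magog matrices whose first-column `1` lies in the
first or second row is the `n`-th Catalan number `(1/(n+1)) * C(2n, n)`. -/
theorem card_magog_first_col_top_two (n : ℕ) (hn : 0 < n) :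
    Nat.card {A : Fin n → Fin n → ℤ //
        IsMagog n A ∧ (A ⟨0, hn⟩ ⟨0, hn⟩ = 1 ∨ ∃ h : 1 < n, A ⟨1, h⟩ ⟨0, hn⟩ = 1)} =
      (2 * n).choose n / (n + 1) := by
  rw [← Nat.card_eq_of_bijective _ (toMagog_bijective n hn),
    Nat.card_congr (cfamEquivBallot n), ballot_card n, catalan_eq_centralBinom_div]
  rfl
end

section
/- For every n ≥ 1, the number of n×n magog matrices whose first-row 1 lies in the first or second column (i.e. with a_{11} = 1 or a_{12} = 1) equals 2^(n−1). -/
def hole (n : ℕ) (k : ℕ → ℕ) (i : ℕ) : ℕ := if i + 1 < n then k i else n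
def chi (n : ℕ) (k : ℕ → ℕ) (i j : ℕ) : ℤ :=
  if j ≤ min (i+1) (n-1) ∧ j ≠ hole n k i then 1 else 0
def chiP (n : ℕ) (k : ℕ → ℕ) : ℕ → ℕ → ℤ
  | 0, _ => 0
  | (i+1), j => chi n k i j
def matN (n : ℕ) (k : ℕ → ℕ) (i j : ℕ) : ℤ := chi n k i j - chiP n k i j
def matF (n : ℕ) (k : ℕ → ℕ) (i j : Fin n) : ℤ := matN n k i.val j.val
def goodK (n : ℕ) (k : ℕ → ℕ) : Prop :=
  (∀ i, i + 1 < n → k i ≤ i + 1) ∧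
  (∀ i, i + 2 < n → 1 ≤ k i → k i < k (i+1)) ∧
  (∀ i, n ≤ i + 1 → k i = 0)
def Rc (n : ℕ) (k : ℕ → ℕ) (i j : ℕ) : ℤ :=
  (min (j+1) (min (i+2) n) : ℤ) - (if hole n k i ≤ j then 1 else 0)
def RcP (n : ℕ) (k : ℕ → ℕ) : ℕ → ℕ → ℤ
  | 0, _ => 0
  | (i+1), j => Rc n k i j

lemma sum_Iic_fin {n : ℕ} (f : ℕ → ℤ) (x : Fin n) :
    ∑ y ∈ Finset.Iic x, f y.val = ∑ m ∈ Finset.range (x.val+1), f m := by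
  have h1 : ∑ y ∈ Finset.Iic x, f y.val = ∑ y : Fin n, if y.val ≤ x.val then f y.val else 0 := by
    rw [← Finset.sum_filter]
    apply Finset.sum_congr _ (fun _ _ => rfl)
    ext y
    simp only [Finset.mem_Iic, Finset.mem_filter, Finset.mem_univ, true_and]
    exact Iff.rfl
  rw [h1, Fin.sum_univ_eq_sum_range (fun m => if m ≤ x.val then f m else 0) n]
  rw [← Finset.sum_subset (Finset.range_subset_range.2 (show x.val+1 ≤ n by omega))
      (by intro m _ hm; simp only [Finset.mem_range] at hm ⊢; rw [if_neg (by omega)])]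
  exact Finset.sum_congr rfl (by intro m hm; simp only [Finset.mem_range] at hm; rw [if_pos (by omega)])

lemma sum_matN_col (n : ℕ) (k : ℕ → ℕ) (i j : ℕ) :
    ∑ m ∈ Finset.range (i+1), matN n k m j = chi n k i j := by
  induction i with
  | zero => simp [matN, chiP]
  | succ i ih => rw [Finset.sum_range_succ, ih]; simp [matN, chiP]

lemma chi_row_sum (n : ℕ) (k : ℕ → ℕ) (hk : ∀ i, i + 1 < n → k i ≤ i + 1) (i j : ℕ) (hj : j < n) :
    ∑ m ∈ Finset.range (j+1), chi n k i m = Rc n k i j := by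
  have hh : (i + 1 < n ∧ hole n k i = k i ∧ k i ≤ i + 1) ∨ (¬ (i+1 < n) ∧ hole n k i = n) := by
    by_cases h : i + 1 < n
    · exact Or.inl ⟨h, if_pos h, hk i h⟩
    · exact Or.inr ⟨h, if_neg h⟩
  induction j with
  | zero =>
    rw [Finset.sum_range_succ, Finset.sum_range_zero]
    simp only [chi, Rc, zero_add]
    rcases hh with ⟨h1, h2, h3⟩ | ⟨h1, h2⟩ <;> split_ifs <;> push_cast <;> omega
  | succ j ih =>
    rw [Finset.sum_range_succ, ih (by omega)]
    simp only [chi, Rc]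
    rcases hh with ⟨h1, h2, h3⟩ | ⟨h1, h2⟩ <;> split_ifs <;> push_cast <;> omega

lemma matN_row_sum (n : ℕ) (k : ℕ → ℕ) (hk : ∀ i, i + 1 < n → k i ≤ i + 1) (i j : ℕ) (hj : j < n) :
    ∑ m ∈ Finset.range (j+1), matN n k i m = Rc n k i j - RcP n k i j := by
  simp only [matN, Finset.sum_sub_distrib, chi_row_sum n k hk i j hj]
  cases i with
  | zero => simp [chiP, RcP]
  | succ i => simp only [chiP, RcP, chi_row_sum n k hk i j hj]

lemma hole_le (n : ℕ) (k : ℕ → ℕ) (hk : ∀ i, i + 1 < n → k i ≤ i + 1) (i : ℕ) :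
    (i + 1 < n ∧ hole n k i = k i ∧ k i ≤ i + 1) ∨ (¬ (i+1 < n) ∧ hole n k i = n) := by
  by_cases h : i + 1 < n
  · exact Or.inl ⟨h, if_pos h, hk i h⟩
  · exact Or.inr ⟨h, if_neg h⟩

lemma hole_chain (n : ℕ) (k : ℕ → ℕ) (hk : goodK n k) (i : ℕ) (hi : i + 2 ≤ n) :
    1 ≤ hole n k i → hole n k i < hole n k (i+1) := by
  intro h1
  rcases hole_le n k hk.1 i with ⟨ha, hb, hc⟩ | ⟨ha, hb⟩
  · rcases hole_le n k hk.1 (i+1) with ⟨ha', hb', hc'⟩ | ⟨ha', hb'⟩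
    · rw [hb, hb']; exact hk.2.1 i (by omega) (by omega)
    · omega
  · omega

theorem isMagog_of_goodK (n : ℕ) (k : ℕ → ℕ) (hn : 0 < n) (hk : goodK n k) :
    IsMagog n (matF n k) := by
  have hb := hk.1
  have chi01 : ∀ i j, chi n k i j = 0 ∨ chi n k i j = 1 := by
    intro i j; unfold chi; split_ifs <;> simp
  have chiP01 : ∀ i j, chiP n k i j = 0 ∨ chiP n k i j = 1 := by
    intro i j; cases i with
    | zero => left; rfl
    | succ i => exact chi01 i j
  have colsum : ∀ (ii jj : ℕ) (hii : ii < n) (hjj : jj < n),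
      ∑ i' ∈ Finset.Iic (⟨ii, hii⟩ : Fin n), matF n k i' ⟨jj, hjj⟩ = chi n k ii jj := by
    intro ii jj hii hjj
    exact (sum_Iic_fin (fun m => matN n k m jj) ⟨ii, hii⟩).trans (sum_matN_col n k ii jj)
  have rowsum : ∀ (ii jj : ℕ) (hii : ii < n) (hjj : jj < n),
      ∑ j' ∈ Finset.Iic (⟨jj, hjj⟩ : Fin n), matF n k ⟨ii, hii⟩ j'
        = Rc n k ii jj - RcP n k ii jj := by
    intro ii jj hii hjj
    exact (sum_Iic_fin (fun m => matN n k ii m) ⟨jj, hjj⟩).trans (matN_row_sum n k hb ii jj hjj)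
  refine ⟨⟨?_, ?_, ?_, ?_, ?_⟩, ?_⟩
  · intro i j
    have := chi01 i.val j.val; have := chiP01 i.val j.val
    unfold matF matN; omega
  · intro j
    have : ∑ i : Fin n, matF n k i j = ∑ m ∈ Finset.range n, matN n k m j.val :=
      Fin.sum_univ_eq_sum_range (fun m => matN n k m j.val) n
    rw [this, show Finset.range n = Finset.range ((n-1)+1) by congr 1; omega, sum_matN_col]
    have hj := j.isLt
    rw [chi, if_pos]
    constructor
    · rcases hole_le n k hb (n-1) with ⟨h1,_,_⟩|⟨h1,h2⟩ <;> omega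
    · rcases hole_le n k hb (n-1) with ⟨h1,_,_⟩|⟨h1,h2⟩ <;> omega
  · intro i
    have : ∑ j : Fin n, matF n k i j = ∑ m ∈ Finset.range n, matN n k i.val m :=
      Fin.sum_univ_eq_sum_range (fun m => matN n k i.val m) n
    rw [this, show Finset.range n = Finset.range ((n-1)+1) by congr 1; omega,
      matN_row_sum n k hb i.val (n-1) (by omega)]
    have hi := i.isLt
    cases hi' : i.val with
    | zero =>
      simp only [RcP, Rc]
      rcases hole_le n k hb 0 with ⟨h1,h2,h3⟩|⟨h1,h2⟩ <;> split_ifs <;> push_cast <;> omega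
    | succ m =>
      simp only [RcP, Rc]
      rcases hole_le n k hb (m+1) with ⟨h1,h2,h3⟩|⟨h1,h2⟩ <;>
        rcases hole_le n k hb m with ⟨h1',h2',h3'⟩|⟨h1',h2'⟩ <;>
        split_ifs <;> push_cast <;> omega
  · intro i j
    rw [show i = ⟨i.val, i.isLt⟩ from rfl, show j = ⟨j.val, j.isLt⟩ from rfl,
      colsum i.val j.val i.isLt j.isLt]
    have := chi01 i.val j.val; omega
  · intro i j
    rw [show i = ⟨i.val, i.isLt⟩ from rfl, show j = ⟨j.val, j.isLt⟩ from rfl,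
      rowsum i.val j.val i.isLt j.isLt]
    have hi := i.isLt; have hj := j.isLt
    cases hi' : i.val with
    | zero =>
      simp only [RcP, Rc]
      rcases hole_le n k hb 0 with ⟨h1,h2,h3⟩|⟨h1,h2⟩ <;> split_ifs <;> push_cast <;> omega
    | succ m =>
      have hch := hole_chain n k hk m (by omega)
      simp only [RcP, Rc]
      rcases hole_le n k hb (m+1) with ⟨h1,h2,h3⟩|⟨h1,h2⟩ <;>
        rcases hole_le n k hb m with ⟨h1',h2',h3'⟩|⟨h1',h2'⟩ <;>
        split_ifs <;> push_cast <;> omega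
  · intro i j hi hj
    rw [rowsum (i+1) j (by omega) (by omega), colsum (i+1) (j+1) (by omega) (by omega),
      colsum i j (by omega) (by omega)]
    have hch := hole_chain n k hk i (by omega)
    have h1 : hole n k i = k i := if_pos (by omega)
    have h2 : hole n k (i+1) = k (i+1) := if_pos (by omega)
    have h3 : k i ≤ i + 1 := hb i (by omega)
    have h4 : k (i+1) ≤ i + 2 := hb (i+1) (by omega)
    simp only [RcP, Rc, chi]
    split_ifs <;> push_cast <;> omega

theorem corner_of_goodK (n : ℕ) (k : ℕ → ℕ) (hn : 0 < n) (hk : goodK n k) :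
    matF n k ⟨0, hn⟩ ⟨0, hn⟩ = 1 ∨ ∃ h : 1 < n, matF n k ⟨0, hn⟩ ⟨1, h⟩ = 1 := by
  have h00 : matF n k ⟨0, hn⟩ ⟨0, hn⟩ = chi n k 0 0 := by
    simp [matF, matN, chiP]
  by_cases h2 : 1 < n
  · have hk0 : k 0 ≤ 1 := hk.1 0 h2
    have hh : hole n k 0 = k 0 := if_pos h2
    by_cases hz : k 0 = 0
    · right
      refine ⟨h2, ?_⟩
      have : matF n k ⟨0, hn⟩ ⟨1, h2⟩ = chi n k 0 1 := by simp [matF, matN, chiP]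
      rw [this, chi, if_pos]
      exact ⟨by omega, by omega⟩
    · left
      rw [h00, chi, if_pos]
      exact ⟨by omega, by omega⟩
  · left
    have hh : hole n k 0 = n := if_neg h2
    rw [h00, chi, if_pos]
    exact ⟨by omega, by omega⟩

theorem matF_inj (n : ℕ) (k1 k2 : ℕ → ℕ) (hk1 : goodK n k1) (hk2 : goodK n k2)
    (h : matF n k1 = matF n k2) : k1 = k2 := by
  have hchi : ∀ i j, i < n → j < n → chi n k1 i j = chi n k2 i j := by
    intro i j hi hj
    rw [← sum_matN_col n k1 i j, ← sum_matN_col n k2 i j]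
    apply Finset.sum_congr rfl
    intro m hm
    simp only [Finset.mem_range] at hm
    have : matF n k1 ⟨m, by omega⟩ ⟨j, hj⟩ = matF n k2 ⟨m, by omega⟩ ⟨j, hj⟩ := by rw [h]
    exact this
  funext i
  by_cases hi : i + 1 < n
  · by_contra hne
    have b1 : k1 i ≤ i + 1 := hk1.1 i hi
    have b2 : k2 i ≤ i + 1 := hk2.1 i hi
    have e1 : chi n k1 i (k1 i) = 0 := by
      rw [chi, if_neg]; rw [hole, if_pos hi]; tauto
    have e2 : chi n k2 i (k1 i) = 1 := by
      rw [chi, if_pos]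
      refine ⟨by omega, ?_⟩
      rw [hole, if_pos hi]; omega
    have := hchi i (k1 i) (by omega) (by omega)
    omega
  · rw [hk1.2.2 i (by omega), hk2.2.2 i (by omega)]


-- generic 0/1 sum lemmas
lemma sum01_le (x : ℕ → ℤ) (s : Finset ℕ) (h : ∀ m ∈ s, x m ≤ 1) :
    ∑ m ∈ s, x m ≤ s.card := by
  calc ∑ m ∈ s, x m ≤ ∑ m ∈ s, 1 := Finset.sum_le_sum h
  _ = s.card := by simp

lemma sum01_all_one (x : ℕ → ℤ) (M : ℕ) (h01 : ∀ m < M, 0 ≤ x m ∧ x m ≤ 1)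
    (htot : ∑ m ∈ Finset.range M, x m = M) : ∀ m < M, x m = 1 := by
  intro m hm
  have hmem : m ∈ Finset.range M := Finset.mem_range.2 hm
  have hsplit := Finset.add_sum_erase (Finset.range M) x hmem
  have hle : ∑ m' ∈ (Finset.range M).erase m, x m' ≤ ((Finset.range M).erase m).card :=
    sum01_le x _ (fun m' hm' => (h01 m' (Finset.mem_range.1 (Finset.mem_of_mem_erase hm'))).2)
  have hcard : ((Finset.range M).erase m).card = M - 1 := by
    rw [Finset.card_erase_of_mem hmem, Finset.card_range]
  have := (h01 m hm).2
  rw [hcard] at hle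
  have h1 : (1:ℤ) ≤ M := by
    have : 0 < M := by omega
    exact_mod_cast this
  omega

lemma sum01_exists_zero (x : ℕ → ℤ) (M : ℕ) (h01 : ∀ m < M, 0 ≤ x m ∧ x m ≤ 1)
    (htot : ∑ m ∈ Finset.range M, x m < M) : ∃ u < M, x u = 0 := by
  by_contra hc
  push_neg at hc
  have : ∑ m ∈ Finset.range M, x m = M := by
    rw [Finset.sum_congr rfl (fun m hm => show x m = 1 by
      have hm' := Finset.mem_range.1 hm
      have := h01 m hm'; have := hc m hm'; omega)]
    simp
  omega

lemma sum01_unique_zero (x : ℕ → ℤ) (M : ℕ) (h01 : ∀ m < M, 0 ≤ x m ∧ x m ≤ 1)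
    (u : ℕ) (hu : u < M) (hxu : x u = 0)
    (htot : (M:ℤ) - 1 ≤ ∑ m ∈ Finset.range M, x m) :
    ∀ m < M, m ≠ u → x m = 1 := by
  intro m hm hne
  have hmem : m ∈ Finset.range M := Finset.mem_range.2 hm
  have humem : u ∈ Finset.range M := Finset.mem_range.2 hu
  have h1 := Finset.add_sum_erase (Finset.range M) x humem
  have hmem' : m ∈ (Finset.range M).erase u := Finset.mem_erase.2 ⟨hne, hmem⟩
  have h2 := Finset.add_sum_erase ((Finset.range M).erase u) x hmem'
  have hle : ∑ m' ∈ ((Finset.range M).erase u).erase m, x m'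
      ≤ (((Finset.range M).erase u).erase m).card :=
    sum01_le x _ (fun m' hm' => (h01 m' (Finset.mem_range.1
      (Finset.mem_of_mem_erase (Finset.mem_of_mem_erase hm')))).2)
  have hcard : (((Finset.range M).erase u).erase m).card = M - 2 := by
    rw [Finset.card_erase_of_mem hmem', Finset.card_erase_of_mem humem, Finset.card_range]
    omega
  have hm1 := (h01 m hm).2
  have h2M : (2:ℤ) ≤ M := by
    have : 2 ≤ M := by omega
    exact_mod_cast this
  rw [hcard] at hle
  push_cast at hle h1 h2 ⊢
  omega

def AN (n : ℕ) (A : Fin n → Fin n → ℤ) (i j : ℕ) : ℤ :=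
  if h : i < n ∧ j < n then A ⟨i, h.1⟩ ⟨j, h.2⟩ else 0
lemma AN_eq (n : ℕ) (A : Fin n → Fin n → ℤ) (i j : Fin n) : AN n A i.val j.val = A i j := by
  simp [AN]

def Scol (n : ℕ) (A : Fin n → Fin n → ℤ) (i j : ℕ) : ℤ :=
  ∑ m ∈ Finset.range (i+1), AN n A m j
def RS (n : ℕ) (A : Fin n → Fin n → ℤ) (i j : ℕ) : ℤ :=
  ∑ m ∈ Finset.range (j+1), AN n A i m
def CP (n : ℕ) (A : Fin n → Fin n → ℤ) (i j : ℕ) : ℤ :=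
  ∑ m ∈ Finset.range (j+1), Scol n A i m
def RowForm (n : ℕ) (A : Fin n → Fin n → ℤ) (i h : ℕ) : Prop :=
  h ≤ i + 1 ∧ ∀ j < n, Scol n A i j = if j ≤ i+1 ∧ j ≠ h then 1 else 0

section Classify
variable (n : ℕ) (A : Fin n → Fin n → ℤ)

lemma Scol_eq (ii jj : ℕ) (hii : ii < n) (hjj : jj < n) :
    Scol n A ii jj = ∑ i' ∈ Finset.Iic (⟨ii, hii⟩ : Fin n), A i' ⟨jj, hjj⟩ := by
  rw [show (∑ i' ∈ Finset.Iic (⟨ii, hii⟩ : Fin n), A i' ⟨jj, hjj⟩)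
      = ∑ i' ∈ Finset.Iic (⟨ii, hii⟩ : Fin n), AN n A i'.val jj by
    refine Finset.sum_congr rfl (fun y _ => ?_)
    rw [AN, dif_pos ⟨y.isLt, hjj⟩]]
  rw [sum_Iic_fin (fun m => AN n A m jj) ⟨ii, hii⟩]
  rfl

lemma RS_eq (ii jj : ℕ) (hii : ii < n) (hjj : jj < n) :
    RS n A ii jj = ∑ j' ∈ Finset.Iic (⟨jj, hjj⟩ : Fin n), A ⟨ii, hii⟩ j' := by
  rw [show (∑ j' ∈ Finset.Iic (⟨jj, hjj⟩ : Fin n), A ⟨ii, hii⟩ j')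
      = ∑ j' ∈ Finset.Iic (⟨jj, hjj⟩ : Fin n), AN n A ii j'.val by
    refine Finset.sum_congr rfl (fun y _ => ?_)
    rw [AN, dif_pos ⟨hii, y.isLt⟩]]
  rw [sum_Iic_fin (fun m => AN n A ii m) ⟨jj, hjj⟩]
  rfl

variable (hA : IsMagog n A)
include hA

lemma F2 (i j : ℕ) (hi : i < n) (hj : j < n) : 0 ≤ Scol n A i j ∧ Scol n A i j ≤ 1 := by
  rw [Scol_eq n A i j hi hj]
  exact hA.1.2.2.2.1 ⟨i, hi⟩ ⟨j, hj⟩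

lemma F3 (j : ℕ) (hj : j < n) : Scol n A (n-1) j = 1 := by
  have h1 : Scol n A (n-1) j = ∑ m ∈ Finset.range n, AN n A m j := by
    rw [Scol, show (n-1)+1 = n by omega]
  rw [h1, ← Fin.sum_univ_eq_sum_range (fun m => AN n A m j) n]
  rw [show (∑ i : Fin n, AN n A i.val j) = ∑ i : Fin n, A i ⟨j, hj⟩ by
    refine Finset.sum_congr rfl (fun y _ => ?_)
    rw [AN, dif_pos ⟨y.isLt, hj⟩]]
  exact hA.1.2.1 ⟨j, hj⟩

lemma F4 (i j : ℕ) (hi : i < n) (hj : j < n) : 0 ≤ RS n A i j := by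
  rw [RS_eq n A i j hi hj]
  exact hA.1.2.2.2.2 ⟨i, hi⟩ ⟨j, hj⟩

lemma F5 (i : ℕ) (hi : i < n) : RS n A i (n-1) = 1 := by
  have h1 : RS n A i (n-1) = ∑ m ∈ Finset.range n, AN n A i m := by
    rw [RS, show (n-1)+1 = n by omega]
  rw [h1, ← Fin.sum_univ_eq_sum_range (fun m => AN n A i m) n]
  rw [show (∑ jj : Fin n, AN n A i jj.val) = ∑ jj : Fin n, A ⟨i, hi⟩ jj by
    refine Finset.sum_congr rfl (fun y _ => ?_)
    rw [AN, dif_pos ⟨hi, y.isLt⟩]]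
  exact hA.1.2.2.1 ⟨i, hi⟩

lemma F6 (i j : ℕ) (hi : i + 2 < n) (hj : j + 2 < n) :
    0 ≤ RS n A (i+1) j + Scol n A (i+1) (j+1) - Scol n A i j := by
  rw [RS_eq n A (i+1) j (by omega) (by omega), Scol_eq n A (i+1) (j+1) (by omega) (by omega),
    Scol_eq n A i j (by omega) (by omega)]
  exact hA.2 i j hi hj

omit hA

lemma CP_succ (i j : ℕ) : CP n A (i+1) j = CP n A i j + RS n A (i+1) j := by
  rw [CP, CP, RS, ← Finset.sum_add_distrib]
  exact Finset.sum_congr rfl (fun m _ => by simp only [Scol, Finset.sum_range_succ]; try ring)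

lemma CP_zero (j : ℕ) : CP n A 0 j = RS n A 0 j := by
  rw [CP, RS]
  exact Finset.sum_congr rfl (fun m _ => by rw [Scol, Finset.sum_range_one])

include hA

lemma CP_tot (i : ℕ) (hi : i < n) : CP n A i (n-1) = (i:ℤ)+1 := by
  induction i with
  | zero => rw [CP_zero, F5 n A hA 0 (by omega)]; norm_num
  | succ i ih =>
    rw [CP_succ, ih (by omega), F5 n A hA (i+1) hi]
    push_cast; ring

omit hA

lemma CP_of_rowform (i h : ℕ) (hRF : RowForm n A i h) (j : ℕ) (hj : j < n) :
    CP n A i j = ((min (j+1) (i+2) : ℕ) : ℤ) - (if h ≤ j then 1 else 0) := by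
  obtain ⟨hb, hform⟩ := hRF
  induction j with
  | zero =>
    rw [CP, Finset.sum_range_one, hform 0 hj]
    split_ifs <;> push_cast <;> omega
  | succ j ih =>
    rw [CP, Finset.sum_range_succ, ← CP, ih (by omega), hform (j+1) hj]
    split_ifs <;> push_cast <;> omega

end Classify

section StepLemma
variable (n : ℕ) (A : Fin n → Fin n → ℤ) (hA : IsMagog n A)
include hA

lemma base_lemma (hn : 1 < n)
    (hcorner : A ⟨0, by omega⟩ ⟨0, by omega⟩ = 1 ∨ A ⟨0, by omega⟩ ⟨1, hn⟩ = 1) :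
    ∃ h, RowForm n A 0 h := by
  have x01 : ∀ j < n, 0 ≤ Scol n A 0 j ∧ Scol n A 0 j ≤ 1 := fun j hj => F2 n A hA 0 j (by omega) hj
  have htot : CP n A 0 (n-1) = 1 := CP_tot n A hA 0 (by omega)
  have htot' : ∑ m ∈ Finset.range n, Scol n A 0 m = 1 := by
    rw [← htot, CP, show (n-1)+1 = n by omega]
  have hval : ∀ j (hj : j < n), Scol n A 0 j = A ⟨0, by omega⟩ ⟨j, hj⟩ := by
    intro j hj
    rw [Scol, Finset.sum_range_one, AN, dif_pos ⟨by omega, hj⟩]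
  have key : ∀ u, u < n → Scol n A 0 u = 1 → ∀ j < n, j ≠ u → Scol n A 0 j = 0 := by
    intro u hu hxu j hj hne
    have hmem : u ∈ Finset.range n := Finset.mem_range.2 hu
    have h1 := Finset.add_sum_erase (Finset.range n) (Scol n A 0) hmem
    have hnn : 0 ≤ ∑ m ∈ (Finset.range n).erase u, Scol n A 0 m :=
      Finset.sum_nonneg (fun m hm =>
        (x01 m (Finset.mem_range.1 (Finset.mem_of_mem_erase hm))).1)
    have hmem' : j ∈ (Finset.range n).erase u := Finset.mem_erase.2 ⟨hne, Finset.mem_range.2 hj⟩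
    have h2 := Finset.add_sum_erase ((Finset.range n).erase u) (Scol n A 0) hmem'
    have hnn2 : 0 ≤ ∑ m ∈ ((Finset.range n).erase u).erase j, Scol n A 0 m :=
      Finset.sum_nonneg (fun m hm =>
        (x01 m (Finset.mem_range.1
          (Finset.mem_of_mem_erase (Finset.mem_of_mem_erase hm)))).1)
    have := (x01 j hj).1
    omega
  rcases hcorner with hc | hc
  · refine ⟨1, by omega, fun j hj => ?_⟩
    have h0 : Scol n A 0 0 = 1 := by rw [hval 0 (by omega)]; exact hc
    rcases eq_or_ne j 0 with rfl | hne
    · simpa using h0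
    · rw [key 0 (by omega) h0 j hj hne, if_neg (by omega)]
  · refine ⟨0, by omega, fun j hj => ?_⟩
    have h0 : Scol n A 0 1 = 1 := by rw [hval 1 (by omega)]; exact hc
    rcases eq_or_ne j 1 with rfl | hne
    · rw [h0, if_pos (by omega)]
    · rw [key 1 (by omega) h0 j hj hne]
      split_ifs with hx
      · omega
      · rfl

lemma step_lemma (i h : ℕ) (hi : i + 2 < n) (hRF : RowForm n A i h) :
    ∃ h', RowForm n A (i+1) h' ∧ (1 ≤ h → h < h') := by
  obtain ⟨hb, hform⟩ := hRF
  set x := Scol n A (i+1) with hx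
  have x01 : ∀ j < n, 0 ≤ x j ∧ x j ≤ 1 := fun j hj => F2 n A hA (i+1) j (by omega) hj
  have hQ : ∀ j < n, CP n A i j = ((min (j+1) (i+2) : ℕ) : ℤ) - (if h ≤ j then 1 else 0) :=
    CP_of_rowform n A i h ⟨hb, hform⟩
  have hPQ : ∀ j < n, CP n A i j ≤ CP n A (i+1) j := by
    intro j hj
    have h1 := CP_succ n A i j
    have h2 := F4 n A hA (i+1) j (by omega) hj
    omega
  have hCPx : ∀ j, CP n A (i+1) j = ∑ m ∈ Finset.range (j+1), x m := fun j => rfl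
  have hP_top : CP n A (i+1) (n-1) = (i:ℤ)+2 := by
    have := CP_tot n A hA (i+1) (by omega)
    push_cast at this ⊢; omega
  have hP_le : ∀ j < n, CP n A (i+1) j ≤ (j:ℤ)+1 := by
    intro j hj
    rw [hCPx]
    have := sum01_le x (Finset.range (j+1))
      (fun m hm => (x01 m (by have := Finset.mem_range.1 hm; omega)).2)
    simp only [Finset.card_range] at this
    push_cast at this ⊢; omega
  have hmag : ∀ j, j + 2 < n → 0 ≤ (CP n A (i+1) j - CP n A i j) + x (j+1) - Scol n A i j := by
    intro j hj
    have h6 := F6 n A hA i j hi hj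
    rw [← hx] at h6
    have h1 := CP_succ n A i j
    have h2 : RS n A (i+1) j = CP n A (i+1) j - CP n A i j := by omega
    omega
  -- Goal 1 : x vanishes above i+2
  have goal1 : ∀ j, i + 3 ≤ j → j < n → x j = 0 := by
    intro jstar hj1 hj2
    by_contra hxj
    have hxj1 : x jstar = 1 := by have := x01 jstar hj2; omega
    have hQi1 : CP n A i (i+1) = (i:ℤ)+1 := by
      rw [hQ (i+1) (by omega)]
      split_ifs <;> push_cast <;> omega
    have hP4 : (i:ℤ)+1 ≤ CP n A (i+1) (i+1) := by
      have := hPQ (i+1) (by omega); omega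
    -- sum above i+2 is at least 1
    have hsplit : CP n A (i+1) (n-1) = CP n A (i+1) (i+2) + ∑ m ∈ Finset.Ico (i+3) n, x m := by
      have e1 : CP n A (i+1) (n-1) = ∑ m ∈ Finset.Ico 0 n, x m := by
        rw [hCPx, show (n-1)+1 = n by omega, Finset.range_eq_Ico]
      have e2 : CP n A (i+1) (i+2) = ∑ m ∈ Finset.Ico 0 (i+3), x m := by
        rw [hCPx, show i+2+1 = i+3 by omega, Finset.range_eq_Ico]
      rw [e1, e2, Finset.sum_Ico_consecutive x (by omega : 0 ≤ i+3) (by omega : i+3 ≤ n)]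
    have hub : (1:ℤ) ≤ ∑ m ∈ Finset.Ico (i+3) n, x m := by
      have hmem : jstar ∈ Finset.Ico (i+3) n := Finset.mem_Ico.2 ⟨hj1, hj2⟩
      have := Finset.single_le_sum (f := x)
        (fun m hm => (x01 m (Finset.mem_Ico.1 hm).2).1) hmem
      omega
    have hP2 : CP n A (i+1) (i+2) ≤ (i:ℤ)+1 := by omega
    have hstep2 : CP n A (i+1) (i+2) = CP n A (i+1) (i+1) + x (i+2) := by
      rw [hCPx, hCPx]
      exact Finset.sum_range_succ x (i+2)
    have hx2 : x (i+2) = 0 := by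
      have := (x01 (i+2) (by omega)).1
      omega
    have hP11 : CP n A (i+1) (i+1) = (i:ℤ)+1 := by omega
    -- magog at j = i+1 forces h = i+1
    have hm1 := hmag (i+1) (by omega)
    have hyi1 : Scol n A i (i+1) = if i+1 ≤ i+1 ∧ i+1 ≠ h then 1 else 0 := hform (i+1) (by omega)
    have hxx : x (i+1+1) = x (i+2) := rfl
    have hh : h = i+1 := by
      by_contra hne
      rw [if_pos ⟨le_refl _, by omega⟩] at hyi1
      omega
    -- there is a zero u ≤ i+1
    have hzero : ∃ u < i+2, x u = 0 := by
      apply sum01_exists_zero x (i+2) (fun m hm => x01 m (by omega))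
      rw [← hCPx]
      push_cast
      omega
    obtain ⟨u, hu, hxu⟩ := hzero
    rcases Nat.lt_or_ge u (i+1) with hult | huge
    · -- u ≤ i : prefix violation
      have hQu : CP n A i u = (u:ℤ)+1 := by
        rw [hQ u (by omega)]
        split_ifs <;> push_cast <;> omega
      have hPu : CP n A (i+1) u ≤ (u:ℤ) := by
        rw [hCPx]
        have hmem : u ∈ Finset.range (u+1) := Finset.mem_range.2 (by omega)
        have h1 := Finset.add_sum_erase (Finset.range (u+1)) x hmem
        have hle := sum01_le x ((Finset.range (u+1)).erase u)
          (fun m hm => (x01 m (by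
            have := Finset.mem_range.1 (Finset.mem_of_mem_erase hm); omega)).2)
        rw [Finset.card_erase_of_mem hmem, Finset.card_range] at hle
        push_cast at hle
        omega
      have := hPQ u (by omega)
      omega
    · -- u = i+1
      have hueq : u = i+1 := by omega
      subst hueq
      have hall : ∀ m < i+1, x m = 1 := by
        apply sum01_all_one x (i+1) (fun m hm => x01 m (by omega))
        have h1 : CP n A (i+1) (i+1) = ∑ m ∈ Finset.range (i+1), x m + x (i+1) := by
          rw [hCPx, Finset.sum_range_succ]
        push_cast at h1 ⊢
        omega
      have hPi : CP n A (i+1) i = (i:ℤ)+1 := by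
        rw [hCPx]
        rw [Finset.sum_congr rfl (fun m hm => hall m (Finset.mem_range.1 hm))]
        simp
      have hm2 := hmag i (by omega)
      have hQi : CP n A i i = (i:ℤ)+1 := by
        rw [hQ i (by omega)]
        split_ifs <;> push_cast <;> omega
      have hyi : Scol n A i i = if i ≤ i+1 ∧ i ≠ h then 1 else 0 := hform i (by omega)
      rw [if_pos ⟨by omega, by omega⟩] at hyi
      omega
  -- total mass in [0, i+2]
  have hP2full : CP n A (i+1) (i+2) = (i:ℤ)+2 := by
    have hsplit : CP n A (i+1) (n-1) = CP n A (i+1) (i+2) + ∑ m ∈ Finset.Ico (i+3) n, x m := by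
      have e1 : CP n A (i+1) (n-1) = ∑ m ∈ Finset.Ico 0 n, x m := by
        rw [hCPx, show (n-1)+1 = n by omega, Finset.range_eq_Ico]
      have e2 : CP n A (i+1) (i+2) = ∑ m ∈ Finset.Ico 0 (i+3), x m := by
        rw [hCPx, show i+2+1 = i+3 by omega, Finset.range_eq_Ico]
      rw [e1, e2, Finset.sum_Ico_consecutive x (by omega : 0 ≤ i+3) (by omega : i+3 ≤ n)]
    have hz : ∑ m ∈ Finset.Ico (i+3) n, x m = 0 :=
      Finset.sum_eq_zero (fun m hm => by
        have := Finset.mem_Ico.1 hm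
        exact goal1 m this.1 this.2)
    omega
  -- exists a zero h' ≤ i+2
  obtain ⟨h', hh'lt, hxh'⟩ : ∃ h' < i+3, x h' = 0 := by
    apply sum01_exists_zero x (i+3) (fun m hm => x01 m (by omega))
    rw [← hCPx]
    push_cast
    omega
  have huniq : ∀ m < i+3, m ≠ h' → x m = 1 := by
    apply sum01_unique_zero x (i+3) (fun m hm => x01 m (by omega)) h' hh'lt hxh'
    rw [← hCPx]
    push_cast
    omega
  refine ⟨h', ⟨by omega, fun j hj => ?_⟩, ?_⟩
  · show x j = _
    rcases Nat.lt_or_ge j (i+3) with hlt | hge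
    · rcases eq_or_ne j h' with rfl | hne
      · rw [hxh', if_neg (by omega)]
      · rw [huniq j hlt hne, if_pos ⟨by omega, hne⟩]
    · rw [goal1 j (by omega) hj, if_neg (by omega)]
  · -- chain condition
    intro hh1
    by_contra hle
    push_neg at hle
    -- h' ≤ h ; we show x j = 1 for all j ≤ h, contradiction with x h' = 0
    have hones : ∀ j ≤ h, x j = 1 := by
      have hkey : ∀ j, j + 1 ≤ h → CP n A (i+1) j = (j:ℤ)+1 ∧ x (j+1) = 1 := by
        intro j hjh
        have hm := hmag j (by omega)
        have hQj : CP n A i j = (j:ℤ)+1 := by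
          rw [hQ j (by omega)]
          split_ifs <;> push_cast <;> omega
        have hyj : Scol n A i j = if j ≤ i+1 ∧ j ≠ h then 1 else 0 := hform j (by omega)
        rw [if_pos ⟨by omega, by omega⟩] at hyj
        have h1 := hP_le j (by omega)
        have h2 := (x01 (j+1) (by omega)).2
        constructor <;> omega
      intro j hjh
      rcases Nat.eq_zero_or_pos j with rfl | hj0
      · rcases eq_or_ne h' 0 with rfl | hne0
        · -- h' = 0 but then x 0 = 0 and CP at 0 is 0 < 1
          have := (hkey 0 (by omega)).1
          rw [hCPx, Finset.sum_range_one] at this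
          omega
        · exact huniq 0 (by omega) hne0.symm
      · obtain ⟨j', rfl⟩ := Nat.exists_eq_add_of_lt hj0
        rw [zero_add] at *
        exact (hkey j' (by omega)).2
    have := hones h' (by omega)
    omega

end StepLemma

lemma rowform_unique (n : ℕ) (A : Fin n → Fin n → ℤ) (i h1 h2 : ℕ) (hi : i + 1 < n)
    (hr1 : RowForm n A i h1) (hr2 : RowForm n A i h2) : h1 = h2 := by
  by_contra hne
  have e1 := hr1.2 h1 (by have := hr1.1; omega)
  have e2 := hr2.2 h1 (by have := hr1.1; omega)
  rw [if_neg (by omega)] at e1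
  rw [if_pos ⟨by have := hr1.1; omega, hne⟩] at e2
  omega

theorem classify (n : ℕ) (A : Fin n → Fin n → ℤ) (hn : 0 < n) (hA : IsMagog n A)
    (hcorner : A ⟨0, hn⟩ ⟨0, hn⟩ = 1 ∨ ∃ h : 1 < n, A ⟨0, hn⟩ ⟨1, h⟩ = 1) :
    ∃ k, goodK n k ∧ matF n k = A := by
  have main : ∀ i, i + 1 < n → ∃ h, RowForm n A i h := by
    intro i
    induction i with
    | zero =>
      intro h1
      apply base_lemma n A hA h1
      rcases hcorner with hc | ⟨_, hc⟩
      · left; exact hc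
      · right; exact hc
    | succ i ih =>
      intro hi2
      obtain ⟨h, hRF⟩ := ih (by omega)
      obtain ⟨h', hRF', _⟩ := step_lemma n A hA i h (by omega) hRF
      exact ⟨h', hRF'⟩
  classical
  refine ⟨fun i => if hh : i + 1 < n then (main i hh).choose else 0, ⟨?_, ?_, ?_⟩, ?_⟩
  · intro i hi
    show (if hh : i + 1 < n then (main i hh).choose else 0) ≤ i + 1
    rw [dif_pos hi]
    exact (main i hi).choose_spec.1
  · intro i hi hki
    show (if hh : i + 1 < n then (main i hh).choose else 0)
      < (if hh : i + 2 < n then (main (i+1) hh).choose else 0)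
    replace hki : 1 ≤ (if hh : i + 1 < n then (main i hh).choose else 0) := hki
    rw [dif_pos (show i + 1 < n by omega)] at hki ⊢
    rw [dif_pos (show i + 2 < n by omega)]
    obtain ⟨h', hRF', hch⟩ :=
      step_lemma n A hA i (main i (by omega)).choose (by omega) (main i (by omega)).choose_spec
    have := rowform_unique n A (i+1) (main (i+1) (by omega)).choose h' (by omega)
      (main (i+1) (by omega)).choose_spec hRF'
    rw [this]
    exact hch hki
  · intro i hi
    show (if hh : i + 1 < n then (main i hh).choose else 0) = 0
    rw [dif_neg (by omega)]
  · -- matF n k = A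
    set k : ℕ → ℕ := fun i => if hh : i + 1 < n then (main i hh).choose else 0 with hkdef
    have hgood1 : ∀ i, i + 1 < n → k i ≤ i + 1 := by
      intro i hi
      rw [hkdef]; simp only
      rw [dif_pos hi]
      exact (main i hi).choose_spec.1
    have hSchi : ∀ i j, i < n → j < n → Scol n A i j = chi n k i j := by
      intro i j hi hj
      by_cases hi1 : i + 1 < n
      · have hRF : RowForm n A i (k i) := by
          rw [hkdef]; simp only
          rw [dif_pos hi1]
          exact (main i hi1).choose_spec
        rw [hRF.2 j hj, chi]
        have hki := hgood1 i hi1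
        have hhole : hole n k i = k i := if_pos hi1
        by_cases hc : j ≤ i + 1 ∧ j ≠ k i
        · rw [if_pos hc, if_pos ⟨by omega, by omega⟩]
        · rw [if_neg hc, if_neg (by rw [hhole]; omega)]
      · have hieq : i = n - 1 := by omega
        subst hieq
        rw [F3 n A hA j hj, chi, if_pos]
        have hhole : hole n k (n-1) = n := if_neg (by omega)
        exact ⟨by omega, by omega⟩
    funext i j
    have hAij : A i j = Scol n A i.val j.val - (if h0 : i.val = 0 then 0 else Scol n A (i.val - 1) j.val) := by
      by_cases h0 : i.val = 0
      · rw [dif_pos h0, sub_zero, Scol, h0, Finset.sum_range_one,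
          show (0:ℕ) = i.val from h0.symm, AN_eq n A i j]
      · rw [dif_neg h0, Scol, Scol, show i.val - 1 + 1 = i.val by omega,
          Finset.sum_range_succ, AN_eq n A i j]
        omega
    rw [matF, matN, hAij, hSchi i.val j.val i.isLt j.isLt]
    by_cases h0 : i.val = 0
    · rw [dif_pos h0, h0]
      rfl
    · rw [dif_neg h0, hSchi (i.val - 1) j.val (by omega) j.isLt]
      have : chiP n k i.val j.val = chi n k (i.val - 1) j.val := by
        obtain ⟨m, hm⟩ : ∃ m, i.val = m + 1 := ⟨i.val - 1, by omega⟩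
        rw [hm]; rfl
      rw [this]


def lastOne (b : ℕ → Bool) : ℕ → ℕ
  | 0 => 0
  | m+1 => if b m then m+1 else lastOne b m

lemma lastOne_le (b : ℕ → Bool) (m : ℕ) : lastOne b m ≤ m := by
  induction m with
  | zero => simp [lastOne]
  | succ m ih => rw [lastOne]; split_ifs <;> omega

lemma lastOne_eq_zero (b : ℕ → Bool) (m : ℕ) (h : ∀ j < m, b j = false) : lastOne b m = 0 := by
  induction m with
  | zero => rfl
  | succ m ih =>
    rw [lastOne, if_neg (by rw [h m (by omega)]; simp)]
    exact ih (fun j hj => h j (by omega))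

lemma lastOne_eq (b : ℕ → Bool) (m j : ℕ) (hbj : b j = true) (hjm : j < m)
    (hafter : ∀ j', j < j' → j' < m → b j' = false) : lastOne b m = j + 1 := by
  induction m with
  | zero => omega
  | succ m ih =>
    rcases Nat.lt_or_ge j m with hlt | hge
    · rw [lastOne, if_neg (by rw [hafter m (by omega) (by omega)]; simp)]
      exact ih (by omega) (fun j' h1 h2 => hafter j' h1 (by omega))
    · have : j = m := by omega
      subst this
      rw [lastOne, if_pos hbj]

lemma lastOne_mem (b : ℕ → Bool) (m : ℕ) (h : 1 ≤ lastOne b m) :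
    b (lastOne b m - 1) = true ∧ lastOne b m - 1 < m := by
  induction m with
  | zero => simp [lastOne] at h
  | succ m ih =>
    rw [lastOne] at h ⊢
    split_ifs at h ⊢ with hb
    · simpa using hb
    · have := ih h
      exact ⟨this.1, by omega⟩

lemma lastOne_ge (b : ℕ → Bool) (m j : ℕ) (hbj : b j = true) (hjm : j < m) :
    j + 1 ≤ lastOne b m := by
  induction m with
  | zero => omega
  | succ m ih =>
    rw [lastOne]
    split_ifs with hb
    · omega
    · rcases Nat.lt_or_ge j m with hlt | hge
      · exact ih hlt
      · have : j = m := by omega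
        subst this
        rw [hbj] at hb
        simp at hb

def gstep (b : ℕ → Bool) (v : ℕ) : ℕ := lastOne b (v - 1)

def kOf (n : ℕ) (b : ℕ → Bool) (i : ℕ) : ℕ :=
  if i + 1 < n then (gstep b)^[n-1-i] n else 0

lemma gstep_le (b : ℕ → Bool) (v : ℕ) : gstep b v ≤ v - 1 := lastOne_le b (v-1)

lemma gstep_zero (b : ℕ → Bool) : gstep b 0 = 0 := rfl

lemma iter_le (b : ℕ → Bool) (n : ℕ) : ∀ s, (gstep b)^[s] n + s ≤ n ∨ (gstep b)^[s] n = 0 := by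
  intro s
  induction s with
  | zero => left; simp
  | succ s ih =>
    rw [Function.iterate_succ_apply']
    rcases Nat.eq_zero_or_pos ((gstep b)^[s] n) with h0 | hpos
    · right; rw [h0]; rfl
    · have := gstep_le b ((gstep b)^[s] n)
      omega

lemma goodK_kOf (n : ℕ) (b : ℕ → Bool) : goodK n (kOf n b) := by
  refine ⟨?_, ?_, ?_⟩
  · intro i hi
    rw [kOf, if_pos hi]
    have := iter_le b n (n-1-i)
    omega
  · intro i hi h1
    rw [kOf, if_pos (by omega)] at h1 ⊢
    rw [kOf, if_pos (by omega)]
    have hrw : (gstep b)^[n-1-i] n = gstep b ((gstep b)^[n-1-(i+1)] n) := by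
      rw [show n-1-i = n-1-(i+1)+1 by omega, Function.iterate_succ_apply']
    rw [hrw] at h1 ⊢
    rcases Nat.eq_zero_or_pos ((gstep b)^[n-1-(i+1)] n) with h0 | hpos
    · rw [h0, gstep_zero] at h1; omega
    · have := gstep_le b ((gstep b)^[n-1-(i+1)] n)
      omega
  · intro i hi
    rw [kOf, if_neg (by omega)]

lemma kOf_val_mem (n : ℕ) (b : ℕ → Bool) (i : ℕ) (hi : i + 1 < n)
    (h1 : 1 ≤ kOf n b i) : b (kOf n b i - 1) = true := by
  rw [kOf, if_pos hi] at h1 ⊢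
  have hs : n - 1 - i = (n - 1 - i - 1) + 1 := by omega
  rw [hs, Function.iterate_succ_apply'] at h1 ⊢
  exact (lastOne_mem b _ h1).1

lemma kOf_sweep (n : ℕ) (b : ℕ → Bool) (j : ℕ) (hj : j < n - 1) (hbj : b j = true) :
    ∃ i, i + 1 < n ∧ kOf n b i = j + 1 := by
  have hstart : j + 1 ≤ (gstep b)^[1] n := by
    rw [Function.iterate_one]
    exact lastOne_ge b (n-1) j hbj hj
  have sweep : ∀ d s, 1 ≤ s → j + 1 ≤ (gstep b)^[s] n → (gstep b)^[s] n ≤ j + 1 + d →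
      ∃ t, 1 ≤ t ∧ (gstep b)^[t] n = j + 1 := by
    intro d
    induction d with
    | zero => intro s hs h1 h2; exact ⟨s, hs, by omega⟩
    | succ d ih =>
      intro s hs h1 h2
      rcases eq_or_ne ((gstep b)^[s] n) (j+1) with he | hne
      · exact ⟨s, hs, he⟩
      · have hgt : j + 2 ≤ (gstep b)^[s] n := by omega
        have hnext : j + 1 ≤ (gstep b)^[s+1] n := by
          rw [Function.iterate_succ_apply']
          exact lastOne_ge b _ j hbj (by omega)
        have hle : (gstep b)^[s+1] n ≤ j + 1 + d := by
          rw [Function.iterate_succ_apply']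
          have := gstep_le b ((gstep b)^[s] n)
          omega
        exact ih (s+1) (by omega) hnext hle
  have hbound : (gstep b)^[1] n ≤ j + 1 + (n - 1 - (j+1)) := by
    have := iter_le b n 1
    omega
  obtain ⟨t, ht1, ht⟩ := sweep (n - 1 - (j+1)) 1 (by omega) hstart hbound
  have htb : t ≤ n - 1 - 1 + 1 := by
    have := iter_le b n t
    omega
  refine ⟨n - 1 - t, by omega, ?_⟩
  rw [kOf, if_pos (by omega), show n - 1 - (n - 1 - t) = t by omega, ht]

section Surj
variable (n : ℕ) (k : ℕ → ℕ) (hk : goodK n k)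

def bOf : ℕ → Bool := fun j => decide (∃ i ∈ Finset.range n, i + 1 < n ∧ k i = j + 1)

include hk

lemma k_zero_prop : ∀ i, i + 1 < n → k i = 0 → ∀ m ≤ i, k m = 0 := by
  intro i
  induction i with
  | zero =>
    intro _ h0 m hm
    have : m = 0 := by omega
    subst this; exact h0
  | succ i ih =>
    intro hi h0 m hm
    have hki : k i = 0 := by
      by_contra hne
      have := hk.2.1 i (by omega) (by omega)
      omega
    rcases Nat.lt_or_ge m (i+1) with hlt | hge
    · exact ih (by omega) hki m (by omega)
    · have : m = i + 1 := by omega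
      subst this; omega

lemma k_mono : ∀ i, i + 1 < n → ∀ m ≤ i, k m ≤ k i := by
  intro i
  induction i with
  | zero =>
    intro _ m hm
    have : m = 0 := by omega
    subst this; omega
  | succ i ih =>
    intro hi m hm
    rcases Nat.lt_or_ge m (i+1) with hlt | hge
    · rcases Nat.eq_zero_or_pos (k i) with h0 | hpos
      · rw [k_zero_prop n k hk i (by omega) h0 m (by omega)]; omega
      · have h1 := ih (by omega) m (by omega)
        have h2 := hk.2.1 i (by omega) hpos
        omega
    · have : m = i + 1 := by omega
      subst this; omega

lemma gstep_eq_k (i w : ℕ) (hi : i + 1 < n) (hlt : k i < w)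
    (hafter : ∀ m, i < m → m + 1 < n → w ≤ k m) :
    gstep (bOf n k) w = k i := by
  have hval : ∀ j, bOf n k j = true → ∃ i', i' + 1 < n ∧ k i' = j + 1 := by
    intro j hj
    rw [bOf, decide_eq_true_eq] at hj
    obtain ⟨i', _, h1, h2⟩ := hj
    exact ⟨i', h1, h2⟩
  rcases Nat.eq_zero_or_pos (k i) with h0 | hpos
  · rw [h0, gstep]
    apply lastOne_eq_zero
    intro j hjw
    by_contra hb
    obtain ⟨i', hi', hki'⟩ := hval j (by revert hb; cases bOf n k j <;> simp)
    rcases Nat.lt_or_ge i i' with hlt' | hge'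
    · have := hafter i' hlt' hi'; omega
    · have := k_mono n k hk i hi i' hge'; omega
  · rw [gstep, show k i = (k i - 1) + 1 by omega]
    apply lastOne_eq (bOf n k) (w-1) (k i - 1)
    · rw [bOf, decide_eq_true_eq]
      exact ⟨i, Finset.mem_range.2 (by omega), hi, by omega⟩
    · omega
    · intro j' h1 h2
      by_contra hb
      obtain ⟨i', hi', hki'⟩ := hval j' (by revert hb; cases bOf n k j' <;> simp)
      rcases Nat.lt_or_ge i i' with hlt' | hge'
      · have := hafter i' hlt' hi'; omega
      · have := k_mono n k hk i hi i' hge'; omega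

lemma kOf_bOf : kOf n (bOf n k) = k := by
  have hiter : ∀ s, 1 ≤ s → s ≤ n - 1 → (gstep (bOf n k))^[s] n = k (n - 1 - s) := by
    intro s
    induction s with
    | zero => omega
    | succ s ih =>
      intro hs1 hs2
      rcases Nat.eq_zero_or_pos s with rfl | hspos
      · rw [Function.iterate_one]
        apply gstep_eq_k n k hk (n-1-1) n (by omega)
        · have := hk.1 (n-1-1) (by omega); omega
        · intro m hm1 hm2; omega
      · rw [Function.iterate_succ_apply', ih (by omega) (by omega)]
        set i := n - 1 - (s+1) with hidef
        have hrepl : n - 1 - s = i + 1 := by omega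
        rw [hrepl]
        rcases Nat.eq_zero_or_pos (k (i+1)) with h0 | hpos
        · have hki : k i = 0 := by
            by_contra hne
            have := hk.2.1 i (by omega) (by omega)
            omega
          rw [h0, hki, gstep_zero]
        · apply gstep_eq_k n k hk i (k (i+1)) (by omega)
          · rcases Nat.eq_zero_or_pos (k i) with h0' | hpos'
            · omega
            · exact hk.2.1 i (by omega) hpos'
          · intro m hm1 hm2
            exact k_mono n k hk m (by omega) (i+1) (by omega)
  funext i
  by_cases hi : i + 1 < n
  · rw [kOf, if_pos hi, hiter (n-1-i) (by omega) (by omega),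
      show n - 1 - (n - 1 - i) = i by omega]
  · rw [kOf, if_neg hi, hk.2.2 i (by omega)]

end Surj

lemma bOf_false_top (n : ℕ) (k : ℕ → ℕ) (hk : goodK n k) (j : ℕ) (hj : n - 1 ≤ j) :
    bOf n k j = false := by
  rw [bOf, decide_eq_false_iff_not]
  rintro ⟨i, _, hi1, hi2⟩
  have := hk.1 i hi1
  omega

theorem card_goodK (n : ℕ) (hn : 0 < n) :
    Nat.card {k : ℕ → ℕ // goodK n k} = 2^(n-1) := by
  classical
  set ext : (Fin (n-1) → Bool) → (ℕ → Bool) :=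
    fun b' j => if h : j < n - 1 then b' ⟨j, h⟩ else false with hext
  have hF : Function.Bijective
      (fun b' : Fin (n-1) → Bool => (⟨kOf n (ext b'), goodK_kOf n (ext b')⟩ :
        {k : ℕ → ℕ // goodK n k})) := by
    constructor
    · intro b1 b2 hb
      simp only [Subtype.mk.injEq] at hb
      funext j
      have key : ∀ (c1 c2 : Fin (n-1) → Bool), kOf n (ext c1) = kOf n (ext c2) →
          ∀ jj : Fin (n-1), c1 jj = true → c2 jj = true := by
        intro c1 c2 hc jj h1
        have hb1 : ext c1 jj.val = true := by
          rw [hext]; simp only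
          rw [dif_pos jj.isLt, Fin.eta]; exact h1
        obtain ⟨i, hi1, hi2⟩ := kOf_sweep n (ext c1) jj.val jj.isLt hb1
        have h2 : kOf n (ext c2) i = jj.val + 1 := by rw [← hc, hi2]
        have h3 := kOf_val_mem n (ext c2) i hi1 (by omega)
        rw [h2] at h3
        simp only [Nat.add_sub_cancel] at h3
        rw [hext] at h3; simp only at h3
        rw [dif_pos jj.isLt, Fin.eta] at h3
        exact h3
      have h1 := key b1 b2 hb j
      have h2 := key b2 b1 hb.symm j
      cases hb1 : b1 j <;> cases hb2 : b2 j
      · rfl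
      · have := h2 hb2; simp_all
      · have := h1 hb1; simp_all
      · rfl
    · rintro ⟨k, hk⟩
      refine ⟨fun j => bOf n k j.val, ?_⟩
      have hexteq : ext (fun j => bOf n k j.val) = bOf n k := by
        funext j
        rw [hext]; simp only
        by_cases h : j < n - 1
        · rw [dif_pos h]
        · rw [dif_neg h, bOf_false_top n k hk j (by omega)]
      simp only [Subtype.mk.injEq, hexteq]
      exact kOf_bOf n k hk
  rw [← Nat.card_eq_of_bijective _ hF]
  simp [Nat.card_eq_fintype_card]


/-- The number of `n × n` magog matrices whose first-row `1` lies in the first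
or second column is `2 ^ (n - 1)`. -/
theorem card_magog_first_row_first_two (n : ℕ) (hn : 0 < n) :
    Nat.card {A : Fin n → Fin n → ℤ //
        IsMagog n A ∧ (A ⟨0, hn⟩ ⟨0, hn⟩ = 1 ∨ ∃ h : 1 < n, A ⟨0, hn⟩ ⟨1, h⟩ = 1)} =
      2 ^ (n - 1) := by
  have hG : Function.Bijective (fun kk : {k : ℕ → ℕ // goodK n k} =>
      (⟨matF n kk.val, isMagog_of_goodK n kk.val hn kk.prop,
        corner_of_goodK n kk.val hn kk.prop⟩ :
        {A : Fin n → Fin n → ℤ //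
          IsMagog n A ∧ (A ⟨0, hn⟩ ⟨0, hn⟩ = 1 ∨ ∃ h : 1 < n, A ⟨0, hn⟩ ⟨1, h⟩ = 1)})) := by
    constructor
    · rintro ⟨k1, hk1⟩ ⟨k2, hk2⟩ h
      simp only [Subtype.mk.injEq] at h ⊢
      exact matF_inj n k1 k2 hk1 hk2 h
    · rintro ⟨A, hA, hc⟩
      obtain ⟨k, hk, heq⟩ := classify n A hn hA hc
      exact ⟨⟨k, hk⟩, Subtype.ext heq⟩
  rw [← Nat.card_eq_of_bijective _ hG, card_goodK n hn]
end

section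
/- For every n ≥ 1, the number of n×n magog matrices whose (2,1) entry equals 1 is (1/(n+1))·C(2n,n) − 1, i.e. the n-th Catalan number minus 1. -/
namespace MagogAux

/-- Staircase antitone sequences: `q i ≤ n - 1 - i` on `[0,n)`, antitone, zero beyond. -/
def Stair (n : ℕ) (q : ℕ → ℕ) : Prop :=
  (∀ i, i < n → q i + i < n) ∧ (∀ ⦃i j : ℕ⦄, i ≤ j → q j ≤ q i) ∧ (∀ i, n ≤ i → q i = 0)

instance stairFinite (n : ℕ) : Finite {q : ℕ → ℕ // Stair n q} := by
  apply Finite.of_injective (f := fun (q : {q : ℕ → ℕ // Stair n q}) =>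
    (fun i : Fin n => (⟨q.1 i, by have := q.2.1 i i.2; omega⟩ : Fin n)))
  intro q q' h
  ext k
  rcases lt_or_ge k n with hk | hk
  · have := congrFun h ⟨k, hk⟩
    simpa [Fin.ext_iff] using this
  · rw [q.2.2.2 k hk, q'.2.2.2 k hk]

lemma stair_zero_unique (q : ℕ → ℕ) (h : Stair 0 q) : q = fun _ => 0 := by
  funext k; exact h.2.2 k (Nat.zero_le k)

instance (n : ℕ) : Nonempty {q : ℕ → ℕ // Stair n q} :=
  ⟨⟨fun _ => 0, fun i hi => by simpa using hi, fun i j _ => le_rfl, fun _ _ => rfl⟩⟩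


lemma stair_exists_hit {n : ℕ} {q : ℕ → ℕ} (hq : Stair (n+1) q) :
    ∃ i, i ≤ n ∧ q i + i = n := by
  refine ⟨n, le_rfl, ?_⟩
  have h1 := hq.1 n (by omega)
  omega

/-- forward components -/
def hitIdx {n : ℕ} {q : ℕ → ℕ} (hq : Stair (n+1) q) : ℕ := Nat.find (stair_exists_hit hq)

lemma hitIdx_le {n : ℕ} {q : ℕ → ℕ} (hq : Stair (n+1) q) : hitIdx hq ≤ n :=
  (Nat.find_spec (stair_exists_hit hq)).1

lemma hitIdx_eq {n : ℕ} {q : ℕ → ℕ} (hq : Stair (n+1) q) : q (hitIdx hq) + hitIdx hq = n :=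
  (Nat.find_spec (stair_exists_hit hq)).2

lemma hitIdx_min {n : ℕ} {q : ℕ → ℕ} (hq : Stair (n+1) q) {k : ℕ} (hk : k < hitIdx hq) :
    q k + k < n := by
  have h2 := Nat.find_min (stair_exists_hit hq) hk
  have hk2 : k < n + 1 := by have := hitIdx_le hq; omega
  have := hq.1 k hk2
  omega

lemma stair_ge_hit {n : ℕ} {q : ℕ → ℕ} (hq : Stair (n+1) q) {k : ℕ} (hk : k ≤ hitIdx hq) :
    n - hitIdx hq ≤ q k := by
  have := hq.2.1 hk
  have := hitIdx_eq hq
  omega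

def stairA {n : ℕ} {q : ℕ → ℕ} (hq : Stair (n+1) q) : ℕ → ℕ :=
  fun k => if k < hitIdx hq then q k - (n - hitIdx hq) else 0

def stairB {n : ℕ} {q : ℕ → ℕ} (hq : Stair (n+1) q) : ℕ → ℕ :=
  fun k => if k < n - hitIdx hq then q (hitIdx hq + 1 + k) else 0

lemma stairA_spec {n : ℕ} {q : ℕ → ℕ} (hq : Stair (n+1) q) : Stair (hitIdx hq) (stairA hq) := by
  set i0 := hitIdx hq with hi0
  refine ⟨fun k hk => ?_, fun k l hkl => ?_, fun k hk => ?_⟩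
  · have h1 := hitIdx_min hq hk
    have h2 := stair_ge_hit hq hk.le
    simp only [stairA, if_pos (show k < hitIdx hq from hk)]
    omega
  · by_cases hl : l < i0
    · have hk : k < i0 := lt_of_le_of_lt hkl hl
      simp only [stairA, if_pos (show k < hitIdx hq from hk), if_pos (show l < hitIdx hq from hl)]
      exact Nat.sub_le_sub_right (hq.2.1 hkl) _
    · simp only [stairA, if_neg (show ¬ l < hitIdx hq from hl)]; omega
  · simp only [stairA, if_neg (by omega : ¬ k < hitIdx hq)]

lemma stairB_spec {n : ℕ} {q : ℕ → ℕ} (hq : Stair (n+1) q) :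
    Stair (n - hitIdx hq) (stairB hq) := by
  refine ⟨fun k hk => ?_, fun k l hkl => ?_, fun k hk => ?_⟩
  · have h1 := hq.1 (hitIdx hq + 1 + k) (by have := hitIdx_le hq; omega)
    simp only [stairB, if_pos hk]
    omega
  · by_cases hl : l < n - hitIdx hq
    · have hk : k < n - hitIdx hq := lt_of_le_of_lt hkl hl
      simp only [stairB, if_pos hk, if_pos hl]
      exact hq.2.1 (by omega)
    · simp only [stairB, if_neg hl]; omega
  · simp only [stairB, if_neg (by omega : ¬ k < n - hitIdx hq)]

/-- inverse -/
def stairGlue (n i : ℕ) (a b : ℕ → ℕ) : ℕ → ℕ :=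
  fun k => if k < i then a k + (n - i) else if k = i then n - i else b (k - (i + 1))

lemma stairGlue_spec {n i : ℕ} (hi : i ≤ n) {a b : ℕ → ℕ}
    (ha : Stair i a) (hb : Stair (n - i) b) : Stair (n+1) (stairGlue n i a b) := by
  have hbv : ∀ m, b m + m < n - i ∨ b m = 0 := by
    intro m
    rcases lt_or_ge m (n - i) with h | h
    · exact Or.inl (hb.1 m h)
    · exact Or.inr (hb.2.2 m h)
  refine ⟨fun k hk => ?_, fun k l hkl => ?_, fun k hk => ?_⟩
  · unfold stairGlue
    split_ifs with h1 h2
    · have := ha.1 k h1; omega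
    · omega
    · rcases hbv (k - (i+1)) with h | h <;> omega
  · unfold stairGlue
    by_cases hl1 : l < i
    · have hk1 : k < i := by omega
      rw [if_pos hk1, if_pos hl1]
      have := ha.2.1 hkl; omega
    · by_cases hl2 : l = i
      · rw [if_neg hl1, if_pos hl2]
        by_cases hk1 : k < i
        · rw [if_pos hk1]; omega
        · rw [if_neg hk1, if_pos (by omega)]
      · rw [if_neg hl1, if_neg hl2]
        have hbl := hbv (l - (i+1))
        by_cases hk1 : k < i
        · rw [if_pos hk1]; omega
        · by_cases hk2 : k = i
          · rw [if_neg hk1, if_pos hk2]; omega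
          · rw [if_neg hk1, if_neg hk2]
            have := hb.2.1 (show k - (i+1) ≤ l - (i+1) by omega)
            omega
  · unfold stairGlue
    rw [if_neg (by omega), if_neg (by omega)]
    exact hb.2.2 _ (by omega)

lemma stairGlue_hit {n i : ℕ} (hi : i ≤ n) {a b : ℕ → ℕ}
    (ha : Stair i a) (hb : Stair (n - i) b) :
    hitIdx (stairGlue_spec hi ha hb) = i := by
  rw [hitIdx, Nat.find_eq_iff]
  constructor
  · refine ⟨hi, ?_⟩
    unfold stairGlue
    rw [if_neg (by omega), if_pos rfl]
    omega
  · intro k hk hcon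
    have h1 := ha.1 k hk
    unfold stairGlue at hcon
    rw [if_pos hk] at hcon
    omega

def stairGlueMap (n : ℕ)
    (x : Σ i : Fin (n+1), {a : ℕ → ℕ // Stair i a} × {b : ℕ → ℕ // Stair (n - i) b}) :
    {q : ℕ → ℕ // Stair (n+1) q} :=
  ⟨stairGlue n x.1 x.2.1 x.2.2, stairGlue_spec (by omega) x.2.1.2 x.2.2.2⟩

lemma hitIdx_congr {n : ℕ} {f g : ℕ → ℕ} (pf : Stair (n+1) f) (pg : Stair (n+1) g)
    (h : f = g) : hitIdx pf = hitIdx pg := by subst h; rfl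

lemma stairGlueMap_bijective (n : ℕ) : Function.Bijective (stairGlueMap n) := by
  constructor
  · rintro ⟨⟨i, hi⟩, ⟨a, ha⟩, ⟨b, hb⟩⟩ ⟨⟨i', hi'⟩, ⟨a', ha'⟩, ⟨b', hb'⟩⟩ h
    simp only [Fin.val_mk] at ha hb ha' hb'
    have e : stairGlue n i a b = stairGlue n i' a' b' := congrArg Subtype.val h
    have hin : i ≤ n := by omega
    have hin' : i' ≤ n := by omega
    have hii : i = i' := by
      have h1 := stairGlue_hit hin ha hb
      have h2 := stairGlue_hit hin' ha' hb'
      rw [← h1, ← h2]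
      exact hitIdx_congr _ _ e
    subst hii
    have eaa : a = a' := by
      funext k
      by_cases hk : k < i
      · have := congrFun e k
        simp only [stairGlue, if_pos hk] at this
        omega
      · rw [ha.2.2 k (by omega), ha'.2.2 k (by omega)]
    have ebb : b = b' := by
      funext k
      by_cases hk : k < n - i
      · have := congrFun e (i + 1 + k)
        simp only [stairGlue, if_neg (show ¬ i + 1 + k < i by omega),
          if_neg (show ¬ i + 1 + k = i by omega)] at this
        simpa [show i + 1 + k - (i + 1) = k by omega] using this
      · rw [hb.2.2 k (by omega), hb'.2.2 k (by omega)]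
    subst eaa; subst ebb
    rfl
  · rintro ⟨q, hq⟩
    refine ⟨⟨⟨hitIdx hq, by have := hitIdx_le hq; omega⟩,
      ⟨stairA hq, stairA_spec hq⟩, ⟨stairB hq, stairB_spec hq⟩⟩, ?_⟩
    apply Subtype.ext
    funext k
    show stairGlue n (hitIdx hq) (stairA hq) (stairB hq) k = q k
    simp only [stairGlue]
    split_ifs with h1 h2
    · have := stair_ge_hit hq h1.le
      simp only [stairA, if_pos h1]
      omega
    · subst h2; have := hitIdx_eq hq; omega
    · simp only [stairB]
      split_ifs with h3
      · congr 1; omega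
      · have hk : n + 1 ≤ k := by have := hitIdx_le hq; omega
        exact (hq.2.2 k hk).symm

lemma card_stair (n : ℕ) : Nat.card {q : ℕ → ℕ // Stair n q} = catalan n := by
  induction n using Nat.strong_induction_on with
  | _ n ih =>
    match n with
    | 0 =>
      rw [catalan_zero]
      have : Subsingleton {q : ℕ → ℕ // Stair 0 q} := by
        constructor
        rintro ⟨q, hq⟩ ⟨q', hq'⟩
        apply Subtype.ext
        show q = q'
        rw [stair_zero_unique q hq, stair_zero_unique q' hq']
      exact Nat.card_unique
    | (m + 1) =>
      have hcard := Nat.card_eq_of_bijective _ (stairGlueMap_bijective m)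
      rw [← hcard]
      have hci : ∀ i : Fin (m+1),
          Nat.card ({a : ℕ → ℕ // Stair i a} × {b : ℕ → ℕ // Stair (m - i) b}) =
            catalan i * catalan (m - i) := by
        intro i
        rw [Nat.card_prod, ih i (by omega), ih (m - i) (by omega)]
      rw [catalan_succ]
      haveI : ∀ i : Fin (m+1),
          Fintype ({a : ℕ → ℕ // Stair i a} × {b : ℕ → ℕ // Stair (m - i) b}) :=
        fun i => Fintype.ofFinite _
      rw [Nat.card_eq_fintype_card, Fintype.card_sigma]
      congr 1
      funext i
      rw [← Nat.card_eq_fintype_card]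
      exact hci i

instance stairPosFinite (n : ℕ) : Finite {q : ℕ → ℕ // Stair n q ∧ 1 ≤ q 0} := by
  apply Finite.of_injective (f := fun (x : {q : ℕ → ℕ // Stair n q ∧ 1 ≤ q 0}) =>
    (⟨x.1, x.2.1⟩ : {q : ℕ → ℕ // Stair n q}))
  intro x y h
  have : x.1 = y.1 := congrArg (fun (z : {q : ℕ → ℕ // Stair n q}) => z.1) h
  exact Subtype.ext this

lemma card_stair_pos (n : ℕ) :
    Nat.card {q : ℕ → ℕ // Stair n q ∧ 1 ≤ q 0} = catalan n - 1 := by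
  have e : {q : ℕ → ℕ // Stair n q} ≃ {q : ℕ → ℕ // Stair n q ∧ 1 ≤ q 0} ⊕ Unit := by
    refine ⟨fun q => if h : 1 ≤ q.1 0 then Sum.inl ⟨q.1, q.2, h⟩ else Sum.inr ⟨⟩,
      fun x => x.elim (fun y => ⟨y.1, y.2.1⟩)
        (fun _ => ⟨fun _ => 0, fun i hi => by simpa using hi, fun i j _ => le_rfl,
          fun _ _ => rfl⟩), ?_, ?_⟩
    · rintro ⟨q, hq⟩
      dsimp only
      by_cases h : 1 ≤ q 0
      · rw [dif_pos h]
        rfl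
      · rw [dif_neg h]
        apply Subtype.ext
        funext k
        have := hq.2.1 (Nat.zero_le k)
        show (0 : ℕ) = q k
        omega
    · rintro (⟨q, hq, h1⟩ | ⟨⟩)
      · simp only [Sum.elim_inl]
        split_ifs
        exact dif_pos h1
      · simp only [Sum.elim_inr]
        split_ifs with hh
        · exact absurd hh (by simp)
        · rfl
  have hc := card_stair n
  have h2 : Nat.card Unit = 1 := Nat.card_unique
  have hc2 : Nat.card {q : ℕ → ℕ // Stair n q}
      = Nat.card {q : ℕ → ℕ // Stair n q ∧ 1 ≤ q 0} + Nat.card Unit := by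
    rw [Nat.card_congr e]
    exact Nat.card_sum
  rw [hc2, h2] at hc
  exact Nat.eq_sub_of_add_eq hc

/-! ### Fin Iic helpers -/

lemma Iic_fin_zero {n : ℕ} (h0 : 0 < n) :
    Finset.Iic (⟨0, h0⟩ : Fin n) = {⟨0, h0⟩} := by
  ext x
  simp [Finset.mem_Iic, Fin.le_def, Fin.ext_iff]

lemma Iic_fin_succ {n k : ℕ} (h : k + 1 < n) :
    Finset.Iic (⟨k + 1, h⟩ : Fin n) = insert ⟨k + 1, h⟩ (Finset.Iic ⟨k, by omega⟩) := by
  ext x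
  simp only [Finset.mem_Iic, Finset.mem_insert, Fin.le_def, Fin.ext_iff]
  omega

lemma not_mem_Iic_fin {n k : ℕ} (h : k + 1 < n) :
    (⟨k + 1, h⟩ : Fin n) ∉ Finset.Iic (⟨k, by omega⟩ : Fin n) := by
  simp [Finset.mem_Iic, Fin.le_def]

lemma univ_eq_Iic_fin {n : ℕ} (h0 : 0 < n) :
    (Finset.univ : Finset (Fin n)) = Finset.Iic ⟨n - 1, by omega⟩ := by
  ext x
  simp only [Finset.mem_univ, Finset.mem_Iic, Fin.le_def, true_iff]
  have := x.2
  omega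

lemma card_Iic_fin {n k : ℕ} (h : k < n) :
    (Finset.Iic (⟨k, h⟩ : Fin n)).card = k + 1 := by
  induction k with
  | zero => rw [Iic_fin_zero]; rfl
  | succ m ih =>
    rw [Iic_fin_succ h, Finset.card_insert_of_notMem (not_mem_Iic_fin h), ih (by omega)]

/-! ### The matrix attached to a staircase sequence -/

def pent (n : ℕ) (q : ℕ → ℕ) (i j : Fin n) : ℤ :=
  if (j : ℕ) < (i : ℕ) ∨ (j : ℕ) = q i + i then 1 else 0

def mat (n : ℕ) (q : ℕ → ℕ) (i j : Fin n) : ℤ :=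
  pent n q i j - if h : 0 < (i : ℕ) then pent n q ⟨(i : ℕ) - 1, by omega⟩ j else 0

lemma mat_zero {n : ℕ} (q : ℕ → ℕ) {i : Fin n} (hi : (i : ℕ) = 0) (j : Fin n) :
    mat n q i j = pent n q i j := by
  rw [mat, dif_neg (by omega), sub_zero]

lemma mat_pos {n : ℕ} (q : ℕ → ℕ) {i : Fin n} (hi : 0 < (i : ℕ)) (j : Fin n) :
    mat n q i j = pent n q i j - pent n q ⟨(i : ℕ) - 1, by omega⟩ j := by
  rw [mat, dif_pos hi]

lemma sum_col {n : ℕ} (q : ℕ → ℕ) (i j : Fin n) :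
    ∑ i' ∈ Finset.Iic i, mat n q i' j = pent n q i j := by
  obtain ⟨k, hk⟩ := i
  induction k with
  | zero =>
    rw [Iic_fin_zero, Finset.sum_singleton, mat_zero q rfl]
  | succ m ih =>
    rw [Iic_fin_succ hk, Finset.sum_insert (not_mem_Iic_fin hk), ih (by omega),
      mat_pos q (by simp)]
    have : (⟨(⟨m + 1, hk⟩ : Fin n) - 1, by omega⟩ : Fin n) = ⟨m, by omega⟩ := by
      simp
    rw [this]
    ring

lemma sum_row_pent {n : ℕ} (q : ℕ → ℕ) (i j : Fin n) :
    ∑ j' ∈ Finset.Iic j, pent n q i j' =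
      (if (i : ℕ) ≤ (j : ℕ) then ((i : ℕ) : ℤ) else ((j : ℕ) : ℤ) + 1)
        + (if q i + i ≤ (j : ℕ) then 1 else 0) := by
  obtain ⟨k, hk⟩ := j
  induction k with
  | zero =>
    rw [Iic_fin_zero, Finset.sum_singleton]
    simp only [pent, Fin.val_mk]
    split_ifs <;> omega
  | succ m ih =>
    rw [Iic_fin_succ hk, Finset.sum_insert (not_mem_Iic_fin hk), ih (by omega)]
    simp only [pent, Fin.val_mk]
    split_ifs <;> push_cast <;> omega

lemma sum_row_mat_zero {n : ℕ} (q : ℕ → ℕ) {i : Fin n} (hi : (i : ℕ) = 0) (j : Fin n) :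
    ∑ j' ∈ Finset.Iic j, mat n q i j' =
      (if (i : ℕ) ≤ (j : ℕ) then ((i : ℕ) : ℤ) else ((j : ℕ) : ℤ) + 1)
        + (if q i + i ≤ (j : ℕ) then 1 else 0) := by
  rw [← sum_row_pent]
  exact Finset.sum_congr rfl fun x _ => mat_zero q hi x

lemma sum_row_mat_pos {n : ℕ} (q : ℕ → ℕ) {i : Fin n} (hi : 0 < (i : ℕ)) (j : Fin n) :
    ∑ j' ∈ Finset.Iic j, mat n q i j' =
      ((if (i : ℕ) ≤ (j : ℕ) then ((i : ℕ) : ℤ) else ((j : ℕ) : ℤ) + 1)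
        + (if q i + i ≤ (j : ℕ) then 1 else 0))
      - ((if ((i : ℕ) - 1) ≤ (j : ℕ) then (((i : ℕ) - 1 : ℕ) : ℤ) else ((j : ℕ) : ℤ) + 1)
        + (if q ((i : ℕ) - 1) + ((i : ℕ) - 1) ≤ (j : ℕ) then 1 else 0)) := by
  have : ∀ j' ∈ Finset.Iic j, mat n q i j'
      = pent n q i j' - pent n q ⟨(i : ℕ) - 1, by omega⟩ j' :=
    fun x _ => mat_pos q hi x
  rw [Finset.sum_congr rfl this, Finset.sum_sub_distrib, sum_row_pent, sum_row_pent]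

lemma mat_isMagog {n : ℕ} (hn : 0 < n) {q : ℕ → ℕ} (hb : ∀ i, i < n → q i + i < n)
    (hs : ∀ i, i + 1 < n → q (i + 1) ≤ q i) : IsMagog n (mat n q) := by
  refine ⟨⟨?_, ?_, ?_, ?_, ?_⟩, ?_⟩
  · -- entries
    intro i j
    by_cases hi : 0 < (i : ℕ)
    · rw [mat_pos q hi]
      simp only [pent]
      split_ifs <;> omega
    · rw [mat_zero q (by omega)]
      simp only [pent]
      split_ifs <;> omega
  · -- column sums
    intro j
    rw [univ_eq_Iic_fin hn, sum_col]
    have h1 := hb (n - 1) (by omega)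
    have h2 := j.2
    simp only [pent, Fin.val_mk]
    split_ifs with h
    · rfl
    · omega
  · -- row sums
    intro i
    rw [univ_eq_Iic_fin hn]
    by_cases hi : 0 < (i : ℕ)
    · rw [sum_row_mat_pos q hi]
      have h1 := hb i i.2
      have h2 := hb ((i : ℕ) - 1) (by omega)
      have h3 := i.2
      simp only [Fin.val_mk]
      split_ifs <;> push_cast <;> omega
    · rw [sum_row_mat_zero q (by omega)]
      have h1 := hb i i.2
      have h3 := i.2
      simp only [Fin.val_mk]
      split_ifs <;> push_cast <;> omega
  · -- partial column sums
    intro i j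
    rw [sum_col]
    simp only [pent]
    split_ifs <;> omega
  · -- partial row sums
    intro i j
    by_cases hi : 0 < (i : ℕ)
    · rw [sum_row_mat_pos q hi]
      have h1 := i.2
      have h2 := j.2
      split_ifs <;> push_cast <;> omega
    · rw [sum_row_mat_zero q (by omega)]
      split_ifs <;> push_cast <;> omega
  · -- special inequalities
    intro i j hi hj
    rw [sum_col, sum_col, sum_row_mat_pos q (show 0 < ((⟨i + 1, by omega⟩ : Fin n) : ℕ) by
      simp)]
    have h1 := hb i (by omega)
    have h2 := hb (i + 1) (by omega)
    have h3 := hs i (by omega)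
    simp only [pent, Fin.val_mk]
    norm_num
    split_ifs <;> push_cast <;> omega

lemma mat_entry {n : ℕ} (hn : 0 < n) (h1n : 1 < n) {q : ℕ → ℕ} (h0 : 1 ≤ q 0) :
    mat n q ⟨1, h1n⟩ ⟨0, hn⟩ = 1 := by
  rw [mat_pos q (by simp)]
  simp only [pent, Fin.val_mk]
  norm_num
  omega

lemma magog_antitone {n : ℕ} {q : ℕ → ℕ} (hb : ∀ i, i < n → q i + i < n)
    (hm : IsMagog n (mat n q)) : ∀ i, i + 1 < n → q (i + 1) ≤ q i := by
  intro i hi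
  by_contra hcon
  push_neg at hcon
  have hb1 := hb i (by omega)
  have hb2 := hb (i + 1) hi
  have hi2 : i + 2 < n := by omega
  have hj2 : (q i + i) + 2 < n := by omega
  have hsp := hm.2 i (q i + i) hi2 hj2
  rw [sum_col, sum_col, sum_row_mat_pos q (by simp)] at hsp
  simp only [pent, Fin.val_mk, Nat.add_sub_cancel, eq_self_iff_true, or_true, if_true] at hsp
  split_ifs at hsp <;> omega

lemma magog_q0 {n : ℕ} (hn0 : 0 < n) (h1n : 1 < n) {q : ℕ → ℕ}
    (hA : mat n q ⟨1, h1n⟩ ⟨0, hn0⟩ = 1) : 1 ≤ q 0 := by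
  rw [mat_pos q (by simp)] at hA
  simp only [pent, Fin.val_mk] at hA
  norm_num at hA
  omega

lemma mat_injective {n : ℕ} {q q' : ℕ → ℕ}
    (hb : ∀ i, i < n → q i + i < n) (hb' : ∀ i, i < n → q' i + i < n)
    (ht : ∀ i, n ≤ i → q i = 0) (ht' : ∀ i, n ≤ i → q' i = 0)
    (h : mat n q = mat n q') : q = q' := by
  have hpent : ∀ i j : Fin n, pent n q i j = pent n q' i j := by
    intro i j
    rw [← sum_col, ← sum_col, h]
  funext k
  rcases lt_or_ge k n with hk | hk
  · have hbk := hb k hk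
    have h1 := hpent ⟨k, hk⟩ ⟨q k + k, hbk⟩
    simp only [pent, Fin.val_mk, eq_self_iff_true, or_true, if_true] at h1
    split_ifs at h1 <;> omega
  · rw [ht k hk, ht' k hk]

lemma sum_eq_one_exists {α : Type} [DecidableEq α] (s : Finset α) (f : α → ℤ)
    (h01 : ∀ x ∈ s, f x = 0 ∨ f x = 1) (hs : ∑ x ∈ s, f x = 1) :
    ∃ a ∈ s, f a = 1 := by
  by_contra h
  push_neg at h
  have : ∑ x ∈ s, f x = 0 := Finset.sum_eq_zero fun x hx => by
    rcases h01 x hx with h' | h'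
    · exact h'
    · exact absurd h' (h x hx)
  omega

lemma sum_eq_one_unique {α : Type} [DecidableEq α] (s : Finset α) (f : α → ℤ)
    (h01 : ∀ x ∈ s, f x = 0 ∨ f x = 1) (hs : ∑ x ∈ s, f x = 1)
    {a b : α} (ha : a ∈ s) (hb : b ∈ s) (hfa : f a = 1) (hfb : f b = 1) : a = b := by
  by_contra hab
  have hsub : {a, b} ⊆ s := by
    intro x hx
    simp only [Finset.mem_insert, Finset.mem_singleton] at hx
    rcases hx with rfl | rfl <;> assumption
  have h2 : ∑ x ∈ ({a, b} : Finset α), f x = 2 := by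
    rw [Finset.sum_pair hab, hfa, hfb]
    norm_num
  have hle : ∑ x ∈ ({a, b} : Finset α), f x ≤ ∑ x ∈ s, f x := by
    apply Finset.sum_le_sum_of_subset_of_nonneg hsub
    intro x hx _
    rcases h01 x hx with h' | h' <;> omega
  omega

/-! ### Surjectivity: recovering the sequence from a magog matrix -/

def colP {n : ℕ} (A : Fin n → Fin n → ℤ) (i j : Fin n) : ℤ :=
  ∑ i' ∈ Finset.Iic i, A i' j

lemma colP_01 {n : ℕ} {A : Fin n → Fin n → ℤ} (hsq : IsSquareSign n A) (i j : Fin n) :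
    colP A i j = 0 ∨ colP A i j = 1 := by
  have := hsq.2.2.2.1 i j
  unfold colP
  omega

lemma colP_last {n : ℕ} (hn : 0 < n) {A : Fin n → Fin n → ℤ} (hsq : IsSquareSign n A)
    (j : Fin n) : colP A ⟨n - 1, by omega⟩ j = 1 := by
  have := hsq.2.1 j
  rw [univ_eq_Iic_fin hn] at this
  exact this

lemma colP_succ {n : ℕ} (A : Fin n → Fin n → ℤ) {k : ℕ} (hk : k + 1 < n) (j : Fin n) :
    colP A ⟨k + 1, hk⟩ j = colP A ⟨k, by omega⟩ j + A ⟨k + 1, hk⟩ j := by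
  unfold colP
  rw [Iic_fin_succ hk, Finset.sum_insert (not_mem_Iic_fin hk)]
  ring

lemma rowdiff {n : ℕ} (A : Fin n → Fin n → ℤ) {k : ℕ} (hk : k + 1 < n) (j : Fin n) :
    ∑ j' ∈ Finset.Iic j, A ⟨k + 1, hk⟩ j'
      = ∑ j' ∈ Finset.Iic j, colP A ⟨k + 1, hk⟩ j'
        - ∑ j' ∈ Finset.Iic j, colP A ⟨k, by omega⟩ j' := by
  rw [← Finset.sum_sub_distrib]
  apply Finset.sum_congr rfl
  intro x _
  rw [colP_succ A hk x]
  ring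

lemma colP_ones {n : ℕ} (hn0 : 0 < n) (h1n : 1 < n) {A : Fin n → Fin n → ℤ}
    (hm : IsMagog n A) (hA : A ⟨1, h1n⟩ ⟨0, hn0⟩ = 1) :
    ∀ k (hk : k < n) (j : Fin n), (j : ℕ) < k → colP A ⟨k, hk⟩ j = 1 := by
  have hsq := hm.1
  intro k
  induction k with
  | zero => intro hk j hj; omega
  | succ m ih =>
    intro hk j hj
    by_cases hmn : m + 1 = n - 1
    · have : (⟨m + 1, hk⟩ : Fin n) = ⟨n - 1, by omega⟩ := by
        simp only [Fin.ext_iff]; omega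
      rw [this]
      exact colP_last hn0 hsq j
    · have hm2 : m + 2 < n := by omega
      have hml : m < n := by omega
      have hsucc : ∀ jj : Fin n, colP A ⟨m + 1, hk⟩ jj = colP A ⟨m, hml⟩ jj + A ⟨m + 1, hk⟩ jj :=
        fun jj => colP_succ A hk jj
      have h01' : colP A ⟨m + 1, hk⟩ j = 0 ∨ colP A ⟨m + 1, hk⟩ j = 1 := colP_01 hsq _ j
      rcases Nat.eq_zero_or_pos m with rfl | hmpos
      · -- base: row 1, j = 0
        have hj0 : j = ⟨0, hn0⟩ := Fin.ext (by simpa using hj)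
        subst hj0
        have h1 : A ⟨0 + 1, hk⟩ ⟨0, hn0⟩ = 1 := hA
        have h2 : 0 ≤ colP A ⟨0, hml⟩ ⟨0, hn0⟩ := (hsq.2.2.2.1 ⟨0, hml⟩ ⟨0, hn0⟩).1
        have h4 := hsucc ⟨0, hn0⟩
        omega
      · -- m ≥ 1
        rcases Nat.eq_zero_or_pos (j : ℕ) with hj0 | hjpos
        · -- j = 0 : use row-prefix nonnegativity
          have hj' : j = ⟨0, hn0⟩ := Fin.ext (by simpa using hj0)
          subst hj'
          have h1 : colP A ⟨m, hml⟩ ⟨0, hn0⟩ = 1 := ih hml _ (by simpa using hmpos)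
          have h2 := hsq.2.2.2.2 ⟨m + 1, hk⟩ ⟨0, hn0⟩
          rw [Iic_fin_zero hn0, Finset.sum_singleton] at h2
          have h4 := hsucc ⟨0, hn0⟩
          omega
        · -- j = t + 1 : use the special inequality at (m, t)
          obtain ⟨t, ht⟩ : ∃ t, (j : ℕ) = t + 1 := ⟨(j : ℕ) - 1, by omega⟩
          have ht2 : t + 2 < n := by omega
          have htn : t + 1 < n := by omega
          have htn' : t < n := by omega
          have hje : j = ⟨t + 1, htn⟩ := Fin.ext (by simpa using ht)
          subst hje
          have hsp := hm.2 m t hm2 ht2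
          rw [rowdiff A (show m + 1 < n from hk) (⟨t, by omega⟩ : Fin n)] at hsp
          have hsp2 : 0 ≤ (∑ j' ∈ Finset.Iic (⟨t, htn'⟩ : Fin n), colP A ⟨m + 1, hk⟩ j'
              - ∑ j' ∈ Finset.Iic (⟨t, htn'⟩ : Fin n), colP A ⟨m, hml⟩ j')
              + colP A ⟨m + 1, hk⟩ ⟨t + 1, htn⟩ - colP A ⟨m, hml⟩ ⟨t, htn'⟩ := hsp
          have hones : ∀ x ∈ Finset.Iic (⟨t, htn'⟩ : Fin n),
              colP A (⟨m, hml⟩ : Fin n) x = 1 := by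
            intro x hx
            simp only [Finset.mem_Iic, Fin.le_def, Fin.val_mk] at hx
            exact ih hml x (by omega)
          have hsum1 : ∑ j' ∈ Finset.Iic (⟨t, htn'⟩ : Fin n),
              colP A (⟨m, hml⟩ : Fin n) j' = (t : ℤ) + 1 := by
            rw [Finset.sum_congr rfl hones, Finset.sum_const, card_Iic_fin htn']
            push_cast
            ring
          have hsum2 : ∑ j' ∈ Finset.Iic (⟨t, htn'⟩ : Fin n),
              colP A (⟨m + 1, hk⟩ : Fin n) j' ≤ (t : ℤ) + 1 := by
            have hle := Finset.sum_le_card_nsmul (Finset.Iic (⟨t, htn'⟩ : Fin n))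
              (fun j' => colP A (⟨m + 1, hk⟩ : Fin n) j') 1
              (fun x _ => by
                have := colP_01 hsq ⟨m + 1, hk⟩ x
                show colP A ⟨m + 1, hk⟩ x ≤ 1
                omega)
            rw [card_Iic_fin htn', nsmul_eq_mul] at hle
            push_cast at hle
            omega
          have hprev : colP A (⟨m, hml⟩ : Fin n) ⟨t, htn'⟩ = 1 :=
            ih hml _ (by simpa using (by omega : t < m))
          omega

lemma colP_rowsum {n : ℕ} (hn : 0 < n) {A : Fin n → Fin n → ℤ} (hsq : IsSquareSign n A)
    (i : Fin n) : ∑ j, colP A i j = (i : ℤ) + 1 := by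
  unfold colP
  rw [Finset.sum_comm]
  have : ∀ i' ∈ Finset.Iic i, ∑ j, A i' j = 1 := fun i' _ => hsq.2.2.1 i'
  rw [Finset.sum_congr rfl this, Finset.sum_const, Fin.card_Iic, nsmul_eq_mul]
  push_cast
  ring

lemma colP_exists_unique {n : ℕ} (hn0 : 0 < n) (h1n : 1 < n) {A : Fin n → Fin n → ℤ}
    (hm : IsMagog n A) (hA : A ⟨1, h1n⟩ ⟨0, hn0⟩ = 1) (i : Fin n) :
    ∃ j : Fin n, (i ≤ j ∧ colP A i j = 1) ∧
      ∀ j' : Fin n, i ≤ j' → colP A i j' = 1 → j' = j := by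
  have hsq := hm.1
  have hsum := colP_rowsum hn0 hsq i
  have hones : ∀ x ∈ Finset.Iio i, colP A i x = 1 := by
    intro x hx
    rw [Finset.mem_Iio, Fin.lt_def] at hx
    have : colP A ⟨(i : ℕ), i.2⟩ x = 1 := colP_ones hn0 h1n hm hA (i : ℕ) i.2 x hx
    simpa using this
  have hsumIio : ∑ x ∈ Finset.Iio i, colP A i x = (i : ℤ) := by
    rw [Finset.sum_congr rfl hones, Finset.sum_const, Fin.card_Iio, nsmul_eq_mul, mul_one]
  have hsdiff : ∑ x ∈ Finset.univ \ Finset.Iio i, colP A i x = 1 := by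
    rw [Finset.sum_sdiff_eq_sub (Finset.subset_univ _), hsumIio, hsum]
    ring
  have h01 : ∀ x ∈ Finset.univ \ Finset.Iio i, colP A i x = 0 ∨ colP A i x = 1 :=
    fun x _ => colP_01 hsq i x
  obtain ⟨a, ha, hfa⟩ := sum_eq_one_exists _ _ h01 hsdiff
  have hmem : ∀ x : Fin n, x ∈ Finset.univ \ Finset.Iio i ↔ i ≤ x := by
    intro x
    simp [Finset.mem_sdiff, Finset.mem_Iio]
  refine ⟨a, ⟨(hmem a).1 ha, hfa⟩, ?_⟩
  intro j' hj' hcj'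
  exact sum_eq_one_unique _ _ h01 hsdiff ((hmem j').2 hj') ha hcj' hfa

/-- the sequence extracted from a magog matrix -/
noncomputable def seqOf {n : ℕ} (hn0 : 0 < n) (h1n : 1 < n) {A : Fin n → Fin n → ℤ}
    (hm : IsMagog n A) (hA : A ⟨1, h1n⟩ ⟨0, hn0⟩ = 1) : ℕ → ℕ :=
  fun k => if h : k < n then
    ((colP_exists_unique hn0 h1n hm hA ⟨k, h⟩).choose : Fin n) - k else 0

lemma seqOf_spec {n : ℕ} (hn0 : 0 < n) (h1n : 1 < n) {A : Fin n → Fin n → ℤ}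
    (hm : IsMagog n A) (hA : A ⟨1, h1n⟩ ⟨0, hn0⟩ = 1) {k : ℕ} (hk : k < n) :
    k ≤ seqOf hn0 h1n hm hA k + k ∧ seqOf hn0 h1n hm hA k + k < n ∧
      colP A ⟨k, hk⟩ ⟨seqOf hn0 h1n hm hA k + k, by
        have := ((colP_exists_unique hn0 h1n hm hA ⟨k, hk⟩).choose_spec).1.1
        rw [Fin.le_def] at this
        simp only [seqOf, dif_pos hk]
        have h2 := ((colP_exists_unique hn0 h1n hm hA ⟨k, hk⟩).choose : Fin n).2
        omega⟩ = 1 := by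
  have hspec := ((colP_exists_unique hn0 h1n hm hA ⟨k, hk⟩).choose_spec).1
  have hle := hspec.1
  rw [Fin.le_def] at hle
  simp only [Fin.val_mk] at hle
  have hlt := ((colP_exists_unique hn0 h1n hm hA ⟨k, hk⟩).choose : Fin n).2
  simp only [seqOf, dif_pos hk]
  refine ⟨by omega, by omega, ?_⟩
  have : (⟨(colP_exists_unique hn0 h1n hm hA ⟨k, hk⟩).choose - k + k,
      by omega⟩ : Fin n) = (colP_exists_unique hn0 h1n hm hA ⟨k, hk⟩).choose := by
    apply Fin.ext
    simp only [Fin.val_mk]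
    omega
  rw [this]
  exact hspec.2

lemma seqOf_choose_val {n : ℕ} (hn0 : 0 < n) (h1n : 1 < n) {A : Fin n → Fin n → ℤ}
    (hm : IsMagog n A) (hA : A ⟨1, h1n⟩ ⟨0, hn0⟩ = 1) {k : ℕ} (hk : k < n) :
    ((colP_exists_unique hn0 h1n hm hA ⟨k, hk⟩).choose : Fin n).val
      = seqOf hn0 h1n hm hA k + k := by
  have hle := ((colP_exists_unique hn0 h1n hm hA ⟨k, hk⟩).choose_spec).1.1
  rw [Fin.le_def] at hle
  simp only [Fin.val_mk] at hle
  simp only [seqOf, dif_pos hk]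
  omega

lemma colP_eq_pent {n : ℕ} (hn0 : 0 < n) (h1n : 1 < n) {A : Fin n → Fin n → ℤ}
    (hm : IsMagog n A) (hA : A ⟨1, h1n⟩ ⟨0, hn0⟩ = 1) (i j : Fin n) :
    colP A i j = pent n (seqOf hn0 h1n hm hA) i j := by
  obtain ⟨k, hk⟩ := i
  obtain ⟨hge, hlt, hcol⟩ := seqOf_spec hn0 h1n hm hA hk
  unfold pent
  simp only [Fin.val_mk]
  by_cases h1 : (j : ℕ) < k
  · rw [if_pos (Or.inl h1)]
    exact colP_ones hn0 h1n hm hA k hk j h1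
  · by_cases h2 : (j : ℕ) = seqOf hn0 h1n hm hA k + k
    · rw [if_pos (Or.inr h2)]
      have hje : j = ⟨seqOf hn0 h1n hm hA k + k, by omega⟩ := Fin.ext (by simpa using h2)
      rw [hje]
      exact hcol
    · rw [if_neg (by push_neg; omega)]
      rcases colP_01 hm.1 ⟨k, hk⟩ j with h | h
      · exact h
      · exfalso
        have huniq := ((colP_exists_unique hn0 h1n hm hA ⟨k, hk⟩).choose_spec).2 j
          (by rw [Fin.le_def]; simp only [Fin.val_mk]; omega) h
        have hval := seqOf_choose_val hn0 h1n hm hA hk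
        rw [huniq] at h2
        exact h2 hval

lemma eq_mat_seqOf {n : ℕ} (hn0 : 0 < n) (h1n : 1 < n) {A : Fin n → Fin n → ℤ}
    (hm : IsMagog n A) (hA : A ⟨1, h1n⟩ ⟨0, hn0⟩ = 1) :
    A = mat n (seqOf hn0 h1n hm hA) := by
  funext i j
  obtain ⟨k, hk⟩ := i
  match k with
  | 0 =>
    rw [mat_zero _ rfl, ← colP_eq_pent hn0 h1n hm hA]
    unfold colP
    rw [Iic_fin_zero hn0, Finset.sum_singleton]
  | (m + 1) =>
    rw [mat_pos _ (by simp)]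
    have he : (⟨((⟨m + 1, hk⟩ : Fin n) : ℕ) - 1, by omega⟩ : Fin n) = ⟨m, by omega⟩ :=
      Fin.ext (by simp)
    rw [he, ← colP_eq_pent hn0 h1n hm hA, ← colP_eq_pent hn0 h1n hm hA,
      colP_succ A hk j]
    ring

lemma step_antitone {n : ℕ} {q : ℕ → ℕ} (hs : ∀ i, i + 1 < n → q (i + 1) ≤ q i)
    (htail : ∀ i, n ≤ i → q i = 0) : ∀ ⦃i j : ℕ⦄, i ≤ j → q j ≤ q i := by
  intro i j hij
  induction j with
  | zero =>
    rw [Nat.le_zero] at hij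
    subst hij
    exact le_rfl
  | succ m ihm =>
    rcases Nat.eq_or_lt_of_le hij with rfl | hlt
    · exact le_rfl
    · have h2 := ihm (by omega)
      rcases lt_or_ge (m + 1) n with h | h
      · exact le_trans (hs m h) h2
      · rw [htail (m + 1) h]
        exact Nat.zero_le _

lemma mat_surjective {n : ℕ} (hn0 : 0 < n) (h1n : 1 < n) (A : Fin n → Fin n → ℤ)
    (hm : IsMagog n A) (hA : A ⟨1, h1n⟩ ⟨0, hn0⟩ = 1) :
    ∃ q : ℕ → ℕ, (Stair n q ∧ 1 ≤ q 0) ∧ mat n q = A := by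
  set q := seqOf hn0 h1n hm hA with hq
  have hAe : A = mat n q := eq_mat_seqOf hn0 h1n hm hA
  have hb : ∀ i, i < n → q i + i < n := fun i hi => (seqOf_spec hn0 h1n hm hA hi).2.1
  have htail : ∀ i, n ≤ i → q i = 0 := by
    intro i hi
    simp only [hq, seqOf, dif_neg (by omega : ¬ i < n)]
  have hm' : IsMagog n (mat n q) := hAe ▸ hm
  have hA' : mat n q ⟨1, h1n⟩ ⟨0, hn0⟩ = 1 := hAe ▸ hA
  have hs := magog_antitone hb hm'
  have h0 : 1 ≤ q 0 := magog_q0 hn0 h1n hA'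
  exact ⟨q, ⟨⟨hb, step_antitone hs htail, htail⟩, h0⟩, hAe.symm⟩

end MagogAux
/-- The number of `n × n` magog matrices whose `(2,1)` entry equals `1` is the
`n`-th Catalan number minus one. -/
theorem card_magog_21 (n : ℕ) (hn : 0 < n) :
    Nat.card {A : Fin n → Fin n → ℤ //
        IsMagog n A ∧ ∃ h : 1 < n, A ⟨1, h⟩ ⟨0, hn⟩ = 1} =
      (2 * n).choose n / (n + 1) - 1 := by
  by_cases h1n : 1 < n
  · -- main case
    set T := {A : Fin n → Fin n → ℤ // IsMagog n A ∧ ∃ h : 1 < n, A ⟨1, h⟩ ⟨0, hn⟩ = 1}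
    set S := {q : ℕ → ℕ // MagogAux.Stair n q ∧ 1 ≤ q 0}
    have hG : ∃ G : S → T, Function.Bijective G := by
      refine ⟨fun x => ⟨MagogAux.mat n x.1,
        MagogAux.mat_isMagog hn x.2.1.1 (fun i hi => x.2.1.2.1 (Nat.le_succ i)),
        h1n, MagogAux.mat_entry hn h1n x.2.2⟩, ?_, ?_⟩
      · intro x y hxy
        have h1 : MagogAux.mat n x.1 = MagogAux.mat n y.1 :=
          congrArg (fun (z : T) => z.1) hxy
        exact Subtype.ext (MagogAux.mat_injective x.2.1.1 y.2.1.1 x.2.1.2.2 y.2.1.2.2 h1)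
      · rintro ⟨A, hm, h, hA⟩
        obtain ⟨q, hq, he⟩ := MagogAux.mat_surjective hn h A hm hA
        exact ⟨⟨q, hq⟩, Subtype.ext he⟩
    obtain ⟨G, hGbij⟩ := hG
    rw [← Nat.card_eq_of_bijective G hGbij, MagogAux.card_stair_pos n,
      catalan_eq_centralBinom_div, Nat.centralBinom]
  · -- n = 1
    have hn1 : n = 1 := by omega
    subst hn1
    have : IsEmpty {A : Fin 1 → Fin 1 → ℤ //
        IsMagog 1 A ∧ ∃ h : 1 < 1, A ⟨1, h⟩ ⟨0, hn⟩ = 1} := by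
      constructor
      rintro ⟨A, _, h, _⟩
      omega
    rw [Nat.card_of_isEmpty]
    decide
end

section
/- For every n ≥ 1, the number of n×n magog matrices whose (1,2) entry equals 1 is 2^(n−1) − 1. -/
namespace Magog12

open Finset

/-- rank of `j` in `S`: number of elements of `S` below `j`. -/
def rnk (S : Finset ℕ) (j : ℕ) : ℕ := (S.filter (· < j)).card

lemma rnk_lt_card {S : Finset ℕ} {m : ℕ} (hm : m ∈ S) : rnk S m < S.card := by
  apply Finset.card_lt_card
  rw [Finset.ssubset_iff_of_subset (Finset.filter_subset _ _)]
  exact ⟨m, hm, by simp⟩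

lemma rnk_lt_rnk {S : Finset ℕ} {a b : ℕ} (ha : a ∈ S) (hab : a < b) :
    rnk S a < rnk S b := by
  apply Finset.card_lt_card
  rw [Finset.ssubset_iff_of_subset]
  · exact ⟨a, by simp [ha, hab], by simp⟩
  · intro x hx
    simp only [Finset.mem_filter] at hx ⊢
    exact ⟨hx.1, by omega⟩

lemma rnk_inj {S : Finset ℕ} {a b : ℕ} (ha : a ∈ S) (hb : b ∈ S)
    (h : rnk S a = rnk S b) : a = b := by
  rcases lt_trichotomy a b with h' | h' | h'
  · exact absurd h (by have := rnk_lt_rnk ha h'; omega)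
  · exact h'
  · exact absurd h (by have := rnk_lt_rnk hb h'; omega)

lemma rnk_surj {S : Finset ℕ} {t : ℕ} (ht : t < S.card) : ∃ m ∈ S, rnk S m = t := by
  have := Finset.surj_on_of_inj_on_of_card_le (s := S) (t := Finset.range S.card)
    (f := fun a _ => rnk S a) (fun a ha => Finset.mem_range.mpr (rnk_lt_card ha))
    (fun a b ha hb h => rnk_inj ha hb h) (by simp) t (Finset.mem_range.mpr ht)
  obtain ⟨m, hm, h⟩ := this
  exact ⟨m, hm, h.symm⟩

lemma rnk_bound {S : Finset ℕ} {M m : ℕ} (hS : S ⊆ Finset.Icc 1 M) (hm : m ∈ S) :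
    m + S.card ≤ M + 1 + rnk S m := by
  have h1 := Finset.card_filter_add_card_filter_not (s := S) (p := (· < m))
  have h2 : (S.filter (fun x => ¬ x < m)).card ≤ (Finset.Icc m M).card := by
    apply Finset.card_le_card
    intro x hx
    simp only [Finset.mem_filter] at hx
    have := hS hx.1
    simp only [Finset.mem_Icc] at this ⊢
    omega
  have h3 : (Finset.Icc m M).card = M + 1 - m := Nat.card_Icc _ _
  have hmM : m ∈ Finset.Icc 1 M := hS hm
  simp only [Finset.mem_Icc] at hmM
  unfold rnk
  omega

/-- The cumulative indicator: `gg n r S k j = 1` iff column `j` has a `1`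
among the first `k` rows of the matrix built from `(r, S)`. -/
def gg (n r : ℕ) (S : Finset ℕ) (k j : ℕ) : ℕ :=
  if k = 0 then 0
  else if k ≤ r then (if 1 ≤ j ∧ j ≤ k then 1 else 0)
  else if j ≤ k ∧ ¬(j ∈ S ∧ rnk S j + r + 1 = k) then 1 else 0

/-- prefix sums of `gg` in the `j` direction. -/
def PS (n r : ℕ) (S : Finset ℕ) (k J : ℕ) : ℕ := ∑ j ∈ Finset.range J, gg n r S k j

lemma gg_le_one (n r : ℕ) (S : Finset ℕ) (k j : ℕ) : gg n r S k j ≤ 1 := by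
  unfold gg; split_ifs <;> omega

lemma PS_zero (n r : ℕ) (S : Finset ℕ) (J : ℕ) : PS n r S 0 J = 0 := by
  unfold PS gg; simp

lemma PS_formA {n r k : ℕ} (S : Finset ℕ) (hk1 : 1 ≤ k) (hkr : k ≤ r) (J : ℕ) :
    PS n r S k J = min J (k+1) - 1 := by
  unfold PS
  have : ∀ j ∈ Finset.range J, gg n r S k j = if 1 ≤ j ∧ j ≤ k then 1 else 0 := by
    intro j _
    unfold gg
    rw [if_neg (by omega), if_pos hkr]
  rw [Finset.sum_congr rfl this, Finset.sum_boole, Nat.cast_id]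
  have : (Finset.range J).filter (fun j => 1 ≤ j ∧ j ≤ k) = Finset.Ico 1 (min J (k+1)) := by
    ext x; simp only [Finset.mem_filter, Finset.mem_range, Finset.mem_Ico]; omega
  rw [this]
  simp [Nat.card_Ico]

lemma PS_formB {n r k m : ℕ} {S : Finset ℕ} (hrk : r < k) (hm : m ∈ S)
    (hrnk : rnk S m + r + 1 = k) (hmk : m ≤ k) (J : ℕ) :
    PS n r S k J = min J (k+1) - (if m < J then 1 else 0) := by
  unfold PS
  have key : ∀ j, (j ∈ S ∧ rnk S j + r + 1 = k) ↔ j = m := by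
    intro j
    constructor
    · rintro ⟨hj, hj2⟩; exact rnk_inj hj hm (by omega)
    · rintro rfl; exact ⟨hm, hrnk⟩
  have : ∀ j ∈ Finset.range J, gg n r S k j = if j ≤ k ∧ ¬ j = m then 1 else 0 := by
    intro j _
    unfold gg
    rw [if_neg (by omega), if_neg (by omega)]
    congr 1
    rw [key j]
  rw [Finset.sum_congr rfl this, Finset.sum_boole, Nat.cast_id]
  have hset : (Finset.range J).filter (fun j => j ≤ k ∧ ¬ j = m) =
      (Finset.range (min J (k+1))).erase m := by
    ext x
    simp only [Finset.mem_filter, Finset.mem_range, Finset.mem_erase]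
    omega
  rw [hset]
  by_cases hmJ : m < J
  · rw [Finset.card_erase_of_mem (by simp; omega), Finset.card_range, if_pos hmJ]
  · rw [Finset.erase_eq_of_notMem (by simp; omega), Finset.card_range, if_neg hmJ]
    omega

lemma gg_top {n r k : ℕ} {S : Finset ℕ} (hk : k = r + S.card + 1) {j : ℕ} (hj : j ≤ k) :
    gg n r S k j = 1 := by
  unfold gg
  rw [if_neg (by omega), if_neg (by omega), if_pos]
  refine ⟨hj, ?_⟩
  rintro ⟨hjS, hr⟩
  have := rnk_lt_card hjS
  omega

lemma PS_top {n r k : ℕ} {S : Finset ℕ} (hk : k = r + S.card + 1) (J : ℕ) :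
    PS n r S k J = min J (k+1) := by
  unfold PS
  have : ∀ j ∈ Finset.range J, gg n r S k j = if j ≤ k then 1 else 0 := by
    intro j _
    by_cases hj : j ≤ k
    · rw [gg_top hk hj, if_pos hj]
    · rw [if_neg hj]
      unfold gg
      rw [if_neg (by omega), if_neg (by omega), if_neg (by omega)]
  rw [Finset.sum_congr rfl this, Finset.sum_boole, Nat.cast_id]
  have : (Finset.range J).filter (fun j => j ≤ k) = Finset.range (min J (k+1)) := by
    ext x; simp only [Finset.mem_filter, Finset.mem_range]; omega
  rw [this, Finset.card_range]

end Magog12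
namespace Magog12

open Finset

lemma rnk_rev {S : Finset ℕ} {a b : ℕ} (ha : a ∈ S) (hb : b ∈ S)
    (h : rnk S a < rnk S b) : a < b := by
  rcases lt_trichotomy a b with h' | h' | h'
  · exact h'
  · subst h'; omega
  · have := rnk_lt_rnk hb h'; omega

lemma gg_formB {n r k m : ℕ} {S : Finset ℕ} (hrk : r < k) (hm : m ∈ S)
    (hrnk : rnk S m + r + 1 = k) (j : ℕ) :
    gg n r S k j = if j ≤ k ∧ j ≠ m then 1 else 0 := by
  unfold gg
  rw [if_neg (by omega), if_neg (by omega)]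
  congr 1
  have key : (j ∈ S ∧ rnk S j + r + 1 = k) ↔ j = m := by
    constructor
    · rintro ⟨hj, hj2⟩; exact rnk_inj hj hm (by omega)
    · rintro rfl; exact ⟨hm, hrnk⟩
  rw [key]

lemma gg_formA {n r k : ℕ} (S : Finset ℕ) (hk1 : 1 ≤ k) (hkr : k ≤ r) (j : ℕ) :
    gg n r S k j = if 1 ≤ j ∧ j ≤ k then 1 else 0 := by
  unfold gg
  rw [if_neg (by omega), if_pos hkr]

lemma gg_insert_stable {n r k : ℕ} {Q : Finset ℕ} {m' : ℕ} (hlt : ∀ q ∈ Q, q < m')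
    (hk : k ≤ r + Q.card) (j : ℕ) : gg n r (insert m' Q) k j = gg n r Q k j := by
  have hrnkj : ∀ x, x ∈ Q → rnk (insert m' Q) x = rnk Q x := by
    intro x hx
    unfold rnk
    rw [Finset.filter_insert, if_neg (by have := hlt x hx; omega)]
  have hiff : (j ∈ insert m' Q ∧ rnk (insert m' Q) j + r + 1 = k)
      ↔ (j ∈ Q ∧ rnk Q j + r + 1 = k) := by
    constructor
    · rintro ⟨hmem, hrk⟩
      rcases Finset.mem_insert.mp hmem with rfl | hjQ
      · exfalso
        have hrm : rnk (insert j Q) j = Q.card := by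
          unfold rnk
          rw [Finset.filter_insert, if_neg (lt_irrefl j), Finset.filter_true_of_mem hlt]
        omega
      · exact ⟨hjQ, by rw [← hrnkj j hjQ]; exact hrk⟩
    · rintro ⟨hjQ, hrk⟩
      exact ⟨Finset.mem_insert_of_mem hjQ, by rw [hrnkj j hjQ]; exact hrk⟩
  unfold gg
  by_cases hk0 : k = 0
  · simp [hk0]
  · by_cases hkr : k ≤ r
    · simp [hk0, hkr]
    · simp only [if_neg hk0, if_neg hkr, hiff]

lemma exists_mt {S : Finset ℕ} {M r k : ℕ} (hS : S ⊆ Finset.Icc 1 M)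
    (hrM : r + S.card = M) (hrk : r < k) (hkM : k ≤ M) :
    ∃ m ∈ S, rnk S m + r + 1 = k ∧ 1 ≤ m ∧ m ≤ k := by
  obtain ⟨m, hm, hr⟩ := rnk_surj (S := S) (t := k - r - 1) (by omega)
  have hb := rnk_bound hS hm
  have h1 : m ∈ Finset.Icc 1 M := hS hm
  simp only [Finset.mem_Icc] at h1
  exact ⟨m, hm, by omega, by omega, by omega⟩

lemma PS_rowsum {n M r k : ℕ} {S : Finset ℕ} (hS : S ⊆ Finset.Icc 1 M)
    (hrM : r + S.card = M) (hr : 1 ≤ r) (hMn : M < n) (hk : k ≤ M) :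
    PS n r S k n = k := by
  rcases Nat.eq_zero_or_pos k with rfl | hk0
  · exact PS_zero n r S n
  by_cases hkr : k ≤ r
  · rw [PS_formA S hk0 hkr]; omega
  · obtain ⟨m, hm, hrn, hm1, hmk⟩ := exists_mt hS hrM (by omega) hk
    rw [PS_formB (by omega) hm hrn hmk]
    rw [if_pos (by omega)]
    omega

lemma PS_rowsum_top {n r : ℕ} {S : Finset ℕ} (hn2 : r + S.card + 1 = n) :
    PS n r S n n = n := by
  rw [PS_top (by omega)]; omega

lemma PS_mono {n r k : ℕ} {S : Finset ℕ} (hS : S ⊆ Finset.Icc 1 (n-1))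
    (hrM : r + S.card = n-1) (hr : 1 ≤ r) (hn : 2 ≤ n) (hk : k < n) (J : ℕ) :
    PS n r S k J ≤ PS n r S (k+1) J := by
  rcases Nat.eq_zero_or_pos k with rfl | hk0
  · rw [PS_zero]; exact Nat.zero_le _
  by_cases hk1r : k + 1 ≤ r
  · rw [PS_formA S hk0 (by omega), PS_formA S (by omega) hk1r]; omega
  by_cases hkr : k ≤ r
  · rw [PS_formA S hk0 hkr]
    by_cases htop : k + 1 = n
    · rw [PS_top (by omega)]; omega
    · obtain ⟨m, hm, hrn, hm1, hmk⟩ := exists_mt hS hrM (k := k+1) (by omega) (by omega)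
      rw [PS_formB (by omega) hm hrn hmk]
      split_ifs <;> omega
  · obtain ⟨m, hm, hrn, hm1, hmk⟩ := exists_mt hS hrM (k := k) (by omega) (by omega)
    rw [PS_formB (by omega) hm hrn hmk]
    by_cases htop : k + 1 = n
    · rw [PS_top (by omega)]; split_ifs <;> omega
    · obtain ⟨m', hm', hrn', hm1', hmk'⟩ := exists_mt hS hrM (k := k+1) (by omega) (by omega)
      have hmm : m < m' := rnk_rev hm hm' (by omega)
      rw [PS_formB (by omega) hm' hrn' hmk']
      split_ifs <;> omega

lemma PS_magog {n r k j : ℕ} {S : Finset ℕ} (hS : S ⊆ Finset.Icc 1 (n-1))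
    (hrM : r + S.card = n-1) (hr : 1 ≤ r) (hk1 : 1 ≤ k) (hk : k + 2 ≤ n)
    (hj : j + 3 ≤ n) :
    PS n r S k (j+1) + gg n r S k j ≤ PS n r S (k+1) (j+2) := by
  by_cases hk1r : k + 1 ≤ r
  · rw [PS_formA S hk1 (by omega), PS_formA S (by omega) hk1r]
    unfold gg
    rw [if_neg (by omega), if_pos (by omega)]
    split_ifs <;> omega
  by_cases hkr : k ≤ r
  · obtain ⟨m, hm, hrn, hm1, hmk⟩ := exists_mt hS hrM (k := k+1) (by omega) (by omega)
    rw [PS_formA S hk1 hkr, PS_formB (by omega) hm hrn hmk]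
    unfold gg
    rw [if_neg (by omega), if_pos hkr]
    split_ifs <;> omega
  · obtain ⟨m, hm, hrn, hm1, hmk⟩ := exists_mt hS hrM (k := k) (by omega) (by omega)
    obtain ⟨m', hm', hrn', hm1', hmk'⟩ := exists_mt hS hrM (k := k+1) (by omega) (by omega)
    have hmm : m < m' := rnk_rev hm hm' (by omega)
    rw [PS_formB (by omega) hm hrn hmk, PS_formB (by omega) hm' hrn' hmk',
      gg_formB (by omega) hm hrn]
    split_ifs <;> omega

end Magog12
namespace Magog12

open Finset

lemma sum_range_ite (g : ℕ → ℤ) {a b : ℕ} (hab : a ≤ b) :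
    ∑ k ∈ Finset.range b, (if k < a then g k else 0) = ∑ k ∈ Finset.range a, g k := by
  rw [← Finset.sum_subset (Finset.range_subset_range.mpr hab)
    (fun x _ hx => if_neg (by simp only [Finset.mem_range] at hx; omega))]
  exact Finset.sum_congr rfl fun x hx => if_pos (Finset.mem_range.mp hx)

lemma sum_Iic_fin {n : ℕ} (i : Fin n) (g : ℕ → ℤ) :
    ∑ x ∈ Finset.Iic i, g x.1 = ∑ k ∈ Finset.range (i.1+1), g k := by
  have h1 : Finset.Iic i = Finset.univ.filter (fun x : Fin n => x.1 < i.1+1) := by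
    ext x
    simp only [Finset.mem_Iic, Finset.mem_filter, Finset.mem_univ, true_and, Fin.le_def]
    omega
  rw [h1, Finset.sum_filter, Fin.sum_univ_eq_sum_range (fun k => if k < i.1+1 then g k else 0) n]
  exact sum_range_ite g i.2

/-- the magog matrix built from a proper subset `S` of `Icc 1 (n-1)`. -/
def bld (n : ℕ) (S : Finset ℕ) : Fin n → Fin n → ℤ :=
  fun i j => (gg n (n-1-S.card) S (i.1+1) j.1 : ℤ) - (gg n (n-1-S.card) S i.1 j.1 : ℤ)

section Bld

variable {n : ℕ} {S : Finset ℕ} (hS : S ⊆ Finset.Icc 1 (n-1)) (hc : S.card + 2 ≤ n)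

lemma gg_zero (n r : ℕ) (S : Finset ℕ) (j : ℕ) : gg n r S 0 j = 0 := rfl

lemma bld_col_partial (i j : Fin n) :
    ∑ x ∈ Finset.Iic i, bld n S x j = (gg n (n-1-S.card) S (i.1+1) j.1 : ℤ) := by
  refine (sum_Iic_fin i
    (fun k => (gg n (n-1-S.card) S (k+1) j.1 : ℤ) - (gg n (n-1-S.card) S k j.1 : ℤ))).trans ?_
  rw [Finset.sum_range_sub (fun k => (gg n (n-1-S.card) S k j.1 : ℤ))]
  simp [gg_zero]

lemma bld_row_partial (i j : Fin n) :
    ∑ x ∈ Finset.Iic j, bld n S i x =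
      (PS n (n-1-S.card) S (i.1+1) (j.1+1) : ℤ) - (PS n (n-1-S.card) S i.1 (j.1+1) : ℤ) := by
  refine (sum_Iic_fin j
    (fun J => (gg n (n-1-S.card) S (i.1+1) J : ℤ) - (gg n (n-1-S.card) S i.1 J : ℤ))).trans ?_
  rw [Finset.sum_sub_distrib]
  unfold PS
  push_cast
  ring

include hS hc in
lemma bld_isMagog (hn : 2 ≤ n) : IsMagog n (bld n S) := by
  have hrM' : (n-1-S.card) + S.card = n - 1 := by omega
  have hr' : 1 ≤ n-1-S.card := by omega
  constructor
  · refine ⟨?_, ?_, ?_, ?_, ?_⟩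
    · -- entries
      intro i j
      have h1 := gg_le_one n (n-1-S.card) S (i.1+1) j.1
      have h2 := gg_le_one n (n-1-S.card) S i.1 j.1
      unfold bld
      omega
    · -- column sums
      intro j
      refine (Fin.sum_univ_eq_sum_range
        (fun k => (gg n (n-1-S.card) S (k+1) j.1 : ℤ) - (gg n (n-1-S.card) S k j.1 : ℤ)) n).trans ?_
      rw [Finset.sum_range_sub (fun k => (gg n (n-1-S.card) S k j.1 : ℤ)), gg_zero,
        gg_top (by omega) (by omega : j.1 ≤ n)]
      simp
    · -- row sums
      intro i
      refine (Fin.sum_univ_eq_sum_range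
        (fun J => (gg n (n-1-S.card) S (i.1+1) J : ℤ) - (gg n (n-1-S.card) S i.1 J : ℤ)) n).trans ?_
      rw [Finset.sum_sub_distrib]
      have e1 : ∑ J ∈ Finset.range n, (gg n (n-1-S.card) S (i.1+1) J : ℤ)
          = (PS n (n-1-S.card) S (i.1+1) n : ℤ) := by unfold PS; push_cast; rfl
      have e2 : ∑ J ∈ Finset.range n, (gg n (n-1-S.card) S i.1 J : ℤ)
          = (PS n (n-1-S.card) S i.1 n : ℤ) := by unfold PS; push_cast; rfl
      rw [e1, e2]
      have hi2 : PS n (n-1-S.card) S i.1 n = i.1 := PS_rowsum hS hrM' hr' (by omega) (by omega)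
      rw [hi2]
      by_cases hin : i.1 + 1 ≤ n - 1
      · rw [PS_rowsum hS hrM' hr' (by omega) hin]
        push_cast
        ring
      · have hieq : i.1 + 1 = n := by omega
        rw [hieq, PS_rowsum_top (by omega)]
        have : i.1 = n - 1 := by omega
        rw [this]
        push_cast
        omega
    · -- column partial sums
      intro i j
      rw [bld_col_partial]
      have := gg_le_one n (n-1-S.card) S (i.1+1) j.1
      omega
    · -- row partial sums
      intro i j
      rw [bld_row_partial]
      have := PS_mono hS hrM' hr' hn (k := i.1) (by omega) (j.1+1)
      omega
  · -- magog inequalities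
    intro i j hi hj
    rw [bld_row_partial, bld_col_partial, bld_col_partial]
    simp only
    have h1 := PS_magog hS hrM' hr' (k := i+1) (j := j) (by omega) (by omega) (by omega)
    have h2 : PS n (n-1-S.card) S (i+1+1) (j+2)
        = PS n (n-1-S.card) S (i+1+1) (j+1) + gg n (n-1-S.card) S (i+1+1) (j+1) := by
      unfold PS; rw [Finset.sum_range_succ]
    omega

include hc in
lemma bld_entry01 (h1n : 1 < n) : bld n S ⟨0, by omega⟩ ⟨1, h1n⟩ = 1 := by
  have h1 : gg n (n-1-S.card) S 1 1 = 1 := by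
    unfold gg
    rw [if_neg (by omega), if_pos (by omega), if_pos (by omega)]
  show (gg n (n-1-S.card) S (0+1) 1 : ℤ) - (gg n (n-1-S.card) S 0 1 : ℤ) = 1
  rw [gg_zero]
  norm_num [h1]

end Bld

end Magog12
namespace Magog12

open Finset

lemma gg_of_bld_eq {n : ℕ} {S1 S2 : Finset ℕ} (h : bld n S1 = bld n S2) :
    ∀ k, k ≤ n → ∀ j, j < n → gg n (n-1-S1.card) S1 k j = gg n (n-1-S2.card) S2 k j := by
  intro k
  induction k with
  | zero => intro _ j _; rw [gg_zero, gg_zero]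
  | succ k ih =>
    intro hk j hj
    have hk' : k < n := by omega
    have hb := congrFun (congrFun h ⟨k, hk'⟩) ⟨j, hj⟩
    unfold bld at hb
    simp only at hb
    have := ih (by omega) j hj
    omega

lemma mem_iff_recover {n : ℕ} {S : Finset ℕ} (hS : S ⊆ Finset.Icc 1 (n-1))
    (hc : S.card + 2 ≤ n) (m : ℕ) :
    m ∈ S ↔ (1 ≤ m ∧ m ≤ n-1 ∧
      ∃ k, 1 ≤ k ∧ k ≤ n-1 ∧ m ≤ k ∧ gg n (n-1-S.card) S k m = 0) := by
  constructor
  · intro hm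
    have hmIcc := hS hm
    simp only [Finset.mem_Icc] at hmIcc
    have ht : rnk S m < S.card := rnk_lt_card hm
    have hbd := rnk_bound hS hm
    refine ⟨hmIcc.1, hmIcc.2, (n-1-S.card)+1+(rnk S m), by omega, by omega, by omega, ?_⟩
    unfold gg
    rw [if_neg (by omega), if_neg (by omega), if_neg (by push_neg; exact fun _ => ⟨hm, by omega⟩)]
  · rintro ⟨hm1, hmn, k, hk1, hkn, hmk, hgg⟩
    by_cases hkr : k ≤ n-1-S.card
    · exfalso
      unfold gg at hgg
      rw [if_neg (by omega), if_pos hkr, if_pos (by omega)] at hgg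
      omega
    · unfold gg at hgg
      rw [if_neg (by omega), if_neg hkr] at hgg
      by_cases hcond : m ∈ S ∧ rnk S m + (n-1-S.card) + 1 = k
      · exact hcond.1
      · rw [if_pos ⟨hmk, hcond⟩] at hgg
        omega

lemma bld_inj {n : ℕ} {S1 S2 : Finset ℕ} (hS1 : S1 ⊆ Finset.Icc 1 (n-1))
    (hc1 : S1.card + 2 ≤ n) (hS2 : S2 ⊆ Finset.Icc 1 (n-1)) (hc2 : S2.card + 2 ≤ n)
    (h : bld n S1 = bld n S2) : S1 = S2 := by
  ext m
  rw [mem_iff_recover hS1 hc1 m, mem_iff_recover hS2 hc2 m]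
  have hgg := gg_of_bld_eq h
  constructor
  · rintro ⟨h1, h2, k, hk1, hk2, hk3, hk4⟩
    exact ⟨h1, h2, k, hk1, hk2, hk3, by rw [← hgg k (by omega) m (by omega)]; exact hk4⟩
  · rintro ⟨h1, h2, k, hk1, hk2, hk3, hk4⟩
    exact ⟨h1, h2, k, hk1, hk2, hk3, by rw [hgg k (by omega) m (by omega)]; exact hk4⟩

end Magog12
namespace Magog12

open Finset

lemma tail_zero {f : ℕ → ℤ} {n J : ℕ} (h01 : ∀ j, j < n → f j = 0 ∨ f j = 1)
    (hJ : J ≤ n) (hsum : ∑ j ∈ Finset.range n, f j ≤ ∑ j ∈ Finset.range J, f j) :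
    ∀ j, J ≤ j → j < n → f j = 0 := by
  have hsplit : ∑ j ∈ Finset.range J, f j + ∑ j ∈ Finset.Ico J n, f j
      = ∑ j ∈ Finset.range n, f j := by
    rw [Finset.range_eq_Ico, Finset.range_eq_Ico]
    exact Finset.sum_Ico_consecutive f (Nat.zero_le J) hJ
  have hnn : ∀ x ∈ Finset.Ico J n, 0 ≤ f x := by
    intro x hx
    rcases h01 x (Finset.mem_Ico.mp hx).2 with h | h <;> omega
  have hz : ∑ j ∈ Finset.Ico J n, f j = 0 :=
    le_antisymm (by omega) (Finset.sum_nonneg hnn)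
  intro j hJj hjn
  exact (Finset.sum_eq_zero_iff_of_nonneg hnn).mp hz j (Finset.mem_Ico.mpr ⟨hJj, hjn⟩)

lemma head_one {f : ℕ → ℤ} {n J : ℕ} (h01 : ∀ j, j < n → f j = 0 ∨ f j = 1)
    (hJ : J ≤ n) (hsum : (J : ℤ) ≤ ∑ j ∈ Finset.range J, f j) :
    ∀ j, j < J → f j = 1 := by
  intro j hj
  by_contra hne
  have hlt : ∑ x ∈ Finset.range J, f x < ∑ x ∈ Finset.range J, (1 : ℤ) := by
    apply Finset.sum_lt_sum (f := f) (g := fun _ => (1:ℤ))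
    · intro x hx
      rcases h01 x (by have := Finset.mem_range.mp hx; omega) with h | h <;> omega
    · refine ⟨j, Finset.mem_range.mpr hj, ?_⟩
      rcases h01 j (by omega) with h | h
      · omega
      · exact absurd h hne
  rw [Finset.sum_const, Finset.card_range] at hlt
  simp only [nsmul_eq_mul, mul_one] at hlt
  omega

section Surj

variable {n : ℕ} (A : Fin n → Fin n → ℤ)

/-- `A` extended to `ℕ × ℕ` by zero. -/
def Ap (k j : ℕ) : ℤ := if h : k < n ∧ j < n then A ⟨k, h.1⟩ ⟨j, h.2⟩ else 0

/-- partial column sums of `A` over the first `k` rows. -/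
def Fn (k j : ℕ) : ℤ := ∑ x ∈ Finset.range k, Ap A x j

lemma Fn_zero (j : ℕ) : Fn A 0 j = 0 := by simp [Fn]

lemma Fn_succ (k j : ℕ) : Fn A (k+1) j = Fn A k j + Ap A k j :=
  Finset.sum_range_succ _ _

lemma Ap_eq (i j : Fin n) : Ap A i.1 j.1 = A i j := dif_pos ⟨i.2, j.2⟩

lemma sum_Iic_A_row (i j : ℕ) (hi : i < n) (hj : j < n) :
    ∑ j' ∈ Finset.Iic (⟨j, hj⟩ : Fin n), A ⟨i, hi⟩ j'
      = ∑ x ∈ Finset.range (j+1), Ap A i x := by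
  have h := (Finset.sum_congr rfl fun (x : Fin n) _ =>
      (Ap_eq A ⟨i, hi⟩ x).symm).trans
    (sum_Iic_fin (⟨j, hj⟩ : Fin n) (fun J => Ap A i J))
  exact h

lemma sum_Iic_A_col (i j : ℕ) (hi : i < n) (hj : j < n) :
    ∑ x ∈ Finset.Iic (⟨i, hi⟩ : Fin n), A x ⟨j, hj⟩
      = Fn A (i+1) j := by
  have h := (Finset.sum_congr rfl fun (x : Fin n) _ =>
      (Ap_eq A x ⟨j, hj⟩).symm).trans
    (sum_Iic_fin (⟨i, hi⟩ : Fin n) (fun k => Ap A k j))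
  exact h

lemma exists_bld (hn : 2 ≤ n) (hA : IsMagog n A)
    (h01 : A ⟨0, by omega⟩ ⟨1, by omega⟩ = 1) :
    ∃ S : Finset ℕ, S ⊆ Finset.Icc 1 (n-1) ∧ S.card + 2 ≤ n ∧ bld n S = A := by
  obtain ⟨⟨hent, hcol, hrow, hcp, hrp⟩, hmag⟩ := hA
  -- partial column sums are 0 or 1
  have hFn01 : ∀ k j, 1 ≤ k → k ≤ n → j < n → Fn A k j = 0 ∨ Fn A k j = 1 := by
    intro k j hk1 hk hj
    have h := hcp ⟨k-1, by omega⟩ ⟨j, hj⟩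
    rw [sum_Iic_A_col A (k-1) j (by omega) hj] at h
    rw [show k - 1 + 1 = k by omega] at h
    omega
  -- full column sums are 1
  have hFtop : ∀ j, j < n → Fn A n j = 1 := by
    intro j hj
    have h1 : Fn A n j = ∑ i : Fin n, Ap A i.1 j :=
      (Fin.sum_univ_eq_sum_range (fun k => Ap A k j) n).symm
    rw [h1, Finset.sum_congr rfl fun (i : Fin n) _ => Ap_eq A i ⟨j, hj⟩]
    exact hcol ⟨j, hj⟩
  -- row sums
  have hrowAp : ∀ k, k < n → ∑ j ∈ Finset.range n, Ap A k j = 1 := by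
    intro k hk
    have h1 : ∑ j ∈ Finset.range n, Ap A k j = ∑ j : Fin n, Ap A k j.1 :=
      (Fin.sum_univ_eq_sum_range (fun J => Ap A k J) n).symm
    rw [h1, Finset.sum_congr rfl fun (j : Fin n) _ => Ap_eq A ⟨k, hk⟩ j]
    exact hrow ⟨k, hk⟩
  have hFnrow : ∀ k, k ≤ n → ∑ j ∈ Finset.range n, Fn A k j = (k : ℤ) := by
    intro k
    induction k with
    | zero => intro _; simp [Fn_zero]
    | succ k ih =>
      intro hk
      have e : ∀ j, Fn A (k+1) j = Fn A k j + Ap A k j := fun j => Fn_succ A k j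
      rw [Finset.sum_congr rfl fun j _ => e j, Finset.sum_add_distrib,
        ih (by omega), hrowAp k (by omega)]
      push_cast
      ring
  -- magog inequalities in Fn language
  have hmagF : ∀ i j, i+2 < n → j+2 < n →
      ∑ x ∈ Finset.range (j+1), Fn A (i+1) x + Fn A (i+1) j
        ≤ ∑ x ∈ Finset.range (j+2), Fn A (i+2) x := by
    intro i j hi hj
    have h := hmag i j hi hj
    rw [sum_Iic_A_row A (i+1) j (by omega) (by omega),
      sum_Iic_A_col A (i+1) (j+1) (by omega) (by omega),
      sum_Iic_A_col A i j (by omega) (by omega)] at h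
    have hsplit : ∑ x ∈ Finset.range (j+1), Ap A (i+1) x
        = ∑ x ∈ Finset.range (j+1), Fn A (i+2) x
          - ∑ x ∈ Finset.range (j+1), Fn A (i+1) x := by
      rw [← Finset.sum_sub_distrib]
      exact Finset.sum_congr rfl fun x _ => by
        rw [show (i+2) = (i+1)+1 from rfl, Fn_succ]; ring
    rw [hsplit] at h
    have hss : ∑ x ∈ Finset.range (j+2), Fn A (i+2) x
        = ∑ x ∈ Finset.range (j+1), Fn A (i+2) x + Fn A (i+2) (j+1) :=
      Finset.sum_range_succ _ _
    have hbr : Fn A (i+1+1) (j+1) = Fn A (i+2) (j+1) := rfl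
    omega
  -- the main classification induction
  have main : ∀ i, i ≤ n-2 → ∃ r Q, 1 ≤ r ∧ Q ⊆ Finset.Icc 1 (i+1) ∧
      r + Q.card = i+1 ∧
      ∀ k, k ≤ i+1 → ∀ j, j < n → Fn A k j = (gg n r Q k j : ℤ) := by
    intro i
    induction i with
    | zero =>
      intro _
      refine ⟨1, ∅, le_refl 1, by simp, by simp, ?_⟩
      intro k hk j hj
      interval_cases k
      · rw [Fn_zero, gg_zero]; rfl
      · have h1 : Fn A 1 1 = 1 := by
          have : Fn A 1 1 = Ap A 0 1 := by rw [show (1:ℕ) = 0 + 1 from rfl, Fn_succ, Fn_zero]; ring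
          rw [this, Ap_eq A ⟨0, by omega⟩ ⟨1, by omega⟩]
          exact h01
        by_cases hj1 : j = 1
        · subst hj1
          rw [h1, gg_formA ∅ (le_refl 1) (le_refl 1)]
          norm_num
        · have hsum := hFnrow 1 (by omega)
          have hmem1 : (1 : ℕ) ∈ Finset.range n := Finset.mem_range.mpr (by omega)
          rw [← Finset.add_sum_erase _ _ hmem1, h1] at hsum
          have hnn : ∀ x ∈ (Finset.range n).erase 1, 0 ≤ Fn A 1 x := by
            intro x hx
            have hxn : x < n := Finset.mem_range.mp (Finset.mem_of_mem_erase hx)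
            rcases hFn01 1 x (le_refl 1) (by omega) hxn with h | h <;> omega
          have hz : Fn A 1 j = 0 := by
            refine (Finset.sum_eq_zero_iff_of_nonneg hnn).mp (by omega) j ?_
            exact Finset.mem_erase.mpr ⟨hj1, Finset.mem_range.mpr hj⟩
          rw [hz, gg_formA ∅ (le_refl 1) (le_refl 1), if_neg (by omega)]
          rfl
    | succ i ih =>
      intro hi2
      obtain ⟨r, Q, hr, hQsub, hQcard, hFgg⟩ := ih (by omega)
      have hQbd : ∀ q ∈ Q, 1 ≤ q ∧ q ≤ i+1 := by
        intro q hq; have := hQsub hq; simp only [Finset.mem_Icc] at this; exact this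
      -- facts about row i+2
      have h01' : ∀ j, j < n → Fn A (i+2) j = 0 ∨ Fn A (i+2) j = 1 :=
        fun j hj => hFn01 (i+2) j (by omega) (by omega) hj
      have hsum2 : ∑ j ∈ Finset.range n, Fn A (i+2) j = ((i:ℤ)+2) := by
        have := hFnrow (i+2) (by omega); push_cast at this ⊢; omega
      set T' := (Finset.range n).filter (fun j => Fn A (i+2) j = 1) with hT'def
      have hT'mem : ∀ j, j ∈ T' ↔ (j < n ∧ Fn A (i+2) j = 1) := by
        intro j; simp [hT'def]
      have hT'card : T'.card = i+2 := by
        have he : ∀ j ∈ Finset.range n, Fn A (i+2) j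
            = if Fn A (i+2) j = 1 then (1:ℤ) else 0 := by
          intro j hj
          rcases h01' j (Finset.mem_range.mp hj) with h | h <;> simp [h]
        rw [Finset.sum_congr rfl he, Finset.sum_boole] at hsum2
        have : (T'.card : ℤ) = (i:ℤ)+2 := hsum2
        omega
      -- a generic final-step helper
      have build : ∀ m', m' < i+3 →
          (∀ j, j < n → Fn A (i+2) j = if j ≤ i+2 ∧ j ≠ m' then 1 else 0) →
          (∀ r' Q', 1 ≤ r' → Q' ⊆ Finset.Icc 1 (i+2) → r' + Q'.card = i+2 →
            (∀ k, k ≤ i+1 → ∀ j, j < n → (gg n r' Q' k j : ℤ) = (gg n r Q k j : ℤ)) →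
            (∀ j, j < n → (gg n r' Q' (i+2) j : ℤ)
                = if j ≤ i+2 ∧ j ≠ m' then 1 else 0) →
          ∃ r'' Q'', 1 ≤ r'' ∧ Q'' ⊆ Finset.Icc 1 (i+1+1) ∧ r'' + Q''.card = i+1+1 ∧
            ∀ k, k ≤ i+1+1 → ∀ j, j < n → Fn A k j = (gg n r'' Q'' k j : ℤ)) := by
        intro m' _ hshape r' Q' hr' hQ'sub hQ'card hlow hhi
        refine ⟨r', Q', hr', hQ'sub, hQ'card, ?_⟩
        intro k hk j hj
        by_cases hki : k ≤ i+1
        · rw [hFgg k hki j hj, hlow k hki j hj]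
        · have hk2 : k = i+2 := by omega
          subst hk2
          rw [hshape j hj, hhi j hj]
      -- extraction of the unique missing entry
      have extract : (∀ j, i+3 ≤ j → j < n → Fn A (i+2) j = 0) →
          ∃ m', m' < i+3 ∧
            (∀ j, j < n → Fn A (i+2) j = if j ≤ i+2 ∧ j ≠ m' then 1 else 0) := by
        intro htail
        have hT'sub : T' ⊆ Finset.range (i+3) := by
          intro j hjT
          have hj := (hT'mem j).mp hjT
          refine Finset.mem_range.mpr ?_
          by_contra hge
          push_neg at hge
          have := htail j (by omega) hj.1
          omega
        have hsd : ((Finset.range (i+3)) \ T').card = 1 := by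
          rw [Finset.card_sdiff_of_subset hT'sub, Finset.card_range, hT'card]
          omega
        obtain ⟨m', hm'⟩ := Finset.card_eq_one.mp hsd
        have hT'eq : T' = Finset.range (i+3) \ {m'} := by
          rw [← hm']
          exact (Finset.sdiff_sdiff_eq_self hT'sub).symm
        have hm'lt : m' < i+3 := by
          have hmem : m' ∈ Finset.range (i+3) \ T' := by
            rw [hm']; exact Finset.mem_singleton_self m'
          exact Finset.mem_range.mp (Finset.mem_sdiff.mp hmem).1
        refine ⟨m', hm'lt, ?_⟩
        intro j hj
        by_cases hc : j ≤ i+2 ∧ j ≠ m'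
        · rw [if_pos hc]
          have hmemT : j ∈ T' := by
            rw [hT'eq]
            simp only [Finset.mem_sdiff, Finset.mem_range, Finset.mem_singleton]
            exact ⟨by omega, hc.2⟩
          exact ((hT'mem j).mp hmemT).2
        · rw [if_neg hc]
          have hnot : j ∉ T' := by
            rw [hT'eq]
            simp only [Finset.mem_sdiff, Finset.mem_range, Finset.mem_singleton]
            push_neg
            intro hjlt
            by_contra hne
            exact hc ⟨by omega, hne⟩
          rcases h01' j hj with h | h
          · exact h
          · exact absurd ((hT'mem j).mpr ⟨hj, h⟩) hnot
      by_cases hQe : Q = ∅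
      · -- previous row was of form A
        subst hQe
        have hre : r = i+1 := by simpa using hQcard
        have htail : ∀ j, i+3 ≤ j → j < n → Fn A (i+2) j = 0 := by
          by_cases hcase : i+1 = n-2
          · intro j hj1 hj2
            exact absurd hj2 (by omega)
          · have hm := hmagF i (i+1) (by omega) (by omega)
            have hm' : ∑ x ∈ Finset.range (i+2), Fn A (i+1) x + Fn A (i+1) (i+1)
                ≤ ∑ x ∈ Finset.range (i+3), Fn A (i+2) x := hm
            have e1 : ∑ x ∈ Finset.range (i+2), Fn A (i+1) x = ((i:ℤ)+1) := by
              rw [Finset.sum_congr rfl (fun x hx => hFgg (i+1) (le_refl _) x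
                (by have := Finset.mem_range.mp hx; omega))]
              have hps : ∑ x ∈ Finset.range (i+2), (gg n r ∅ (i+1) x : ℤ)
                  = (PS n r ∅ (i+1) (i+2) : ℤ) := by unfold PS; push_cast; rfl
              rw [hps, PS_formA ∅ (by omega) (by omega)]
              push_cast
              omega
            have e2 : Fn A (i+1) (i+1) = 1 := by
              rw [hFgg (i+1) (le_refl _) (i+1) (by omega),
                gg_formA ∅ (by omega) (by omega), if_pos (by omega)]
              norm_num
            intro j hj1 hj2
            refine tail_zero h01' (show i+3 ≤ n by omega) (by omega) j hj1 hj2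
        obtain ⟨m', hm'lt, hshape⟩ := extract htail
        by_cases hm'0 : m' = 0
        · subst hm'0
          refine build 0 (by omega) hshape (i+2) ∅ (by omega) (by simp) (by simp) ?_ ?_
          · intro k hk j hj
            rcases Nat.eq_zero_or_pos k with rfl | hk0
            · rw [gg_zero, gg_zero]
            · rw [gg_formA ∅ hk0 (by omega), gg_formA ∅ hk0 (by omega)]
          · intro j hj
            rw [gg_formA ∅ (by omega) (le_refl _)]
            split_ifs <;> push_cast <;> omega
        · refine build m' hm'lt hshape r {m'} hr ?_ ?_ ?_ ?_
          · intro x hx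
            rw [Finset.mem_singleton] at hx
            subst hx
            simp only [Finset.mem_Icc]
            omega
          · simp
            omega
          · intro k hk j hj
            rcases Nat.eq_zero_or_pos k with rfl | hk0
            · rw [gg_zero, gg_zero]
            · rw [gg_formA {m'} hk0 (by omega), gg_formA ∅ hk0 (by omega)]
          · intro j hj
            have hrnkm : rnk {m'} m' + r + 1 = i+2 := by
              have : rnk {m'} m' = 0 := by
                unfold rnk
                rw [Finset.filter_singleton, if_neg (lt_irrefl m')]
                simp
              omega
            rw [gg_formB (by omega) (Finset.mem_singleton_self m') hrnkm]
            split_ifs <;> push_cast <;> omega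
      · -- previous row was of form B
        have hQpos : 1 ≤ Q.card := Finset.card_pos.mpr (Finset.nonempty_iff_ne_empty.mpr hQe)
        obtain ⟨a, haQ, harnk, ha1, hale⟩ :=
          exists_mt (M := i+1) (r := r) (k := i+1) hQsub (by omega) (by omega) (le_refl _)
        have hamax : ∀ q ∈ Q, q ≤ a := by
          intro q hq
          by_contra hgt
          push_neg at hgt
          have h1 := rnk_lt_rnk haQ hgt
          have h2 := rnk_lt_card hq
          omega
        have hm1 := hmagF i (a-1) (by omega) (by omega)
        have e1 : ∑ x ∈ Finset.range (a-1+1), Fn A (i+1) x = (a:ℤ) := by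
          rw [Finset.sum_congr rfl (fun x hx => hFgg (i+1) (le_refl _) x
            (by have := Finset.mem_range.mp hx; omega))]
          have hps : ∑ x ∈ Finset.range (a-1+1), (gg n r Q (i+1) x : ℤ)
              = (PS n r Q (i+1) (a-1+1) : ℤ) := by unfold PS; push_cast; rfl
          rw [hps, PS_formB (by omega) haQ harnk (by omega), if_neg (by omega)]
          push_cast
          omega
        have e2 : Fn A (i+1) (a-1) = 1 := by
          rw [hFgg (i+1) (le_refl _) (a-1) (by omega),
            gg_formB (by omega) haQ harnk, if_pos (by omega)]
          norm_num
        have hhead : ∀ j, j < a+1 → Fn A (i+2) j = 1 := by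
          refine head_one h01' (by omega) ?_
          have hb : ∑ x ∈ Finset.range (a-1+2), Fn A (i+2) x
              = ∑ x ∈ Finset.range (a+1), Fn A (i+2) x := by
            rw [show a-1+2 = a+1 by omega]
          push_cast
          omega
        have htail : ∀ j, i+3 ≤ j → j < n → Fn A (i+2) j = 0 := by
          by_cases hcase : i+1 = n-2
          · intro j hj1 hj2
            exact absurd hj2 (by omega)
          · by_cases haeq : a = i+1
            · have hful : ∑ x ∈ Finset.range (i+2), Fn A (i+2) x = ((i:ℤ)+2) := by
                rw [Finset.sum_congr rfl (fun x hx => hhead x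
                  (by have := Finset.mem_range.mp hx; omega))]
                rw [Finset.sum_const, Finset.card_range]
                push_cast
                ring
              intro j hj1 hj2
              refine tail_zero h01' (show i+2 ≤ n by omega) (by omega) j (by omega) hj2
            · have hm := hmagF i (i+1) (by omega) (by omega)
              have hm' : ∑ x ∈ Finset.range (i+2), Fn A (i+1) x + Fn A (i+1) (i+1)
                  ≤ ∑ x ∈ Finset.range (i+3), Fn A (i+2) x := hm
              have e3 : ∑ x ∈ Finset.range (i+2), Fn A (i+1) x = (i:ℤ)+1 := by
                rw [Finset.sum_congr rfl (fun x hx => hFgg (i+1) (le_refl _) x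
                  (by have := Finset.mem_range.mp hx; omega))]
                have hps : ∑ x ∈ Finset.range (i+2), (gg n r Q (i+1) x : ℤ)
                    = (PS n r Q (i+1) (i+2) : ℤ) := by unfold PS; push_cast; rfl
                rw [hps, PS_formB (by omega) haQ harnk (by omega), if_pos (by omega)]
                push_cast
                omega
              have e4 : Fn A (i+1) (i+1) = 1 := by
                rw [hFgg (i+1) (le_refl _) (i+1) (by omega),
                  gg_formB (by omega) haQ harnk, if_pos (by omega)]
                norm_num
              intro j hj1 hj2
              refine tail_zero h01' (show i+3 ≤ n by omega) (by omega) j hj1 hj2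
        obtain ⟨m', hm'lt, hshape⟩ := extract htail
        have ham' : a < m' := by
          by_contra hle
          push_neg at hle
          have h1 := hhead m' (by omega)
          have h2 := hshape m' (by omega)
          rw [if_neg (by omega)] at h2
          omega
        have hm'Q : m' ∉ Q := fun hc => absurd (hamax m' hc) (by omega)
        have hlt' : ∀ q ∈ Q, q < m' := fun q hq => by have := hamax q hq; omega
        refine build m' hm'lt hshape r (insert m' Q) hr ?_ ?_ ?_ ?_
        · intro x hx
          rcases Finset.mem_insert.mp hx with rfl | hxQ
          · simp only [Finset.mem_Icc]; omega
          · have := hQbd x hxQ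
            simp only [Finset.mem_Icc]
            omega
        · rw [Finset.card_insert_of_notMem hm'Q]; omega
        · intro k hk j hj
          exact_mod_cast congrArg (Nat.cast (R := ℤ)) (gg_insert_stable hlt' (by omega) j)
        · intro j hj
          have hrnkm' : rnk (insert m' Q) m' + r + 1 = i+2 := by
            have hrm : rnk (insert m' Q) m' = Q.card := by
              unfold rnk
              rw [Finset.filter_insert, if_neg (lt_irrefl m'),
                Finset.filter_true_of_mem hlt']
            omega
          rw [gg_formB (by omega) (Finset.mem_insert_self m' Q) hrnkm']
          split_ifs <;> push_cast <;> omega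
  -- conclude
  obtain ⟨r, Q, hr, hQsub, hQcard, hFgg⟩ := main (n-2) (le_refl _)
  have hQsub' : Q ⊆ Finset.Icc 1 (n-1) := by
    rwa [show n-2+1 = n-1 by omega] at hQsub
  have hQc : Q.card + 2 ≤ n := by omega
  have hrQ : n - 1 - Q.card = r := by omega
  refine ⟨Q, hQsub', hQc, ?_⟩
  funext i j
  have h2 : Fn A i.1 j.1 = (gg n r Q i.1 j.1 : ℤ) := by
    apply hFgg i.1 (by omega) j.1 j.2
  have h1 : Fn A (i.1+1) j.1 = (gg n r Q (i.1+1) j.1 : ℤ) := by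
    by_cases hin : i.1+1 ≤ n-1
    · exact hFgg (i.1+1) (by omega) j.1 j.2
    · have hieq : i.1+1 = n := by omega
      rw [hieq, hFtop j.1 j.2, gg_top (by omega) (by omega : j.1 ≤ n)]
      rfl
  have h3 : Fn A (i.1+1) j.1 = Fn A i.1 j.1 + A i j := by
    rw [Fn_succ, Ap_eq A i j]
  show (gg n (n-1-Q.card) Q (i.1+1) j.1 : ℤ) - (gg n (n-1-Q.card) Q i.1 j.1 : ℤ) = A i j
  rw [hrQ]
  omega

end Surj

end Magog12

/-- The number of `n × n` magog matrices whose `(1,2)` entry equals `1` is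
`2 ^ (n - 1) - 1`. -/
theorem card_magog_12 (n : ℕ) (hn : 0 < n) :
    Nat.card {A : Fin n → Fin n → ℤ //
        IsMagog n A ∧ ∃ h : 1 < n, A ⟨0, hn⟩ ⟨1, h⟩ = 1} =
      2 ^ (n - 1) - 1 := by
  by_cases hn2 : 2 ≤ n
  · classical
    have hbij : Function.Bijective
        (fun p : {S : Finset ℕ // S ⊆ Finset.Icc 1 (n-1) ∧ S.card + 2 ≤ n} =>
          (⟨Magog12.bld n p.1, ⟨Magog12.bld_isMagog p.2.1 p.2.2 hn2,
            by omega, Magog12.bld_entry01 p.2.2 (by omega)⟩⟩ :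
            {A : Fin n → Fin n → ℤ //
              IsMagog n A ∧ ∃ h : 1 < n, A ⟨0, hn⟩ ⟨1, h⟩ = 1})) := by
      constructor
      · rintro ⟨S1, h1a, h1b⟩ ⟨S2, h2a, h2b⟩ h
        have heq := congrArg Subtype.val h
        exact Subtype.ext (Magog12.bld_inj h1a h1b h2a h2b heq)
      · rintro ⟨A, hmg, h1n, h01⟩
        obtain ⟨S, hsub, hc, heq⟩ := Magog12.exists_bld A hn2 hmg h01
        exact ⟨⟨S, hsub, hc⟩, Subtype.ext heq⟩
    rw [← Nat.card_congr (Equiv.ofBijective _ hbij)]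
    have hPeq : Nat.card {S : Finset ℕ // S ⊆ Finset.Icc 1 (n-1) ∧ S.card + 2 ≤ n}
        = ((Finset.Icc 1 (n-1)).powerset.erase (Finset.Icc 1 (n-1))).card := by
      rw [Nat.card_congr (Equiv.subtypeEquivRight
        (q := fun S : Finset ℕ =>
          S ∈ (Finset.Icc 1 (n-1)).powerset.erase (Finset.Icc 1 (n-1))) ?_)]
      · exact Nat.card_eq_finsetCard _
      · intro S
        simp only [Finset.mem_erase, Finset.mem_powerset]
        constructor
        · rintro ⟨hsub, hc⟩
          refine ⟨fun he => ?_, hsub⟩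
          rw [he, Nat.card_Icc] at hc
          omega
        · rintro ⟨hne, hsub⟩
          refine ⟨hsub, ?_⟩
          have hlt : S.card < (Finset.Icc 1 (n-1)).card :=
            Finset.card_lt_card (Finset.ssubset_iff_subset_ne.mpr ⟨hsub, hne⟩)
          rw [Nat.card_Icc] at hlt
          omega
    rw [hPeq, Finset.card_erase_of_mem (Finset.mem_powerset_self _),
      Finset.card_powerset, Nat.card_Icc]
    rw [show n - 1 + 1 - 1 = n - 1 by omega]
  · have hn1 : n = 1 := by omega
    subst hn1
    have hempty : IsEmpty {A : Fin 1 → Fin 1 → ℤ //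
        IsMagog 1 A ∧ ∃ h : 1 < 1, A ⟨0, hn⟩ ⟨1, h⟩ = 1} :=
      ⟨fun ⟨_, _, h, _⟩ => absurd h (by omega)⟩
    rw [Nat.card_of_isEmpty]
    norm_num
end
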